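/- arXiv:2104.12740 — 5 statements merged into one kernel-verified Lean document; each statement's English description precedes it below -/
import Mathlib

section
/- Let S be a nonnegative discrete-time martingale and for k ∈ ℕ let τ̃_k := inf{j > k : S_j < S_{j-1}}. Then for each k, E[S_{τ̃_k}] = E[S_k] + lim_{n→∞} E[(S_∞ − S_n) 1_{{S_k ≤ S_{k+1} ≤ ⋯ ≤ S_n}}], where S_∞ is the a.s. limit of S and the limit on the right exists. -/
open MeasureTheory Filter Set

noncomputable section

variable {Ω : Type*}

/-- Evaluation of a discrete-time process at a possibly infinite random time `τ`,
using the limit variable `Sinf` on the event `{τ = ∞}`. -/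
def evalAt (S : ℕ → Ω → ℝ) (Sinf : Ω → ℝ) (τ : Ω → ℕ∞) (ω : Ω) : ℝ :=
  if τ ω = ⊤ then Sinf ω else S (τ ω).toNat ω

/-- The `k`-th drawdown time of `S`: `τ₀ = 0` and
`τ_k = inf {j > τ_{k-1} : S_j < S_{j-1}}` (with value `∞` if no such `j` exists). -/
def drawdown (S : ℕ → Ω → ℝ) : ℕ → Ω → ℕ∞
  | 0 => fun _ => 0
  | (k + 1) => fun ω =>
      sInf {j : ℕ∞ | drawdown S k ω < j ∧ ∃ n : ℕ, j = (n : ℕ∞) ∧ S n ω < S (n - 1) ω}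

/-- The first drawdown of `S` after the deterministic time `k`:
`τ̃_k = inf {j > k : S_j < S_{j-1}}`. -/
def drawdownAfter (S : ℕ → Ω → ℝ) (k : ℕ) (ω : Ω) : ℕ∞ :=
  sInf {j : ℕ∞ | (k : ℕ∞) < j ∧ ∃ n : ℕ, j = (n : ℕ∞) ∧ S n ω < S (n - 1) ω}

/-- The process stopped at a possibly infinite random time. -/
def stoppedAt (S : ℕ → Ω → ℝ) (τ : Ω → ℕ∞) (n : ℕ) (ω : Ω) : ℝ :=
  S ((min (n : ℕ∞) (τ ω)).toNat) ω

/-- The event `{S_k ≤ S_{k+1} ≤ ⋯ ≤ S_n}`. -/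
def monoEvent (S : ℕ → Ω → ℝ) (k n : ℕ) : Set Ω :=
  {ω | ∀ j, k ≤ j → j < n → S j ω ≤ S (j + 1) ω}

/-- `S` is a bubble under `P`: it loses mass at its `k`-th drawdown time for some `k ≥ 1`. -/
def IsBubble [MeasurableSpace Ω] (S : ℕ → Ω → ℝ) (Sinf : Ω → ℝ) (P : Measure Ω) : Prop :=
  ∃ k : ℕ, ∫ ω, evalAt S Sinf (drawdown S (k + 1)) ω ∂P < ∫ ω, S 0 ω ∂P

end

noncomputable section AuxLemmas

variable {Ω : Type*}

lemma lt_drawdownAfter_iff' {S : ℕ → Ω → ℝ} {k n : ℕ} {ω : Ω} :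
    (n : ℕ∞) < drawdownAfter S k ω ↔ ω ∈ monoEvent S k n := by
  constructor
  · intro h j hkj hjn
    by_contra hlt
    push_neg at hlt
    have hmem : ((j + 1 : ℕ) : ℕ∞) ∈
        {j : ℕ∞ | (k : ℕ∞) < j ∧ ∃ m : ℕ, j = (m : ℕ∞) ∧ S m ω < S (m - 1) ω} :=
      ⟨by exact_mod_cast Nat.lt_succ_of_le hkj, j + 1, rfl, by simpa using hlt⟩
    have h2 : drawdownAfter S k ω ≤ ((j + 1 : ℕ) : ℕ∞) := sInf_le hmem
    have h3 : (n : ℕ∞) < ((j + 1 : ℕ) : ℕ∞) := lt_of_lt_of_le h h2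
    have : n < j + 1 := by exact_mod_cast h3
    omega
  · intro hω
    have hge : ∀ b ∈ {j : ℕ∞ | (k : ℕ∞) < j ∧ ∃ m : ℕ, j = (m : ℕ∞) ∧ S m ω < S (m - 1) ω},
        ((n + 1 : ℕ) : ℕ∞) ≤ b := by
      rintro b ⟨hkb, m, rfl, hm⟩
      have hkm : k < m := by exact_mod_cast hkb
      have hnm : n < m := by
        by_contra hmn
        push_neg at hmn
        have h1 : k ≤ m - 1 := by omega
        have h2 : m - 1 < n := by omega
        have h3 := hω (m - 1) h1 h2
        rw [Nat.sub_add_cancel (by omega)] at h3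
        exact absurd hm (not_lt.2 h3)
      exact_mod_cast hnm
    have h4 := le_sInf hge
    refine lt_of_lt_of_le ?_ h4
    exact_mod_cast Nat.lt_succ_self n

lemma stoppedAt_zero' (S : ℕ → Ω → ℝ) (τ : Ω → ℕ∞) (ω : Ω) :
    stoppedAt S τ 0 ω = S 0 ω := by
  simp [stoppedAt]

lemma coe_succ_le_of_lt {n : ℕ} {x : ℕ∞} (h : (n : ℕ∞) < x) : ((n + 1 : ℕ) : ℕ∞) ≤ x := by
  rw [Nat.cast_add, Nat.cast_one]
  exact (ENat.add_one_le_iff (by simp)).2 h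

lemma stoppedAt_succ' (S : ℕ → Ω → ℝ) {k : ℕ} (n : ℕ) (ω : Ω) :
    stoppedAt S (drawdownAfter S k) (n + 1) ω =
      stoppedAt S (drawdownAfter S k) n ω +
        (monoEvent S k n).indicator (fun ω => S (n + 1) ω - S n ω) ω := by
  by_cases h : (n : ℕ∞) < drawdownAfter S k ω
  · have hmem : ω ∈ monoEvent S k n := lt_drawdownAfter_iff'.1 h
    have h1 : min (n : ℕ∞) (drawdownAfter S k ω) = (n : ℕ∞) := min_eq_left h.le
    have h2 : min ((n + 1 : ℕ) : ℕ∞) (drawdownAfter S k ω) = ((n + 1 : ℕ) : ℕ∞) :=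
      min_eq_left (coe_succ_le_of_lt h)
    simp only [stoppedAt, h1, h2, ENat.toNat_coe, Set.indicator_of_mem hmem]
    ring
  · have hnmem : ω ∉ monoEvent S k n := fun hm => h (lt_drawdownAfter_iff'.2 hm)
    push_neg at h
    have h1 : min (n : ℕ∞) (drawdownAfter S k ω) = drawdownAfter S k ω := min_eq_right h
    have h2 : min ((n : ℕ∞) + 1) (drawdownAfter S k ω) = drawdownAfter S k ω :=
      min_eq_right (h.trans le_self_add)
    simp [stoppedAt, h1, h2, Set.indicator_of_notMem hnmem]

lemma evalAt_decomp' (S : ℕ → Ω → ℝ) (Sinf : Ω → ℝ) {k : ℕ} (n : ℕ) (ω : Ω) :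
    evalAt S Sinf (drawdownAfter S k) ω =
      stoppedAt S (drawdownAfter S k) n ω +
        (monoEvent S k n).indicator
          (fun ω => evalAt S Sinf (drawdownAfter S k) ω - S n ω) ω := by
  by_cases h : (n : ℕ∞) < drawdownAfter S k ω
  · have hmem : ω ∈ monoEvent S k n := lt_drawdownAfter_iff'.1 h
    have h1 : min (n : ℕ∞) (drawdownAfter S k ω) = (n : ℕ∞) := min_eq_left h.le
    simp only [stoppedAt, h1, ENat.toNat_coe, Set.indicator_of_mem hmem]
    ring
  · have hnmem : ω ∉ monoEvent S k n := fun hm => h (lt_drawdownAfter_iff'.2 hm)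
    push_neg at h
    have htop : drawdownAfter S k ω ≠ ⊤ := by
      intro htop
      rw [htop] at h
      exact absurd h (by simp)
    have h1 : min (n : ℕ∞) (drawdownAfter S k ω) = drawdownAfter S k ω := min_eq_right h
    simp [stoppedAt, evalAt, h1, htop, Set.indicator_of_notMem hnmem]

lemma stoppedAt_tendsto' (S : ℕ → Ω → ℝ) (Sinf : Ω → ℝ) (τ : Ω → ℕ∞) {ω : Ω}
    (hconv : Tendsto (fun n => S n ω) atTop (nhds (Sinf ω))) :
    Tendsto (fun n => stoppedAt S τ n ω) atTop (nhds (evalAt S Sinf τ ω)) := by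
  by_cases h : τ ω = ⊤
  · have : ∀ n : ℕ, stoppedAt S τ n ω = S n ω := by
      intro n
      simp [stoppedAt, h]
    simpa [evalAt, h, this] using hconv
  · set m := (τ ω).toNat with hm
    have hcoe : ((m : ℕ∞)) = τ ω := ENat.coe_toNat h
    have hev : evalAt S Sinf τ ω = S m ω := by simp [evalAt, h, hm]
    rw [hev]
    apply Tendsto.congr' (f₁ := fun _ => S m ω)
    · filter_upwards [eventually_ge_atTop m] with n hn
      have hmin : min (n : ℕ∞) (τ ω) = τ ω := min_eq_right (by rw [← hcoe]; exact_mod_cast hn)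
      simp only [stoppedAt]
      rw [hmin, ← hcoe, ENat.toNat_coe]
    · exact tendsto_const_nhds

lemma integrable_limit' {m0 : MeasurableSpace Ω} {P : Measure Ω} {f : ℕ → Ω → ℝ} {g : Ω → ℝ}
    {c : ℝ} (hf : ∀ n, Integrable (f n) P) (h0 : ∀ n ω, 0 ≤ f n ω)
    (hc : ∀ n, ∫ ω, f n ω ∂P = c)
    (hconv : ∀ᵐ ω ∂P, Tendsto (fun n => f n ω) atTop (nhds (g ω))) : Integrable g P := by
  have hg : AEStronglyMeasurable g P :=
    aestronglyMeasurable_of_tendsto_ae atTop (fun n => (hf n).1) hconv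
  refine ⟨hg, ?_⟩
  have h1 : ∀ n, ∫⁻ ω, ENNReal.ofReal (f n ω) ∂P = ENNReal.ofReal c := by
    intro n
    rw [← ofReal_integral_eq_lintegral_ofReal (hf n) (Eventually.of_forall (h0 n)), hc n]
  have hlim : ∫⁻ ω, ENNReal.ofReal (g ω) ∂P ≤ ENNReal.ofReal c := by
    calc ∫⁻ ω, ENNReal.ofReal (g ω) ∂P
        = ∫⁻ ω, liminf (fun n => ENNReal.ofReal (f n ω)) atTop ∂P := by
          refine lintegral_congr_ae (hconv.mono fun ω h => ?_)
          exact ((ENNReal.continuous_ofReal.tendsto _).comp h).liminf_eq.symm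
      _ ≤ liminf (fun n => ∫⁻ ω, ENNReal.ofReal (f n ω) ∂P) atTop :=
          lintegral_liminf_le' fun n =>
            ENNReal.measurable_ofReal.comp_aemeasurable (hf n).1.aemeasurable
      _ = ENNReal.ofReal c := by simp [h1]
  have hg0 : ∀ᵐ ω ∂P, 0 ≤ g ω :=
    hconv.mono fun ω h => ge_of_tendsto' h (fun n => h0 n ω)
  have heq : ∀ᵐ ω ∂P, ‖g ω‖ₑ = ENNReal.ofReal (g ω) :=
    hg0.mono fun ω h => by
      rw [← Real.enorm_eq_ofReal h]
  rw [HasFiniteIntegral, lintegral_congr_ae heq]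
  exact lt_of_le_of_lt hlim ENNReal.ofReal_lt_top

end AuxLemmas

/-- For a nonnegative martingale `S` and `τ̃_k = inf{j > k : S_j < S_{j-1}}`,
the limit `L = lim_n E[(S_∞ - S_n) 1_{{S_k ≤ ⋯ ≤ S_n}}]` exists and
`E[S_{τ̃_k}] = E[S_k] + L`. -/
theorem expectation_at_drawdown_after
    {Ω : Type*} {m0 : MeasurableSpace Ω} {P : Measure Ω} [IsProbabilityMeasure P]
    {ℱ : Filtration ℕ m0} {S : ℕ → Ω → ℝ} (hmart : Martingale S ℱ P)
    (hnn : ∀ n ω, 0 ≤ S n ω) {Sinf : Ω → ℝ}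
    (hconv : ∀ᵐ ω ∂P, Tendsto (fun n => S n ω) atTop (nhds (Sinf ω))) (k : ℕ) :
    ∃ L : ℝ,
      Tendsto
        (fun n => ∫ ω, (Sinf ω - S n ω) * (monoEvent S k n).indicator (fun _ => (1 : ℝ)) ω ∂P)
        atTop (nhds L) ∧
      ∫ ω, evalAt S Sinf (drawdownAfter S k) ω ∂P = (∫ ω, S k ω ∂P) + L := by
  classical
  set τ := drawdownAfter S k with hτ
  set E := evalAt S Sinf τ with hE
  have hint : ∀ n, Integrable (S n) P := fun n => hmart.integrable n
  -- the mono events are measurable w.r.t. the filtration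
  have hA : ∀ n, MeasurableSet[ℱ n] (monoEvent S k n) := by
    intro n
    have hrw : monoEvent S k n = ⋂ j, {ω | k ≤ j → j < n → S j ω ≤ S (j + 1) ω} := by
      ext ω; simp [monoEvent, Set.mem_iInter]
    rw [hrw]
    refine MeasurableSet.iInter fun j => ?_
    by_cases hj : k ≤ j ∧ j < n
    · have h1 : StronglyMeasurable[ℱ n] (S j) := (hmart.stronglyAdapted j).mono (ℱ.mono (by omega))
      have h2 : StronglyMeasurable[ℱ n] (S (j + 1)) :=
        (hmart.stronglyAdapted (j + 1)).mono (ℱ.mono (by omega))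
      have : {ω | k ≤ j → j < n → S j ω ≤ S (j + 1) ω} = {ω | S j ω ≤ S (j + 1) ω} := by
        ext ω; simp [hj.1, hj.2]
      rw [this]
      exact measurableSet_le h1.measurable h2.measurable
    · have : {ω | k ≤ j → j < n → S j ω ≤ S (j + 1) ω} = Set.univ := by
        ext ω; simp only [Set.mem_setOf_eq, Set.mem_univ, iff_true]
        intro h1 h2; exact absurd ⟨h1, h2⟩ hj
      rw [this]; exact MeasurableSet.univ
  have hAm : ∀ n, MeasurableSet (monoEvent S k n) := fun n => ℱ.le n _ (hA n)
  -- expectation is constant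
  have hSconst : ∀ n, ∫ ω, S n ω ∂P = ∫ ω, S 0 ω ∂P := by
    intro n
    have := hmart.setIntegral_eq (Nat.zero_le n) (MeasurableSet.univ (α := Ω))
    simpa using this.symm
  -- optional stopping for the stopped process
  have key : ∀ n, Integrable (stoppedAt S τ n) P ∧
      ∫ ω, stoppedAt S τ n ω ∂P = ∫ ω, S 0 ω ∂P := by
    intro n
    induction n with
    | zero =>
      have h0 : stoppedAt S τ 0 = S 0 := funext fun ω => stoppedAt_zero' S τ ω
      rw [h0]; exact ⟨hint 0, rfl⟩
    | succ n ih =>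
      have hfun : stoppedAt S τ (n + 1) = fun ω => stoppedAt S τ n ω +
          (monoEvent S k n).indicator (fun ω => S (n + 1) ω - S n ω) ω :=
        funext fun ω => stoppedAt_succ' S n ω
      have hind : Integrable ((monoEvent S k n).indicator
          fun ω => S (n + 1) ω - S n ω) P := ((hint (n + 1)).sub (hint n)).indicator (hAm n)
      have hint0 : ∫ ω, (monoEvent S k n).indicator (fun ω => S (n + 1) ω - S n ω) ω ∂P = 0 := by
        rw [integral_indicator (hAm n)]
        rw [integral_sub ((hint (n + 1)).integrableOn) ((hint n).integrableOn)]
        rw [← hmart.setIntegral_eq (Nat.le_succ n) (hA n)]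
        ring
      constructor
      · rw [hfun]; exact ih.1.add hind
      · rw [hfun, integral_add ih.1 hind, hint0, add_zero, ih.2]
  -- a.e. convergence of the stopped process to the evaluated value
  have hGconv : ∀ᵐ ω ∂P, Tendsto (fun n => stoppedAt S τ n ω) atTop (nhds (E ω)) :=
    hconv.mono fun ω h => stoppedAt_tendsto' S Sinf τ h
  -- integrability of Sinf and of E
  have hSinf_int : Integrable Sinf P :=
    integrable_limit' hint hnn hSconst hconv
  have hEint : Integrable E P :=
    integrable_limit' (fun n => (key n).1) (fun n ω => hnn _ ω) (fun n => (key n).2) hGconv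
  set L : ℝ := (∫ ω, E ω ∂P) - ∫ ω, S k ω ∂P with hL
  have hCn : ∀ n, ∫ ω, (monoEvent S k n).indicator (fun ω => E ω - S n ω) ω ∂P = L := by
    intro n
    have hfun : E = fun ω => stoppedAt S τ n ω +
        (monoEvent S k n).indicator (fun ω => E ω - S n ω) ω :=
      funext fun ω => evalAt_decomp' S Sinf n ω
    have hind : Integrable ((monoEvent S k n).indicator fun ω => E ω - S n ω) P :=
      (hEint.sub (hint n)).indicator (hAm n)
    have h1 : ∫ ω, E ω ∂P = (∫ ω, stoppedAt S τ n ω ∂P) +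
        ∫ ω, (monoEvent S k n).indicator (fun ω => E ω - S n ω) ω ∂P := by
      conv_lhs => rw [hfun]
      exact integral_add (key n).1 hind
    rw [(key n).2] at h1
    rw [hL, hSconst k]
    linarith
  -- the remainder integrals tend to zero
  have hD : Tendsto (fun n => ∫ ω, (monoEvent S k n).indicator
      (fun ω => Sinf ω - E ω) ω ∂P) atTop (nhds 0) := by
    have h0 : (0 : ℝ) = ∫ (_ : Ω), (0 : ℝ) ∂P := by simp
    rw [h0]
    refine tendsto_integral_of_dominated_convergence
      (fun ω => |Sinf ω| + |E ω|) (fun n => ?_) ?_ (fun n => ?_) ?_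
    · exact (hSinf_int.sub hEint).1.indicator (hAm n)
    · exact hSinf_int.abs.add hEint.abs
    · refine Eventually.of_forall fun ω => ?_
      calc ‖(monoEvent S k n).indicator (fun ω => Sinf ω - E ω) ω‖
          ≤ ‖Sinf ω - E ω‖ := norm_indicator_le_norm_self _ ω
        _ ≤ |Sinf ω| + |E ω| := abs_sub _ _
    · refine Eventually.of_forall fun ω => ?_
      by_cases h : τ ω = ⊤
      · have : ∀ n, (monoEvent S k n).indicator (fun ω => Sinf ω - E ω) ω = 0 := by
          intro n
          have hzero : Sinf ω - E ω = 0 := by simp [hE, evalAt, h]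
          by_cases hm : ω ∈ monoEvent S k n
          · rw [Set.indicator_of_mem hm, hzero]
          · rw [Set.indicator_of_notMem hm]
        simp [this] -- constant zero sequence
      · refine Tendsto.congr' ?_ (tendsto_const_nhds (x := (0 : ℝ)))
        filter_upwards [eventually_ge_atTop (τ ω).toNat] with n hn
        have hle : τ ω ≤ (n : ℕ∞) := by
          rw [← ENat.coe_toNat h]; exact_mod_cast hn
        have hnm : ω ∉ monoEvent S k n := fun hm =>
          absurd hle (not_le.2 (lt_drawdownAfter_iff'.2 hm))
        rw [Set.indicator_of_notMem hnm]
  refine ⟨L, ?_, by rw [hL]; ring⟩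
  have hphi : ∀ n, (fun ω => (Sinf ω - S n ω) *
      (monoEvent S k n).indicator (fun _ => (1 : ℝ)) ω) =
      fun ω => (monoEvent S k n).indicator (fun ω => E ω - S n ω) ω +
        (monoEvent S k n).indicator (fun ω => Sinf ω - E ω) ω := by
    intro n
    funext ω
    by_cases hm : ω ∈ monoEvent S k n
    · simp only [Set.indicator_of_mem hm]; ring
    · simp only [Set.indicator_of_notMem hm]; ring
  have hsum : ∀ n, ∫ ω, (Sinf ω - S n ω) *
      (monoEvent S k n).indicator (fun _ => (1 : ℝ)) ω ∂P =
      L + ∫ ω, (monoEvent S k n).indicator (fun ω => Sinf ω - E ω) ω ∂P := by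
    intro n
    have hi1 : Integrable (fun ω => (monoEvent S k n).indicator (fun ω => E ω - S n ω) ω) P :=
      (hEint.sub (hint n)).indicator (hAm n)
    have hi2 : Integrable (fun ω => (monoEvent S k n).indicator (fun ω => Sinf ω - E ω) ω) P :=
      (hSinf_int.sub hEint).indicator (hAm n)
    rw [hphi n, integral_add hi1 hi2, hCn n]
  have := (tendsto_const_nhds (x := L) (f := atTop (α := ℕ))).add hD
  rw [add_zero] at this
  refine Tendsto.congr (fun n => (hsum n).symm) this
end

section
/- Let S be a nonnegative discrete-time martingale and x > 0. Suppose that a.s. Σ_{k=0}^∞ P(S_k < x or S_k > S_{k+1} | F_k) = ∞. Then for each k ∈ ℕ, lim_{n→∞} E[S_∞ · 1_{{x ≤ S_k ≤ S_{k+1} ≤ ⋯ ≤ S_n}}] = 0; in other words, the event {x ≤ S_k ≤ S_{k+1} ≤ ⋯} (all inequalities for all indices ≥ k) is a null set. -/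
open MeasureTheory Filter Set

open scoped ENNReal NNReal

/-- If a.s. `Σ_k P(S_k < x or S_k > S_{k+1} | ℱ_k) = ∞`, then for each `k`
the event `{x ≤ S_k ≤ S_{k+1} ≤ ⋯}` is null and
`lim_n E[S_∞ 1_{{x ≤ S_k ≤ ⋯ ≤ S_n}}] = 0`. -/
theorem conditional_borel_cantelli_monotone_event
    {Ω : Type*} {m0 : MeasurableSpace Ω} {P : Measure Ω} [IsProbabilityMeasure P]
    {ℱ : Filtration ℕ m0} {S : ℕ → Ω → ℝ} (hmart : Martingale S ℱ P)
    (hnn : ∀ n ω, 0 ≤ S n ω) {Sinf : Ω → ℝ}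
    (hconv : ∀ᵐ ω ∂P, Tendsto (fun n => S n ω) atTop (nhds (Sinf ω)))
    {x : ℝ} (hx : 0 < x)
    (hdiv : ∀ᵐ ω ∂P,
      Tendsto
        (fun n => ∑ k ∈ Finset.range n,
          (P[({ω' | S k ω' < x} ∪ {ω' | S (k + 1) ω' < S k ω'}).indicator
              (fun _ => (1 : ℝ)) | ℱ k]) ω)
        atTop atTop) :
    ∀ k : ℕ,
      P ({ω | x ≤ S k ω} ∩ ⋂ n, monoEvent S k n) = 0 ∧
      Tendsto
        (fun n => ∫ ω, Sinf ω *
          ({ω' | x ≤ S k ω'} ∩ monoEvent S k n).indicator (fun _ => (1 : ℝ)) ω ∂P)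
        atTop (nhds 0) := by
  classical
  -- measurability of S
  have hmeas : ∀ n, Measurable (S n) :=
    fun n => ((hmart.stronglyAdapted n).measurable).mono (ℱ.le n) le_rfl
  -- the "bad" sets
  set A : ℕ → Set Ω := fun k => {ω' | S k ω' < x} ∪ {ω' | S (k + 1) ω' < S k ω'} with hA
  set s : ℕ → Set Ω := fun n => Nat.casesOn n ∅ A with hs_def
  have hs : ∀ n, MeasurableSet[ℱ n] (s n) := by
    intro n
    cases n with
    | zero => exact @MeasurableSet.empty _ (ℱ 0)
    | succ k =>
        refine MeasurableSet.union ?_ ?_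
        · exact ℱ.mono k.le_succ _ <|
            (hmart.stronglyAdapted k).measurable measurableSet_Iio
        · exact measurableSet_lt ((hmart.stronglyAdapted (k + 1)).measurable)
            (((hmart.stronglyAdapted k).measurable).mono (ℱ.mono k.le_succ) le_rfl)
  -- Lévy's conditional Borel–Cantelli
  have hBC := tendsto_sum_indicator_atTop_iff' (μ := P) hs
  have hae : ∀ᵐ ω ∂P,
      Tendsto (fun n => ∑ j ∈ Finset.range n, (A j).indicator (1 : Ω → ℝ) ω)
        atTop atTop := by
    filter_upwards [hBC, hdiv] with ω hω hdω
    exact hω.mpr hdω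
  intro k
  -- a.e., ω is not in the monotone event
  have haeE : ∀ᵐ ω ∂P, ω ∉ ({ω | x ≤ S k ω} ∩ ⋂ n, monoEvent S k n) := by
    filter_upwards [hae] with ω hω hmem
    obtain ⟨hxk, hmono⟩ := hmem
    have hstep : ∀ j, k ≤ j → S j ω ≤ S (j + 1) ω := by
      intro j hkj
      have := mem_iInter.1 hmono (j + 1)
      exact this j hkj j.lt_succ_self
    have hge : ∀ j, k ≤ j → x ≤ S j ω := by
      intro j hkj
      induction j with
      | zero => simpa [Nat.le_zero.mp hkj] using hxk
      | succ m ih =>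
          rcases Nat.lt_or_ge k (m + 1) with h | h
          · exact le_trans (ih (Nat.lt_succ_iff.mp h)) (hstep m (Nat.lt_succ_iff.mp h))
          · have : k = m + 1 := le_antisymm hkj h
            simpa [← this] using hxk
    have hzero : ∀ j, k ≤ j → (A j).indicator (1 : Ω → ℝ) ω = 0 := by
      intro j hkj
      refine Set.indicator_of_notMem ?_ _
      rintro (h | h)
      · exact absurd (hge j hkj) (not_le.mpr h)
      · exact absurd (hstep j hkj) (not_le.mpr h)
    have hconst : ∀ n, k ≤ n →
        (∑ j ∈ Finset.range n, (A j).indicator (1 : Ω → ℝ) ω)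
          = ∑ j ∈ Finset.range k, (A j).indicator (1 : Ω → ℝ) ω := by
      intro n hn
      refine (Finset.sum_subset (Finset.range_subset_range.2 hn) ?_).symm
      intro j hj hjk
      exact hzero j (le_of_not_gt fun h => hjk (Finset.mem_range.2 h))
    set C := ∑ j ∈ Finset.range k, (A j).indicator (1 : Ω → ℝ) ω with hC
    have hev : ∀ᶠ n in atTop,
        (∑ j ∈ Finset.range n, (A j).indicator (1 : Ω → ℝ) ω) = C :=
      eventually_atTop.2 ⟨k, hconst⟩
    have hev2 := (hω.eventually_ge_atTop (C + 1)).and hev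
    obtain ⟨n, hn1, hn2⟩ := hev2.exists
    rw [hn2] at hn1
    linarith
  have hnull : P ({ω | x ≤ S k ω} ∩ ⋂ n, monoEvent S k n) = 0 := by
    have h := haeE
    rw [ae_iff] at h
    exact measure_mono_null (fun ω hω => not_not.2 hω) h
  refine ⟨hnull, ?_⟩
  -- Integrability of Sinf
  have hSmeas : ∀ n, AEStronglyMeasurable (S n) P :=
    fun n => (hmeas n).aestronglyMeasurable
  have hSinf_meas : AEStronglyMeasurable Sinf P :=
    aestronglyMeasurable_of_tendsto_ae atTop hSmeas hconv
  have hS0 : ∀ n, ∫ ω, S n ω ∂P = ∫ ω, S 0 ω ∂P := by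
    intro n
    have h1 : ∫ ω, (P[S n|ℱ 0]) ω ∂P = ∫ ω, S n ω ∂P := integral_condExp (ℱ.le 0)
    have h2 : ∫ ω, (P[S n|ℱ 0]) ω ∂P = ∫ ω, S 0 ω ∂P :=
      integral_congr_ae (hmart.condExp_ae_eq (Nat.zero_le n))
    rw [← h1, h2]
  have hlin : ∀ n, ∫⁻ ω, (‖S n ω‖₊ : ℝ≥0∞) ∂P = ENNReal.ofReal (∫ ω, S 0 ω ∂P) := by
    intro n
    calc ∫⁻ ω, (‖S n ω‖₊ : ℝ≥0∞) ∂P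
        = ∫⁻ ω, ENNReal.ofReal (S n ω) ∂P :=
          lintegral_congr fun ω => Real.enorm_eq_ofReal (hnn n ω)
      _ = ENNReal.ofReal (∫ ω, S n ω ∂P) :=
          (ofReal_integral_eq_lintegral_ofReal (hmart.integrable n)
            (Eventually.of_forall (hnn n))).symm
      _ = ENNReal.ofReal (∫ ω, S 0 ω ∂P) := by rw [hS0 n]
  have hint : Integrable Sinf P := by
    refine ⟨hSinf_meas, ?_⟩
    have hlim_ae : (fun ω => (‖Sinf ω‖₊ : ℝ≥0∞)) =ᵐ[P]
        fun ω => liminf (fun n => (‖S n ω‖₊ : ℝ≥0∞)) atTop := by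
      filter_upwards [hconv] with ω hω
      have : Tendsto (fun n => (‖S n ω‖₊ : ℝ≥0∞)) atTop (nhds (‖Sinf ω‖₊ : ℝ≥0∞)) := by
        exact (ENNReal.continuous_coe.tendsto _).comp
          ((continuous_nnnorm.tendsto _).comp hω)
      exact this.liminf_eq.symm
    have h1 : ∫⁻ ω, (‖Sinf ω‖₊ : ℝ≥0∞) ∂P
        ≤ liminf (fun n => ∫⁻ ω, (‖S n ω‖₊ : ℝ≥0∞) ∂P) atTop := by
      rw [lintegral_congr_ae hlim_ae]
      exact lintegral_liminf_le fun n => (hmeas n).nnnorm.coe_nnreal_ennreal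
    have h2 : liminf (fun n => ∫⁻ ω, (‖S n ω‖₊ : ℝ≥0∞) ∂P) atTop
        = ENNReal.ofReal (∫ ω, S 0 ω ∂P) := by
      simp only [hlin]
      exact liminf_const _
    show ∫⁻ ω, (‖Sinf ω‖₊ : ℝ≥0∞) ∂P < ⊤
    exact lt_of_le_of_lt (h1.trans h2.le) ENNReal.ofReal_lt_top
  -- measurability of the events
  have hmonomeas : ∀ n, MeasurableSet (monoEvent S k n) := by
    intro n
    have : monoEvent S k n =
        ⋂ j : ℕ, ⋂ (_ : k ≤ j), ⋂ (_ : j < n), {ω | S j ω ≤ S (j + 1) ω} := by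
      ext ω; simp [monoEvent]
    rw [this]
    exact MeasurableSet.iInter fun j => MeasurableSet.iInter fun _ =>
      MeasurableSet.iInter fun _ => measurableSet_le (hmeas j) (hmeas (j + 1))
  have hBmeas : ∀ n, MeasurableSet ({ω' | x ≤ S k ω'} ∩ monoEvent S k n) :=
    fun n => (measurableSet_le measurable_const (hmeas k)).inter (hmonomeas n)
  -- antitone
  have hanti : ∀ {n m : ℕ}, n ≤ m → monoEvent S k m ⊆ monoEvent S k n :=
    fun hnm ω hω j hkj hjn => hω j hkj (hjn.trans_le hnm)
  -- dominated convergence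
  have hDCT := tendsto_integral_of_dominated_convergence (F := fun n ω =>
      Sinf ω * ({ω' | x ≤ S k ω'} ∩ monoEvent S k n).indicator (fun _ => (1 : ℝ)) ω)
      (f := fun _ => (0 : ℝ)) (bound := fun ω => |Sinf ω|)
      (fun n => hSinf_meas.mul
        ((stronglyMeasurable_const.indicator (hBmeas n)).aestronglyMeasurable))
      hint.abs
      (fun n => Eventually.of_forall fun ω => by
        rw [Real.norm_eq_abs, abs_mul]
        rcases Set.indicator_eq_zero_or_self
          ({ω' | x ≤ S k ω'} ∩ monoEvent S k n) (fun _ => (1 : ℝ)) ω with h | h <;>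
          simp [h, abs_nonneg])
      ?_
  · simpa using hDCT
  · -- a.e. pointwise convergence to 0
    filter_upwards [haeE] with ω hω
    by_cases hxk : x ≤ S k ω
    · have : ∃ n, ω ∉ monoEvent S k n := by
        by_contra h
        push_neg at h
        exact hω ⟨hxk, mem_iInter.2 h⟩
      obtain ⟨n₀, hn₀⟩ := this
      have hev : ∀ᶠ n in atTop,
          Sinf ω * ({ω' | x ≤ S k ω'} ∩ monoEvent S k n).indicator (fun _ => (1 : ℝ)) ω
            = 0 := by
        refine eventually_atTop.2 ⟨n₀, fun n hn => ?_⟩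
        have : ω ∉ ({ω' | x ≤ S k ω'} ∩ monoEvent S k n) :=
          fun hmem => hn₀ (hanti hn hmem.2)
        rw [Set.indicator_of_notMem this, mul_zero]
      exact tendsto_const_nhds.congr' (hev.mono fun n h => h.symm)
    · have : ∀ n,
          Sinf ω * ({ω' | x ≤ S k ω'} ∩ monoEvent S k n).indicator (fun _ => (1 : ℝ)) ω
            = 0 := by
        intro n
        rw [Set.indicator_of_notMem (fun hmem => hxk hmem.1), mul_zero]
      simpa [this] using tendsto_const_nhds (x := (0 : ℝ)) (f := atTop)
end

section
/- Let (X_k)_{k≥1} be independent nonnegative random variables with E[X_k] = 1, and let S_k := Π_{ℓ=1}^k X_ℓ. If Σ_{k=1}^∞ P(X_k < 1) < ∞, then S is a uniformly integrable martingale. -/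
open MeasureTheory Filter Set
open scoped ENNReal NNReal

section AuxLemmas

open ProbabilityTheory

variable {Ω' : Type*} {m0' : MeasurableSpace Ω'} {P : Measure Ω'}

/-- A finite product of independent integrable random variables is integrable, and its
integral is the product of the integrals. -/
lemma aux_prod_integrable [IsProbabilityMeasure P] (Z : ℕ → Ω' → ℝ)
    (hmeas : ∀ k, Measurable (Z k)) (hint : ∀ k, Integrable (Z k) P)
    (hindep : iIndepFun Z P) (s : Finset ℕ) :
    Integrable (∏ ℓ ∈ s, Z ℓ) P ∧
      ∫ ω, (∏ ℓ ∈ s, Z ℓ) ω ∂P = ∏ ℓ ∈ s, ∫ ω, Z ℓ ω ∂P := by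
  classical
  induction s using Finset.induction_on with
  | empty =>
    refine ⟨?_, by simp⟩
    exact integrable_const 1
  | @insert a s ha ih =>
    have hip : IndepFun (∏ j ∈ s, Z j) (Z a) P :=
      hindep.indepFun_finsetProd_of_notMem hmeas ha
    constructor
    · rw [Finset.prod_insert ha]
      have h1 := hip.integrable_mul ih.1 (hint a)
      rwa [mul_comm] at h1
    · rw [Finset.prod_insert ha, Finset.prod_insert ha]
      calc ∫ ω, (Z a * ∏ j ∈ s, Z j) ω ∂P
          = ∫ ω, ((∏ j ∈ s, Z j) * Z a) ω ∂P := by rw [mul_comm]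
        _ = (∫ ω, (∏ j ∈ s, Z j) ω ∂P) * ∫ ω, Z a ω ∂P :=
            hip.integral_mul_eq_mul_integral ih.1.aestronglyMeasurable (hint a).aestronglyMeasurable
        _ = (∫ ω, Z a ω ∂P) * ∏ ℓ ∈ s, ∫ ω, Z ℓ ω ∂P := by rw [ih.2, mul_comm]

/-- A family dominated a.e. by a fixed `L¹` function is uniformly integrable
(in the measure-theoretic sense). -/
lemma aux_unifIntegrable (f : ℕ → Ω' → ℝ) (g : Ω' → ℝ) (hg : MemLp g 1 P)
    (h : ∀ n, ∀ᵐ ω ∂P, |f n ω| ≤ |g ω|) : UnifIntegrable f 1 P := by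
  intro ε hε
  obtain ⟨δ, hδ, H⟩ :=
    (unifIntegrable_const (μ := P) (ι := ℕ) le_rfl ENNReal.one_ne_top hg) hε
  refine ⟨δ, hδ, fun n s hs hPs => le_trans ?_ (H 0 s hs hPs)⟩
  refine eLpNorm_mono_ae ?_
  filter_upwards [h n] with ω hω
  by_cases hmem : ω ∈ s
  · simpa [Set.indicator_of_mem hmem, Real.norm_eq_abs] using hω
  · simp [Set.indicator_of_notMem hmem]

end AuxLemmas

/-- If `(X_k)` are independent nonnegative with mean 1 and
`Σ_k P(X_k < 1) < ∞`, then the product martingale `S_k = Π_{ℓ<k} X_ℓ` is a uniformly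
integrable martingale (w.r.t. its natural filtration). -/
theorem product_martingale_uniformIntegrable
    {Ω : Type*} {m0 : MeasurableSpace Ω} {P : Measure Ω} [IsProbabilityMeasure P]
    (X : ℕ → Ω → ℝ) (hXmeas : ∀ k, StronglyMeasurable (X k))
    (hXnn : ∀ k ω, 0 ≤ X k ω) (hXint : ∀ k, Integrable (X k) P)
    (hXmean : ∀ k, ∫ ω, X k ω ∂P = 1)
    (hindep : ProbabilityTheory.iIndepFun X P)
    (S : ℕ → Ω → ℝ) (hSdef : ∀ k ω, S k ω = ∏ ℓ ∈ Finset.range k, X ℓ ω)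
    (hSmeas : ∀ k, StronglyMeasurable (S k))
    (hsum : Summable (fun k => (P {ω | X k ω < 1}).toReal)) :
    Martingale S (Filtration.natural S hSmeas) P ∧ UniformIntegrable S 1 P := by
  classical
  set F := Filtration.natural S hSmeas with hF
  have hXm : ∀ k, Measurable (X k) := fun k => (hXmeas k).measurable
  have hSfun : ∀ k, S k = ∏ ℓ ∈ Finset.range k, X ℓ := by
    intro k; funext ω; rw [hSdef k ω]; rw [Finset.prod_apply]
  have hSfun' : ∀ k, S k = fun ω => ∏ ℓ ∈ Finset.range k, X ℓ ω :=
    fun k => funext fun ω => hSdef k ω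
  have hprod := aux_prod_integrable X hXm hXint hindep
  -- Martingale property
  have hmart : Martingale S F P := by
    refine ⟨Filtration.stronglyAdapted_natural hSmeas, fun i j hij => ?_⟩
    set mR : MeasurableSpace ℝ := inferInstance with hmR
    set Gpast : MeasurableSpace Ω := ⨆ ℓ ∈ Set.Iio i, MeasurableSpace.comap (X ℓ) mR with hGp
    set Gfut : MeasurableSpace Ω := ⨆ ℓ ∈ Set.Ici i, MeasurableSpace.comap (X ℓ) mR with hGf
    have hle_comap : ∀ ℓ, MeasurableSpace.comap (X ℓ) mR ≤ m0 := fun ℓ => (hXm ℓ).comap_le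
    have hGpast_le : Gpast ≤ m0 := iSup₂_le fun ℓ _ => hle_comap ℓ
    have hGfut_le : Gfut ≤ m0 := iSup₂_le fun ℓ _ => hle_comap ℓ
    have hXpast : ∀ ℓ, ℓ < i → Measurable[Gpast] (X ℓ) := by
      intro ℓ hℓ
      have h1 : MeasurableSpace.comap (X ℓ) mR ≤ Gpast :=
        le_iSup₂ (f := fun ℓ (_ : ℓ ∈ Set.Iio i) => MeasurableSpace.comap (X ℓ) mR) ℓ hℓ
      exact Measurable.mono (measurable_iff_comap_le.mpr le_rfl) h1 le_rfl
    have hXfut : ∀ ℓ, i ≤ ℓ → Measurable[Gfut] (X ℓ) := by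
      intro ℓ hℓ
      have h1 : MeasurableSpace.comap (X ℓ) mR ≤ Gfut :=
        le_iSup₂ (f := fun ℓ (_ : ℓ ∈ Set.Ici i) => MeasurableSpace.comap (X ℓ) mR) ℓ hℓ
      exact Measurable.mono (measurable_iff_comap_le.mpr le_rfl) h1 le_rfl
    have hFi_le : F i ≤ Gpast := by
      refine iSup₂_le fun j' hj' => Measurable.comap_le ?_
      rw [hSfun' j']
      exact Finset.measurable_prod _ fun ℓ hℓ =>
        hXpast ℓ (lt_of_lt_of_le (Finset.mem_range.mp hℓ) hj')
    set Y : Ω → ℝ := fun ω => ∏ ℓ ∈ Finset.Ico i j, X ℓ ω with hY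
    have hY_eq : Y = ∏ ℓ ∈ Finset.Ico i j, X ℓ := by
      funext ω; simp only [hY]; rw [Finset.prod_apply]
    have hYmeas : Measurable[Gfut] Y :=
      Finset.measurable_prod _ fun ℓ hℓ => hXfut ℓ (Finset.mem_Ico.mp hℓ).1
    have hindepFG : ProbabilityTheory.Indep Gfut (F i) P := by
      have hdisj : Disjoint (Set.Ici i) (Set.Iio i) := (Set.Iio_disjoint_Ici (le_refl i)).symm
      have h := ProbabilityTheory.indep_iSup_of_disjoint (S := Set.Ici i) (T := Set.Iio i)
        hle_comap hindep.iIndep hdisj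
      exact ProbabilityTheory.indep_of_indep_of_le_right h hFi_le
    have hSj_split : S j = S i * Y := by
      funext ω
      rw [Pi.mul_apply, hSdef j ω, hSdef i ω]
      simp only [hY]
      exact (Finset.prod_range_mul_prod_Ico _ hij).symm
    have hYint : Integrable Y P := hY_eq ▸ (hprod (Finset.Ico i j)).1
    have hYintegral : ∫ ω, Y ω ∂P = 1 := by
      rw [hY_eq, (hprod (Finset.Ico i j)).2]
      simp [hXmean]
    have hSi_sm : StronglyMeasurable[F i] (S i) := Filtration.stronglyAdapted_natural hSmeas i
    have hSj_int : Integrable (S j) P := by rw [hSfun j]; exact (hprod _).1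
    have hmulint : Integrable (S i * Y) P := by rw [← hSj_split]; exact hSj_int
    have hcond : P[Y | F i] =ᵐ[P] fun _ => (1 : ℝ) := by
      have h := condExp_indep_eq hGfut_le (F.le i)
        hYmeas.stronglyMeasurable hindepFG
      rw [hYintegral] at h
      exact h
    calc P[S j | F i] = P[S i * Y | F i] := by rw [hSj_split]
      _ =ᵐ[P] S i * P[Y | F i] := condExp_mul_of_stronglyMeasurable_left hSi_sm hmulint hYint
      _ =ᵐ[P] S i * fun _ => (1 : ℝ) := (Filter.EventuallyEq.refl _ _).mul hcond
      _ = S i := by funext ω; simp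
  -- Uniform integrability
  set p : ℕ → ℝ := fun k => (P {ω | X k ω < 1}).toReal with hp
  have hp_nonneg : ∀ k, 0 ≤ p k := fun k => ENNReal.toReal_nonneg
  set M : ℕ → Ω → ℝ := fun k ω => max (X k ω) 1 with hM
  have hM_meas : ∀ k, Measurable (M k) := fun k => (hXm k).max measurable_const
  have hM_one : ∀ k ω, (1 : ℝ) ≤ M k ω := fun k ω => le_max_right _ _
  have hM_nonneg : ∀ k ω, (0 : ℝ) ≤ M k ω := fun k ω => le_trans zero_le_one (hM_one k ω)
  have hM_indep : ProbabilityTheory.iIndepFun M P :=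
    hindep.comp (fun _ x => max x 1) (fun _ => measurable_id.max measurable_const)
  have hM_eq : ∀ k, M k = fun ω => X k ω + max (1 - X k ω) 0 := by
    intro k; funext ω
    simp only [hM]
    rcases le_total (X k ω) 1 with h | h
    · rw [max_eq_right h, max_eq_left (sub_nonneg.mpr h)]; ring
    · rw [max_eq_left h, max_eq_right (by linarith : 1 - X k ω ≤ 0)]; ring
  have hM_int : ∀ k, Integrable (M k) P := by
    intro k; rw [hM_eq k]
    exact (hXint k).add ((integrable_const 1).sub (hXint k)).pos_part
  have hM_mean : ∀ k, ∫ ω, M k ω ∂P ≤ 1 + p k := by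
    intro k
    have hmeasset : MeasurableSet {ω | X k ω < 1} := (hXm k) measurableSet_Iio
    have hind : Integrable ({ω | X k ω < 1}.indicator fun _ => (1 : ℝ)) P :=
      (integrable_const 1).indicator hmeasset
    have hle : ∀ ω, max (1 - X k ω) 0 ≤ {ω | X k ω < 1}.indicator (fun _ => (1 : ℝ)) ω := by
      intro ω
      by_cases h : X k ω < 1
      · rw [Set.indicator_of_mem (show ω ∈ {ω | X k ω < 1} from h)]
        have := hXnn k ω
        exact max_le (by linarith) zero_le_one
      · rw [Set.indicator_of_notMem (show ω ∉ {ω | X k ω < 1} from h)]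
        push_neg at h
        exact max_le (by linarith) le_rfl
    have h1 : ∫ ω, max (1 - X k ω) 0 ∂P
        ≤ ∫ ω, {ω | X k ω < 1}.indicator (fun _ => (1 : ℝ)) ω ∂P :=
      integral_mono ((integrable_const 1).sub (hXint k)).pos_part hind hle
    have h2 : ∫ ω, {ω | X k ω < 1}.indicator (fun _ => (1 : ℝ)) ω ∂P = p k := by
      rw [integral_indicator_const (1 : ℝ) hmeasset]
      simp [hp, measureReal_def]
    have hposint : Integrable (fun ω => max (1 - X k ω) 0) P := by
      simpa using ((integrable_const 1).sub (hXint k)).pos_part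
    have h3 : ∫ ω, M k ω ∂P = 1 + ∫ ω, max (1 - X k ω) 0 ∂P := by
      simp only [hM_eq]
      rw [integral_add (hXint k) hposint, hXmean k]
    rw [h3]
    rw [h2] at h1
    linarith
  set Q : ℕ → Ω → ℝ := fun n ω => ∏ ℓ ∈ Finset.range n, M ℓ ω with hQ
  have hQ_eq : ∀ n, Q n = ∏ ℓ ∈ Finset.range n, M ℓ := by
    intro n; funext ω; simp only [hQ]; rw [Finset.prod_apply]
  have hQ_meas : ∀ n, Measurable (Q n) := by
    intro n; simp only [hQ]; exact Finset.measurable_prod _ fun ℓ _ => hM_meas ℓ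
  have hQ_one : ∀ n ω, (1 : ℝ) ≤ Q n ω := by
    intro n ω
    have h := Finset.prod_le_prod (s := Finset.range n) (f := fun _ => (1 : ℝ))
      (g := fun ℓ => M ℓ ω) (fun _ _ => zero_le_one) (fun ℓ _ => hM_one ℓ ω)
    simpa [hQ] using h
  have hQ_nonneg : ∀ n ω, (0 : ℝ) ≤ Q n ω := fun n ω => le_trans zero_le_one (hQ_one n ω)
  have hQ_mono : ∀ ω, Monotone fun n => Q n ω := by
    intro ω
    refine monotone_nat_of_le_succ fun n => ?_
    calc Q n ω = Q n ω * 1 := (mul_one _).symm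
      _ ≤ Q n ω * M n ω := mul_le_mul_of_nonneg_left (hM_one n ω) (hQ_nonneg n ω)
      _ = Q (n + 1) ω := by simp only [hQ]; rw [Finset.prod_range_succ]
  have hQ_int : ∀ n, Integrable (Q n) P := by
    intro n; rw [hQ_eq n]; exact (aux_prod_integrable M hM_meas hM_int hM_indep _).1
  have hC : ∀ n, ∫ ω, Q n ω ∂P ≤ Real.exp (∑' k, p k) := by
    intro n
    have h0 : ∫ ω, Q n ω ∂P = ∏ ℓ ∈ Finset.range n, ∫ ω, M ℓ ω ∂P := by
      rw [hQ_eq n]; exact (aux_prod_integrable M hM_meas hM_int hM_indep _).2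
    rw [h0]
    calc ∏ ℓ ∈ Finset.range n, ∫ ω, M ℓ ω ∂P
        ≤ ∏ ℓ ∈ Finset.range n, (1 + p ℓ) :=
          Finset.prod_le_prod (fun ℓ _ => integral_nonneg fun ω => hM_nonneg ℓ ω)
            (fun ℓ _ => hM_mean ℓ)
      _ ≤ ∏ ℓ ∈ Finset.range n, Real.exp (p ℓ) :=
          Finset.prod_le_prod (fun ℓ _ => by positivity)
            (fun ℓ _ => by have := Real.add_one_le_exp (p ℓ); linarith)
      _ = Real.exp (∑ ℓ ∈ Finset.range n, p ℓ) := (Real.exp_sum _ _).symm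
      _ ≤ Real.exp (∑' k, p k) :=
          Real.exp_le_exp.mpr (Summable.sum_le_tsum _ (fun ℓ _ => hp_nonneg ℓ) hsum)
  set G : Ω → ℝ≥0∞ := fun ω => ⨆ n, ENNReal.ofReal (Q n ω) with hG
  have hG_meas : Measurable G :=
    Measurable.iSup fun n => (hQ_meas n).ennreal_ofReal
  have hG_lint : ∫⁻ ω, G ω ∂P ≤ ENNReal.ofReal (Real.exp (∑' k, p k)) := by
    have hmono : Monotone fun n => fun ω => ENNReal.ofReal (Q n ω) :=
      fun a b hab ω => ENNReal.ofReal_le_ofReal (hQ_mono ω hab)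
    have heq : ∫⁻ ω, G ω ∂P = ⨆ n, ∫⁻ ω, ENNReal.ofReal (Q n ω) ∂P := by
      simp only [hG]
      exact lintegral_iSup (fun n => (hQ_meas n).ennreal_ofReal) hmono
    rw [heq]
    refine iSup_le fun n => ?_
    rw [← ofReal_integral_eq_lintegral_ofReal (hQ_int n) (ae_of_all _ fun ω => hQ_nonneg n ω)]
    exact ENNReal.ofReal_le_ofReal (hC n)
  have hG_ae : ∀ᵐ ω ∂P, G ω < ⊤ :=
    ae_lt_top hG_meas (lt_of_le_of_lt hG_lint ENNReal.ofReal_lt_top).ne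
  set g : Ω → ℝ := fun ω => (G ω).toReal with hg
  have hg_meas : Measurable g := hG_meas.ennreal_toReal
  have hg_nonneg : ∀ ω, 0 ≤ g ω := fun ω => ENNReal.toReal_nonneg
  have hg_mem : MemLp g 1 P := by
    rw [memLp_one_iff_integrable]
    refine ⟨hg_meas.aestronglyMeasurable, ?_⟩
    refine lt_of_le_of_lt (lintegral_mono fun ω => ?_)
      (lt_of_le_of_lt hG_lint ENNReal.ofReal_lt_top)
    calc ‖g ω‖ₑ = ENNReal.ofReal (g ω) :=
          Real.enorm_eq_ofReal (hg_nonneg ω)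
      _ ≤ G ω := ENNReal.ofReal_toReal_le
  have hdom : ∀ n, ∀ᵐ ω ∂P, |S n ω| ≤ |g ω| := by
    intro n
    filter_upwards [hG_ae] with ω hω
    have h1 : 0 ≤ S n ω := by
      rw [hSdef n ω]; exact Finset.prod_nonneg fun ℓ _ => hXnn ℓ ω
    have h2 : S n ω ≤ Q n ω := by
      rw [hSdef n ω]
      exact Finset.prod_le_prod (fun ℓ _ => hXnn ℓ ω) (fun ℓ _ => le_max_left _ _)
    have h4 : ENNReal.ofReal (Q n ω) ≤ G ω :=
      le_iSup (fun n => ENNReal.ofReal (Q n ω)) n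
    have h3 : Q n ω ≤ g ω := by
      calc Q n ω = (ENNReal.ofReal (Q n ω)).toReal :=
            (ENNReal.toReal_ofReal (hQ_nonneg n ω)).symm
        _ ≤ (G ω).toReal := ENNReal.toReal_mono hω.ne h4
    rw [abs_of_nonneg h1, abs_of_nonneg (hg_nonneg ω)]
    exact h2.trans h3
  have hui : UnifIntegrable S 1 P := aux_unifIntegrable S g hg_mem hdom
  have hbdd : ∀ n, eLpNorm (S n) 1 P ≤ eLpNorm g 1 P := fun n =>
    eLpNorm_mono_ae ((hdom n).mono fun ω h => by simpa [Real.norm_eq_abs] using h)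
  refine ⟨hmart, fun n => (hSmeas n).aestronglyMeasurable, hui,
    ⟨(eLpNorm g 1 P).toNNReal, fun n => ?_⟩⟩
  exact (hbdd n).trans (ENNReal.coe_toNNReal hg_mem.2.ne).ge
end

section
/- Let S be a positive discrete-time Markov martingale with transition kernel K, and define b(x) := (1/x)∫_{[0,x)} y K(x,dy). If liminf_{x→∞} b(x) > 0, then S fails to be a bubble under P_x for every starting point x > 0. -/
open MeasureTheory Filter Set

noncomputable section

open ProbabilityTheory

/-- A positive time-homogeneous Markov martingale on `(0, ∞)` with transition kernel `K`,
together with its family of laws `P x` (start at `x`) and the a.s. limit `Sinf`. -/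
structure MarkovMartingale (Ω : Type*) [m0 : MeasurableSpace Ω] where
  P : ℝ → Measure Ω
  F : Filtration ℕ m0
  S : ℕ → Ω → ℝ
  Sinf : Ω → ℝ
  K : Kernel ℝ ℝ
  markov : IsMarkovKernel K
  prob : ∀ x, 0 < x → IsProbabilityMeasure (P x)
  pos : ∀ x, 0 < x → ∀ᵐ ω ∂P x, ∀ n, 0 < S n ω
  start : ∀ x, 0 < x → ∀ᵐ ω ∂P x, S 0 ω = x
  mart : ∀ x, 0 < x → Martingale S F (P x)
  conv : ∀ x, 0 < x → ∀ᵐ ω ∂P x, Tendsto (fun n => S n ω) atTop (nhds (Sinf ω))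
  kernel_pos : ∀ x, 0 < x → K x (Set.Iic 0) = 0
  kernel_int : ∀ x, 0 < x → Integrable id (K x)
  kernel_mart : ∀ x, 0 < x → ∫ y, y ∂(K x) = x
  step : ∀ x, 0 < x → ∀ n : ℕ, ∀ g : ℝ → ℝ, Measurable g → (∃ C, ∀ y, |g y| ≤ C) →
    (P x)[fun ω => g (S (n + 1) ω) | F n] =ᵐ[P x] fun ω => ∫ y, g y ∂(K (S n ω))

namespace MarkovMartingale

variable {Ω : Type*} [MeasurableSpace Ω]

/-- The probability `a(x) = K(x, [0,x))` of a downward move from `x`. -/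
def a (M : MarkovMartingale Ω) (x : ℝ) : ℝ := (M.K x (Set.Ico 0 x)).toReal

/-- The relative recovery `b(x) = (1/x) ∫_{[0,x)} y K(x,dy)` upon a downward move. -/
def b (M : MarkovMartingale Ω) (x : ℝ) : ℝ := (1 / x) * ∫ y in Set.Ico 0 x, y ∂(M.K x)

/-- The relaxed relative recovery `b_ε(x) = (1/x) ∫_{[0,x(1+ε))} y K(x,dy)`. -/
def bEps (M : MarkovMartingale Ω) (ε x : ℝ) : ℝ :=
  (1 / x) * ∫ y in Set.Ico 0 (x * (1 + ε)), y ∂(M.K x)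

/-- `S` is a bubble under `P_x`. -/
def Bubble (M : MarkovMartingale Ω) (x : ℝ) : Prop := IsBubble M.S M.Sinf (M.P x)

/-- `S` is `P_x`-a.s. bounded. -/
def Bounded (M : MarkovMartingale Ω) (x : ℝ) : Prop :=
  ∃ C : ℝ, ∀ᵐ ω ∂M.P x, ∀ n, M.S n ω ≤ C

/-- The default function `M_S(x) = x - E_x[S_{τ₁}]`, the loss of mass at the first
drawdown. -/
def defaultFn (M : MarkovMartingale Ω) (x : ℝ) : ℝ :=
  x - ∫ ω, evalAt M.S M.Sinf (drawdown M.S 1) ω ∂(M.P x)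

/-- The assumption that the downward-move probability `a` is locally bounded away from zero
above a level `xa`. -/
def ALowerBound (M : MarkovMartingale Ω) (xa : ℝ) : Prop :=
  0 < xa ∧ ∀ y, xa < y → ∃ c > (0 : ℝ), ∀ x ∈ Set.Icc xa y, c ≤ M.a x

end MarkovMartingale

end

noncomputable section Aux

namespace NotBubble

variable {Ω : Type*}

lemma enat_lt_coe_succ_iff (a : ℕ∞) (n : ℕ) : a < ((n+1 : ℕ) : ℕ∞) ↔ a ≤ (n : ℕ∞) := by
  cases a with
  | top => simp
  | coe m => exact_mod_cast Nat.lt_succ_iff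

lemma enat_lt_add_one_iff (a : ℕ∞) (n : ℕ) : a < (n : ℕ∞) + 1 ↔ a ≤ (n : ℕ∞) := by
  rw [show ((n : ℕ∞) + 1) = ((n+1 : ℕ) : ℕ∞) by exact_mod_cast rfl]
  exact enat_lt_coe_succ_iff a n

lemma enat_coe_succ_le_of_lt {a : ℕ∞} {n : ℕ} (h : (n : ℕ∞) < a) : ((n+1 : ℕ) : ℕ∞) ≤ a := by
  cases a with
  | top => simp
  | coe m => simp only [Nat.cast_le, Nat.cast_lt] at *; omega

lemma enat_exists_coe_of_le_coe {a : ℕ∞} {n : ℕ} (h : a ≤ (n : ℕ∞)) :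
    ∃ m : ℕ, m ≤ n ∧ a = (m : ℕ∞) := by
  cases a with
  | top => simp at h
  | coe m => exact ⟨m, by simpa using h, rfl⟩

lemma enat_lt_iff_succ (a : ℕ∞) (n : ℕ) :
    (n : ℕ∞) < a ↔ a = ((n+1 : ℕ) : ℕ∞) ∨ ((n+1 : ℕ) : ℕ∞) < a := by
  constructor
  · intro h
    rcases eq_or_lt_of_le (enat_coe_succ_le_of_lt h) with h' | h'
    · exact Or.inl h'.symm
    · exact Or.inr h'
  · rintro (h | h)
    · rw [h]; exact_mod_cast Nat.lt_succ_self n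
    · exact lt_trans (by exact_mod_cast Nat.lt_succ_self n) h

lemma drawdown_succ_def (S : ℕ → Ω → ℝ) (k : ℕ) (ω : Ω) :
    drawdown S (k+1) ω =
      sInf {j : ℕ∞ | drawdown S k ω < j ∧ ∃ n : ℕ, j = (n : ℕ∞) ∧ S n ω < S (n - 1) ω} := rfl

lemma drawdown_le_succ (S : ℕ → Ω → ℝ) (k : ℕ) (ω : Ω) :
    drawdown S k ω ≤ drawdown S (k+1) ω := by
  rw [drawdown_succ_def]
  exact le_sInf fun _ hj => hj.1.le

lemma drawdown_succ_le_coe_iff (S : ℕ → Ω → ℝ) (k : ℕ) (ω : Ω) (n : ℕ) :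
    drawdown S (k+1) ω ≤ (n : ℕ∞) ↔
      ∃ j : ℕ, j ≤ n ∧ drawdown S k ω < (j : ℕ∞) ∧ S j ω < S (j-1) ω := by
  constructor
  · intro h
    rw [drawdown_succ_def] at h
    set A := {j : ℕ∞ | drawdown S k ω < j ∧ ∃ m : ℕ, j = (m : ℕ∞) ∧ S m ω < S (m - 1) ω} with hA
    have hne : A.Nonempty := by
      by_contra hne
      rw [Set.not_nonempty_iff_eq_empty] at hne
      rw [hne, sInf_empty] at h
      simp at h
    obtain ⟨hlt, m, hm, hSm⟩ := csInf_mem hne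
    refine ⟨m, ?_, hm ▸ hlt, hSm⟩
    have := hm ▸ h
    exact_mod_cast this
  · rintro ⟨j, hjn, hlt, hSj⟩
    rw [drawdown_succ_def]
    exact le_trans (sInf_le ⟨hlt, j, rfl, hSj⟩) (by exact_mod_cast hjn)

lemma drawdown_succ_ne_zero (S : ℕ → Ω → ℝ) (k : ℕ) (ω : Ω) :
    ¬ (drawdown S (k+1) ω ≤ ((0:ℕ) : ℕ∞)) := by
  rw [drawdown_succ_le_coe_iff]
  rintro ⟨j, hj, hlt, -⟩
  interval_cases j
  simp at hlt

lemma drawdown_succ_eq_coe_succ_iff (S : ℕ → Ω → ℝ) (k : ℕ) (ω : Ω) (n : ℕ) :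
    drawdown S (k+1) ω = ((n+1 : ℕ) : ℕ∞) ↔
      drawdown S k ω ≤ (n : ℕ∞) ∧ (n : ℕ∞) < drawdown S (k+1) ω ∧ S (n+1) ω < S n ω := by
  constructor
  · intro h
    have hle : drawdown S (k+1) ω ≤ ((n+1:ℕ) : ℕ∞) := le_of_eq h
    set A := {j : ℕ∞ | drawdown S k ω < j ∧ ∃ m : ℕ, j = (m : ℕ∞) ∧ S m ω < S (m - 1) ω} with hA
    have hne : A.Nonempty := by
      by_contra hne
      rw [Set.not_nonempty_iff_eq_empty] at hne
      rw [drawdown_succ_def, ← hA, hne, sInf_empty] at hle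
      exact ENat.coe_ne_top (n+1) (top_le_iff.mp hle)
    have hmem : drawdown S (k+1) ω ∈ A := by
      rw [drawdown_succ_def, ← hA]; exact csInf_mem hne
    rw [h] at hmem
    obtain ⟨hlt, m, hm, hSm⟩ := hmem
    have hmn : m = n + 1 := by exact_mod_cast hm.symm
    subst hmn
    refine ⟨(enat_lt_coe_succ_iff _ _).1 hlt, ?_, by simpa using hSm⟩
    rw [h]
    exact_mod_cast Nat.lt_succ_self n
  · rintro ⟨h1, h2, h3⟩
    have hle : drawdown S (k+1) ω ≤ ((n+1:ℕ) : ℕ∞) := by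
      rw [drawdown_succ_def]
      refine sInf_le ⟨(enat_lt_coe_succ_iff _ _).2 h1, n+1, rfl, by simpa using h3⟩
    exact le_antisymm hle (enat_coe_succ_le_of_lt h2)

variable {m0 : MeasurableSpace Ω}

lemma meas_drawdown_le (F : Filtration ℕ m0) (S : ℕ → Ω → ℝ)
    (hS : ∀ n, StronglyMeasurable[F n] (S n)) (k : ℕ) :
    ∀ n : ℕ, MeasurableSet[F n] {ω | drawdown S k ω ≤ (n : ℕ∞)} := by
  induction k with
  | zero =>
    intro n
    have : {ω | drawdown S 0 ω ≤ (n:ℕ∞)} = Set.univ := by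
      ext ω; simp [drawdown]
    rw [this]; exact MeasurableSet.univ
  | succ k ih =>
    intro n
    have hset : {ω | drawdown S (k+1) ω ≤ (n:ℕ∞)} =
        ⋃ (j : ℕ) (_ : j ≤ n),
          ({ω | drawdown S k ω < (j:ℕ∞)} ∩ {ω | S j ω < S (j-1) ω}) := by
      ext ω
      simp only [Set.mem_setOf_eq, drawdown_succ_le_coe_iff, Set.mem_iUnion, Set.mem_inter_iff]
      tauto
    rw [hset]
    refine MeasurableSet.iUnion fun j => MeasurableSet.iUnion fun hj => ?_
    refine MeasurableSet.inter ?_ ?_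
    · rcases j with _ | i
      · have : {ω | drawdown S k ω < ((0:ℕ):ℕ∞)} = ∅ := by ext ω; simp
        rw [this]; exact @MeasurableSet.empty _ (F n)
      · have : {ω | drawdown S k ω < ((i+1:ℕ):ℕ∞)} = {ω | drawdown S k ω ≤ (i:ℕ∞)} := by
          ext ω; exact enat_lt_coe_succ_iff _ _
        rw [this]
        exact F.mono (by omega) _ (ih i)
    · exact measurableSet_lt (((hS j).mono (F.mono hj)).measurable)
        (((hS (j-1)).mono (F.mono (by omega))).measurable)

end NotBubble

end Aux

noncomputable section Main

open MeasureTheory Filter Set ProbabilityTheory Topology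
open scoped ENNReal NNReal

namespace NotBubble

variable {Ω : Type*} [m0 : MeasurableSpace Ω]

/-- events -/
def ddLE (M : MarkovMartingale Ω) (k n : ℕ) : Set Ω := {ω | drawdown M.S k ω ≤ (n : ℕ∞)}
def ddGT (M : MarkovMartingale Ω) (k n : ℕ) : Set Ω := {ω | (n : ℕ∞) < drawdown M.S k ω}
def ddEQ (M : MarkovMartingale Ω) (k n : ℕ) : Set Ω := {ω | drawdown M.S k ω = (n : ℕ∞)}
def ddTop (M : MarkovMartingale Ω) (k : ℕ) : Set Ω := {ω | drawdown M.S k ω = ⊤}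

def uInt (M : MarkovMartingale Ω) (x : ℝ) (k n : ℕ) : ℝ :=
  ∫ ω in ddGT M k n, M.S n ω ∂(M.P x)
def wInt (M : MarkovMartingale Ω) (x : ℝ) (k n : ℕ) : ℝ :=
  ∫ ω in ddLE M k n, evalAt M.S M.Sinf (drawdown M.S k) ω ∂(M.P x)
def dInt (M : MarkovMartingale Ω) (x : ℝ) (k n : ℕ) : ℝ :=
  ∫ ω in ddEQ M k n, M.S n ω ∂(M.P x)

variable (M : MarkovMartingale Ω)

lemma adaptedS : ∀ n, StronglyMeasurable[M.F n] (M.S n) := (M.mart 1 one_pos).stronglyAdapted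

lemma measS (n : ℕ) : Measurable (M.S n) := ((adaptedS M n).mono (M.F.le n)).measurable

lemma measF_ddLE (k n : ℕ) : MeasurableSet[M.F n] (ddLE M k n) :=
  meas_drawdown_le M.F M.S (adaptedS M) k n

lemma measF_ddGT (k n : ℕ) : MeasurableSet[M.F n] (ddGT M k n) := by
  have : ddGT M k n = (ddLE M k n)ᶜ := by
    ext ω; simp [ddGT, ddLE, not_le]
  rw [this]; exact (measF_ddLE M k n).compl

lemma measF_ddEQ_succ (k n : ℕ) : MeasurableSet[M.F (n+1)] (ddEQ M k (n+1)) := by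
  have : ddEQ M k (n+1) = ddLE M k (n+1) ∩ ddGT M k n := by
    ext ω
    simp only [ddEQ, ddLE, ddGT, Set.mem_setOf_eq, Set.mem_inter_iff]
    constructor
    · intro h
      rw [h]
      exact ⟨le_refl _, by exact_mod_cast Nat.lt_succ_self n⟩
    · rintro ⟨h1, h2⟩
      exact le_antisymm h1 (enat_coe_succ_le_of_lt h2)
  rw [this]
  exact (measF_ddLE M k (n+1)).inter (M.F.mono (Nat.le_succ n) _ (measF_ddGT M k n))

lemma meas_ddLE (k n : ℕ) : MeasurableSet (ddLE M k n) := M.F.le n _ (measF_ddLE M k n)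
lemma meas_ddGT (k n : ℕ) : MeasurableSet (ddGT M k n) := M.F.le n _ (measF_ddGT M k n)
lemma meas_ddEQ_succ (k n : ℕ) : MeasurableSet (ddEQ M k (n+1)) :=
  M.F.le (n+1) _ (measF_ddEQ_succ M k n)
lemma meas_ddTop (k : ℕ) : MeasurableSet (ddTop M k) := by
  have : ddTop M k = ⋂ n : ℕ, ddGT M k n := by
    ext ω
    simp only [ddTop, Set.mem_setOf_eq, Set.mem_iInter, ddGT]
    constructor
    · intro h n; rw [h]; exact ENat.coe_lt_top n
    · intro h
      by_contra hne
      obtain ⟨m, hm⟩ : ∃ m : ℕ, drawdown M.S k ω = (m : ℕ∞) := by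
        cases hdd : drawdown M.S k ω with
        | top => exact absurd hdd hne
        | coe m => exact ⟨m, rfl⟩
      exact absurd (hm ▸ h m) (lt_irrefl _)
  rw [this]; exact MeasurableSet.iInter fun n => meas_ddGT M k n

/-- set splittings -/
lemma ddGT_split (k n : ℕ) : ddGT M k n = ddEQ M k (n+1) ∪ ddGT M k (n+1) := by
  ext ω; simp only [ddGT, ddEQ, Set.mem_union, Set.mem_setOf_eq]
  exact_mod_cast enat_lt_iff_succ (drawdown M.S k ω) n

lemma ddEQ_disj_ddGT (k n : ℕ) : Disjoint (ddEQ M k (n+1)) (ddGT M k (n+1)) := by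
  rw [Set.disjoint_left]
  intro ω h1 h2
  simp only [ddEQ, Set.mem_setOf_eq] at h1
  simp only [ddGT, Set.mem_setOf_eq, h1] at h2
  exact absurd h2 (lt_irrefl _)

lemma ddLE_split (k n : ℕ) : ddLE M k (n+1) = ddLE M k n ∪ ddEQ M k (n+1) := by
  ext ω; simp only [ddLE, ddEQ, Set.mem_union, Set.mem_setOf_eq]
  constructor
  · intro h
    rcases eq_or_lt_of_le h with h' | h'
    · exact Or.inr h'
    · exact Or.inl ((enat_lt_coe_succ_iff _ _).1 h')
  · rintro (h | h)
    · exact le_trans h (by exact_mod_cast Nat.le_succ n)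
    · exact le_of_eq h

lemma ddLE_disj_ddEQ (k n : ℕ) : Disjoint (ddLE M k n) (ddEQ M k (n+1)) := by
  rw [Set.disjoint_left]
  intro ω h1 h2
  simp only [ddLE, Set.mem_setOf_eq] at h1
  simp only [ddEQ, Set.mem_setOf_eq] at h2
  rw [h2] at h1
  exact (by exact_mod_cast Nat.not_succ_le_self n : ¬ (((n+1:ℕ):ℕ∞) ≤ (n:ℕ∞))) h1

lemma ddLE_succ_zero (k : ℕ) : ddLE M (k+1) 0 = ∅ := by
  ext ω; simp only [ddLE, Set.mem_setOf_eq, Set.mem_empty_iff_false, iff_false]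
  exact drawdown_succ_ne_zero M.S k ω

lemma ddGT_succ_zero (k : ℕ) : ddGT M (k+1) 0 = Set.univ := by
  ext ω; simp only [ddGT, Set.mem_setOf_eq, Set.mem_univ, iff_true]
  rcases pos_iff_ne_zero.2 (fun h0 => drawdown_succ_ne_zero M.S k ω (le_of_eq h0)) with h
  exact_mod_cast h

section Integrals

variable {M : MarkovMartingale Ω} {x : ℝ}

lemma intS (hx : 0 < x) (n : ℕ) : Integrable (M.S n) (M.P x) := (M.mart x hx).integrable n

lemma u_step (hx : 0 < x) (k n : ℕ) :
    uInt M x (k+1) n = dInt M x (k+1) (n+1) + uInt M x (k+1) (n+1) := by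
  haveI := M.prob x hx
  have h1 : uInt M x (k+1) n = ∫ ω in ddGT M (k+1) n, M.S (n+1) ω ∂(M.P x) :=
    (M.mart x hx).setIntegral_eq (Nat.le_succ n) (measF_ddGT M (k+1) n)
  rw [h1, ddGT_split M (k+1) n, setIntegral_union (ddEQ_disj_ddGT M (k+1) n)
      (meas_ddGT M (k+1) (n+1)) ((intS hx (n+1)).integrableOn) ((intS hx (n+1)).integrableOn)]
  rfl

lemma evalAt_eq_on_ddEQ (k m : ℕ) (ω : Ω) (h : ω ∈ ddEQ M k m) :
    evalAt M.S M.Sinf (drawdown M.S k) ω = M.S m ω := by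
  simp only [ddEQ, Set.mem_setOf_eq] at h
  rw [evalAt, if_neg (by rw [h]; exact ENat.coe_ne_top m), h]
  simp

lemma intOn_evalAt_ddEQ (hx : 0 < x) (k n : ℕ) :
    IntegrableOn (evalAt M.S M.Sinf (drawdown M.S (k+1))) (ddEQ M (k+1) (n+1)) (M.P x) :=
  ((intS hx (n+1)).integrableOn).congr_fun
    (fun ω h => (evalAt_eq_on_ddEQ (k+1) (n+1) ω h).symm) (meas_ddEQ_succ M (k+1) n)

lemma intOn_evalAt_ddLE (hx : 0 < x) (k n : ℕ) :
    IntegrableOn (evalAt M.S M.Sinf (drawdown M.S (k+1))) (ddLE M (k+1) n) (M.P x) := by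
  induction n with
  | zero => rw [ddLE_succ_zero]; exact integrableOn_empty
  | succ n ih => rw [ddLE_split]; exact ih.union (intOn_evalAt_ddEQ hx k n)

lemma w_step (hx : 0 < x) (k n : ℕ) :
    wInt M x (k+1) (n+1) = wInt M x (k+1) n + dInt M x (k+1) (n+1) := by
  rw [wInt, ddLE_split M (k+1) n,
    setIntegral_union (ddLE_disj_ddEQ M (k+1) n) (meas_ddEQ_succ M (k+1) n)
      (intOn_evalAt_ddLE hx k n) (intOn_evalAt_ddEQ hx k n)]
  congr 1
  exact setIntegral_congr_fun (meas_ddEQ_succ M (k+1) n)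
    (fun ω h => evalAt_eq_on_ddEQ (k+1) (n+1) ω h)

lemma w_zero (k : ℕ) : wInt M x (k+1) 0 = 0 := by
  rw [wInt, ddLE_succ_zero]; simp

lemma u_zero (hx : 0 < x) (k : ℕ) : uInt M x (k+1) 0 = x := by
  haveI := M.prob x hx
  rw [uInt, ddGT_succ_zero, Measure.restrict_univ]
  calc ∫ ω, M.S 0 ω ∂(M.P x) = ∫ _ω, x ∂(M.P x) :=
        integral_congr_ae ((M.start x hx).mono fun ω h => h)
    _ = x := by simp

lemma w_add_u (hx : 0 < x) (k n : ℕ) : wInt M x (k+1) n + uInt M x (k+1) n = x := by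
  induction n with
  | zero => rw [w_zero, u_zero hx]; ring
  | succ n ih =>
    have h1 := u_step (M := M) hx k n
    have h2 := w_step (M := M) hx k n
    linarith

lemma u_nonneg (hx : 0 < x) (k n : ℕ) : 0 ≤ uInt M x k n := by
  rw [uInt]
  exact setIntegral_nonneg_ae (meas_ddGT M k n) ((M.pos x hx).mono fun ω h _ => (h n).le)

lemma d_nonneg (hx : 0 < x) (k n : ℕ) : 0 ≤ dInt M x k (n+1) := by
  rw [dInt]
  exact setIntegral_nonneg_ae (meas_ddEQ_succ M k n) ((M.pos x hx).mono fun ω h _ => (h (n+1)).le)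

lemma w_le (hx : 0 < x) (k n : ℕ) : wInt M x (k+1) n ≤ x := by
  have := w_add_u (M := M) hx k n; have := u_nonneg (M := M) hx (k+1) n; linarith

lemma sum_d (hx : 0 < x) (k N : ℕ) :
    ∑ i ∈ Finset.range N, dInt M x (k+1) (i+1) = wInt M x (k+1) N := by
  induction N with
  | zero => simp [w_zero]
  | succ N ih => rw [Finset.sum_range_succ, ih, ← w_step hx]

lemma d_tendsto (hx : 0 < x) (k : ℕ) :
    Tendsto (fun n => dInt M x (k+1) (n+1)) atTop (𝓝 0) := by
  refine (summable_of_sum_range_le (c := x) (fun n => d_nonneg (M := M) hx (k+1) n)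
    (fun N => ?_)).tendsto_atTop_zero
  rw [sum_d (M := M) hx k N]
  exact w_le hx k N

end Integrals

section EvalAtInt

variable {M : MarkovMartingale Ω} {x : ℝ}

/-- approximating (stopped) process -/
def gseq (M : MarkovMartingale Ω) (k n : ℕ) (ω : Ω) : ℝ :=
  (∑ m ∈ Finset.range (n+1), (ddEQ M (k+1) m).indicator (M.S m) ω)
    + (ddGT M (k+1) n).indicator (M.S n) ω

lemma ddEQ_succ_zero (k : ℕ) : ddEQ M (k+1) 0 = ∅ := by
  ext ω
  simp only [ddEQ, Set.mem_setOf_eq, Set.mem_empty_iff_false, iff_false]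
  exact fun h => drawdown_succ_ne_zero M.S k ω (le_of_eq h)

lemma meas_ddEQ (k m : ℕ) : MeasurableSet (ddEQ M (k+1) m) := by
  rcases m with _ | n
  · rw [ddEQ_succ_zero]; exact MeasurableSet.empty
  · exact meas_ddEQ_succ M (k+1) n

lemma gseq_measurable (k n : ℕ) : Measurable (gseq M k n) := by
  refine Measurable.add ?_ ((measS M n).indicator (meas_ddGT M (k+1) n))
  refine Finset.measurable_sum _ fun m _ => (measS M m).indicator (meas_ddEQ (M := M) k m)

lemma gseq_integrable (hx : 0 < x) (k n : ℕ) : Integrable (gseq M k n) (M.P x) := by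
  refine Integrable.add (integrable_finset_sum _ fun m _ => ?_) ?_
  · exact (integrable_indicator_iff (meas_ddEQ (M := M) k m)).2 (intS hx m).integrableOn
  · exact (integrable_indicator_iff (meas_ddGT M (k+1) n)).2 (intS hx n).integrableOn

lemma dInt_zero : dInt M x (k+1) 0 = 0 := by
  rw [dInt, ddEQ_succ_zero]; simp

lemma gseq_integral (hx : 0 < x) (k n : ℕ) : ∫ ω, gseq M k n ω ∂(M.P x) = x := by
  rw [show (fun ω => gseq M k n ω) = (fun ω => (∑ m ∈ Finset.range (n+1),
        (ddEQ M (k+1) m).indicator (M.S m) ω) + (ddGT M (k+1) n).indicator (M.S n) ω) from rfl]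
  rw [integral_add (integrable_finset_sum _ fun m _ =>
        (integrable_indicator_iff (meas_ddEQ (M := M) k m)).2 (intS hx m).integrableOn)
      ((integrable_indicator_iff (meas_ddGT M (k+1) n)).2 (intS hx n).integrableOn)]
  rw [integral_finset_sum _ fun m _ =>
        (integrable_indicator_iff (meas_ddEQ (M := M) k m)).2 (intS hx m).integrableOn]
  have hsum : ∑ m ∈ Finset.range (n+1), ∫ ω, (ddEQ M (k+1) m).indicator (M.S m) ω ∂(M.P x)
      = wInt M x (k+1) n := by
    have : ∀ m, ∫ ω, (ddEQ M (k+1) m).indicator (M.S m) ω ∂(M.P x) = dInt M x (k+1) m :=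
      fun m => integral_indicator (meas_ddEQ (M := M) k m)
    rw [Finset.sum_congr rfl fun m _ => this m, Finset.sum_range_succ', dInt_zero, add_zero,
      sum_d hx k n]
  rw [hsum, integral_indicator (meas_ddGT M (k+1) n)]
  exact w_add_u hx k n

lemma gseq_nonneg (hx : 0 < x) (k n : ℕ) : 0 ≤ᵐ[M.P x] gseq M k n := by
  filter_upwards [M.pos x hx] with ω hpos
  refine add_nonneg (Finset.sum_nonneg fun m _ => ?_) ?_
  · exact Set.indicator_nonneg (fun ω' _ => (hpos m).le) ω
  · exact Set.indicator_nonneg (fun ω' _ => (hpos n).le) ω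

lemma gseq_tendsto (hx : 0 < x) (k : ℕ) :
    ∀ᵐ ω ∂(M.P x), Tendsto (fun n => gseq M k n ω) atTop
      (𝓝 (evalAt M.S M.Sinf (drawdown M.S (k+1)) ω)) := by
  filter_upwards [M.conv x hx] with ω hconv
  cases hdd : drawdown M.S (k+1) ω with
  | top =>
    have heval : evalAt M.S M.Sinf (drawdown M.S (k+1)) ω = M.Sinf ω := by
      rw [evalAt, if_pos hdd]
    have hg : ∀ n, gseq M k n ω = M.S n ω := by
      intro n
      rw [gseq]
      have h1 : ∀ m ∈ Finset.range (n+1), (ddEQ M (k+1) m).indicator (M.S m) ω = 0 := by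
        intro m _
        apply Set.indicator_of_notMem
        simp only [ddEQ, Set.mem_setOf_eq, hdd]
        exact fun h => ENat.coe_ne_top m h.symm
      rw [Finset.sum_congr rfl h1, Finset.sum_const, smul_zero, zero_add,
        Set.indicator_of_mem]
      simp only [ddGT, Set.mem_setOf_eq, hdd]
      exact ENat.coe_lt_top n
    rw [heval]
    exact hconv.congr fun n => (hg n).symm
  | coe m =>
    have heval : evalAt M.S M.Sinf (drawdown M.S (k+1)) ω = M.S m ω :=
      evalAt_eq_on_ddEQ (k+1) m ω hdd
    rw [heval]
    refine tendsto_const_nhds.congr' ?_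
    filter_upwards [eventually_ge_atTop m] with n hn
    rw [gseq]
    have hmem : ω ∈ ddEQ M (k+1) m := hdd
    have h1 : ∑ j ∈ Finset.range (n+1), (ddEQ M (k+1) j).indicator (M.S j) ω = M.S m ω := by
      rw [Finset.sum_eq_single_of_mem m (Finset.mem_range.2 (by omega))]
      · exact Set.indicator_of_mem hmem _
      · intro j _ hj
        apply Set.indicator_of_notMem
        simp only [ddEQ, Set.mem_setOf_eq, hdd]
        exact fun h => hj (Eq.symm (by exact_mod_cast h))
    have h2 : (ddGT M (k+1) n).indicator (M.S n) ω = 0 := by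
      apply Set.indicator_of_notMem
      simp only [ddGT, Set.mem_setOf_eq, hdd, not_lt]
      exact_mod_cast hn
    rw [h1, h2, add_zero]

lemma evalAt_nonneg (hx : 0 < x) (k : ℕ) :
    0 ≤ᵐ[M.P x] evalAt M.S M.Sinf (drawdown M.S (k+1)) := by
  filter_upwards [M.pos x hx, M.conv x hx] with ω hpos hconv
  rw [Pi.zero_apply, evalAt]
  split
  · exact ge_of_tendsto hconv (Eventually.of_forall fun n => (hpos n).le)
  · exact (hpos _).le

lemma evalAt_integrable (hx : 0 < x) (k : ℕ) :
    Integrable (evalAt M.S M.Sinf (drawdown M.S (k+1))) (M.P x) := by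
  haveI := M.prob x hx
  have haesm : AEStronglyMeasurable (evalAt M.S M.Sinf (drawdown M.S (k+1))) (M.P x) := by
    have := aemeasurable_of_tendsto_metrizable_ae atTop
      (fun n => (gseq_measurable (M := M) k n).aemeasurable) (gseq_tendsto hx k)
    exact this.aestronglyMeasurable
  refine ⟨haesm, ?_⟩
  have hlim : ∫⁻ ω, ENNReal.ofReal (evalAt M.S M.Sinf (drawdown M.S (k+1)) ω) ∂(M.P x)
      ≤ ENNReal.ofReal x := by
    have hcongr : ∀ᵐ ω ∂(M.P x),
        ENNReal.ofReal (evalAt M.S M.Sinf (drawdown M.S (k+1)) ω)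
          = liminf (fun n => ENNReal.ofReal (gseq M k n ω)) atTop := by
      filter_upwards [gseq_tendsto hx k] with ω hconv
      exact ((ENNReal.continuous_ofReal.tendsto _).comp hconv).liminf_eq.symm
    rw [lintegral_congr_ae hcongr]
    refine le_trans (lintegral_liminf_le fun n =>
      (gseq_measurable (M := M) k n).ennreal_ofReal) ?_
    have : ∀ n, ∫⁻ ω, ENNReal.ofReal (gseq M k n ω) ∂(M.P x) = ENNReal.ofReal x := by
      intro n
      rw [← ofReal_integral_eq_lintegral_ofReal (gseq_integrable hx k n) (gseq_nonneg hx k n),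
        gseq_integral hx k n]
    simp only [this]
    exact le_of_eq (liminf_const _)
  have hcongr2 : ∀ᵐ ω ∂(M.P x), (‖evalAt M.S M.Sinf (drawdown M.S (k+1)) ω‖₊ : ℝ≥0∞)
      = ENNReal.ofReal (evalAt M.S M.Sinf (drawdown M.S (k+1)) ω) := by
    filter_upwards [evalAt_nonneg hx k] with ω h
    exact Real.enorm_eq_ofReal h
  show (∫⁻ ω, (‖evalAt M.S M.Sinf (drawdown M.S (k+1)) ω‖₊ : ℝ≥0∞) ∂(M.P x)) < ⊤
  rw [lintegral_congr_ae hcongr2]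
  exact lt_of_le_of_lt hlim ENNReal.ofReal_lt_top

lemma w_tendsto (hx : 0 < x) (k : ℕ) :
    Tendsto (fun n => wInt M x (k+1) n) atTop
      (𝓝 (∫ ω in (ddTop M (k+1))ᶜ, evalAt M.S M.Sinf (drawdown M.S (k+1)) ω ∂(M.P x))) := by
  haveI := M.prob x hx
  have heq : ∀ n, wInt M x (k+1) n = ∫ ω, (ddLE M (k+1) n).indicator
      (evalAt M.S M.Sinf (drawdown M.S (k+1))) ω ∂(M.P x) := by
    intro n
    rw [wInt, integral_indicator (meas_ddLE M (k+1) n)]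
  have heq2 : ∫ ω in (ddTop M (k+1))ᶜ, evalAt M.S M.Sinf (drawdown M.S (k+1)) ω ∂(M.P x)
      = ∫ ω, ((ddTop M (k+1))ᶜ).indicator (evalAt M.S M.Sinf (drawdown M.S (k+1))) ω ∂(M.P x) :=
    (integral_indicator (meas_ddTop M (k+1)).compl).symm
  simp only [heq, heq2]
  refine tendsto_integral_of_dominated_convergence
    (fun ω => ‖evalAt M.S M.Sinf (drawdown M.S (k+1)) ω‖)
    (fun n => ((integrable_indicator_iff (meas_ddLE M (k+1) n)).2
      (intOn_evalAt_ddLE hx k n)).aestronglyMeasurable)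
    (evalAt_integrable hx k).norm ?_ ?_
  · intro n
    refine Eventually.of_forall fun ω => ?_
    exact norm_indicator_le_norm_self _ ω
  · refine Eventually.of_forall fun ω => ?_
    cases hdd : drawdown M.S (k+1) ω with
    | top =>
      have h1 : ∀ n, (ddLE M (k+1) n).indicator
          (evalAt M.S M.Sinf (drawdown M.S (k+1))) ω = 0 := by
        intro n
        apply Set.indicator_of_notMem
        simp only [ddLE, Set.mem_setOf_eq, hdd]
        simp
      have h2 : ((ddTop M (k+1))ᶜ).indicator
          (evalAt M.S M.Sinf (drawdown M.S (k+1))) ω = 0 := by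
        apply Set.indicator_of_notMem
        simp [ddTop, hdd]
      simp only [h1, h2]
      exact tendsto_const_nhds
    | coe m =>
      have h2 : ((ddTop M (k+1))ᶜ).indicator
          (evalAt M.S M.Sinf (drawdown M.S (k+1))) ω
          = evalAt M.S M.Sinf (drawdown M.S (k+1)) ω := by
        apply Set.indicator_of_mem
        simp only [Set.mem_compl_iff, ddTop, Set.mem_setOf_eq, hdd]
        exact fun h => ENat.coe_ne_top m h
      rw [h2]
      refine tendsto_const_nhds.congr' ?_
      filter_upwards [eventually_ge_atTop m] with n hn
      refine (Set.indicator_of_mem ?_ _).symm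
      simp only [ddLE, Set.mem_setOf_eq, hdd]
      exact_mod_cast hn

end EvalAtInt

section KernelStep

variable {M : MarkovMartingale Ω} {x : ℝ}

/-- truncated identity function -/
def gcut (t : ℝ) (y : ℝ) : ℝ := if 0 ≤ y ∧ y < t then y else 0

lemma gcut_eq_indicator (t : ℝ) : gcut t = (Set.Ico (0:ℝ) t).indicator id := by
  funext y
  rw [gcut, Set.indicator_apply]
  simp [Set.mem_Ico]

lemma gcut_measurable (t : ℝ) : Measurable (gcut t) := by
  rw [gcut_eq_indicator]
  exact measurable_id.indicator measurableSet_Ico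

lemma gcut_nonneg (t y : ℝ) : 0 ≤ gcut t y := by
  rw [gcut]; split
  · exact (by assumption : 0 ≤ y ∧ y < t).1
  · exact le_refl 0

lemma gcut_abs_le (t y : ℝ) : |gcut t y| ≤ max t 0 := by
  rw [gcut]; split
  · rename_i h
    rw [abs_of_nonneg h.1]
    exact le_trans h.2.le (le_max_left t 0)
  · simp

lemma gcut_le_abs (t y : ℝ) : gcut t y ≤ |y| := by
  rw [gcut]; split
  · exact le_abs_self y
  · exact abs_nonneg y

lemma gcut_mono (y : ℝ) : Monotone (fun t => gcut t y) := by
  intro t t' htt'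
  show gcut t y ≤ gcut t' y
  by_cases h : 0 ≤ y ∧ y < t
  · rw [gcut, if_pos h, gcut, if_pos ⟨h.1, lt_of_lt_of_le h.2 htt'⟩]
  · rw [gcut, if_neg h]
    exact gcut_nonneg t' y

lemma gcut_integrable (z t : ℝ) : Integrable (gcut t) (M.K z) := by
  haveI := M.markov
  refine Integrable.mono' (integrable_const (max t 0))
    (gcut_measurable t).aestronglyMeasurable ?_
  exact Eventually.of_forall fun y => by
    rw [Real.norm_eq_abs]; exact gcut_abs_le t y

/-- kernel integral of the truncation -/
def Gker (M : MarkovMartingale Ω) (t z : ℝ) : ℝ := ∫ y, gcut t y ∂(M.K z)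

def betaK (M : MarkovMartingale Ω) (z : ℝ) : ℝ := ∫ y, gcut z y ∂(M.K z)

lemma Gker_nonneg (t z : ℝ) : 0 ≤ Gker M t z :=
  integral_nonneg (fun y => gcut_nonneg t y)

lemma betaK_nonneg (z : ℝ) : 0 ≤ betaK M z :=
  integral_nonneg (fun y => gcut_nonneg z y)

lemma Gker_abs_le (t z : ℝ) : |Gker M t z| ≤ max t 0 := by
  haveI := M.markov
  have := norm_integral_le_of_norm_le_const (μ := M.K z) (f := gcut t) (C := max t 0)
    (Eventually.of_forall fun y => by rw [Real.norm_eq_abs]; exact gcut_abs_le t y)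
  simpa [Gker] using this

lemma Gker_mono (z : ℝ) : Monotone (fun t => Gker M t z) := fun t t' h =>
  integral_mono (gcut_integrable z t) (gcut_integrable z t') (fun y => gcut_mono y h)

lemma ae_nonneg_K (z : ℝ) (hz : 0 < z) : ∀ᵐ y ∂(M.K z), 0 ≤ y := by
  have : {y : ℝ | ¬ 0 ≤ y} ⊆ Set.Iic 0 := fun y hy => le_of_lt (not_le.1 hy)
  exact measure_mono_null this (M.kernel_pos z hz)

lemma betaK_le (z : ℝ) (hz : 0 < z) : betaK M z ≤ z := by
  have h1 : betaK M z ≤ ∫ y, y ∂(M.K z) := by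
    refine integral_mono_ae (gcut_integrable z z) (M.kernel_int z hz) ?_
    filter_upwards [ae_nonneg_K (M := M) z hz] with y hy
    rw [gcut]; split
    · exact le_refl y
    · exact hy
  calc betaK M z ≤ ∫ y, y ∂(M.K z) := h1
    _ = z := M.kernel_mart z hz

lemma betaK_ge (z : ℝ) {c R : ℝ} (hR : 0 < R) (hbR : ∀ z', R ≤ z' → c ≤ M.b z')
    (hz : R ≤ z) : c * z ≤ betaK M z := by
  have hz0 : 0 < z := lt_of_lt_of_le hR hz
  have h1 : betaK M z = ∫ y in Set.Ico (0:ℝ) z, y ∂(M.K z) := by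
    rw [betaK, gcut_eq_indicator, integral_indicator measurableSet_Ico]
    simp only [id_eq]
  have h2 : betaK M z = z * M.b z := by
    rw [h1, MarkovMartingale.b]
    field_simp
  rw [h2, mul_comm z (M.b z)]
  exact mul_le_mul_of_nonneg_right (hbR z hz) hz0.le

/-- the conditional-step set-integral identity -/
lemma step_setIntegral (hx : 0 < x) (n : ℕ) (g : ℝ → ℝ) (hg : Measurable g)
    (C : ℝ) (hgC : ∀ y, |g y| ≤ C) (s : Set Ω) (hs : MeasurableSet[M.F n] s) :
    ∫ ω in s, g (M.S (n+1) ω) ∂(M.P x)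
      = ∫ ω in s, (∫ y, g y ∂(M.K (M.S n ω))) ∂(M.P x) := by
  haveI := M.prob x hx
  have hint : Integrable (fun ω => g (M.S (n+1) ω)) (M.P x) := by
    refine Integrable.mono' (integrable_const C)
      ((hg.comp (measS M (n+1))).aestronglyMeasurable) ?_
    exact Eventually.of_forall fun ω => by rw [Real.norm_eq_abs]; exact hgC _
  have h1 := setIntegral_condExp (M.F.le n) hint hs
  have h2 := M.step x hx n g hg ⟨C, hgC⟩
  calc ∫ ω in s, g (M.S (n+1) ω) ∂(M.P x)
      = ∫ ω in s, ((M.P x)[fun ω => g (M.S (n+1) ω)|M.F n]) ω ∂(M.P x) := h1.symm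
    _ = ∫ ω in s, (∫ y, g y ∂(M.K (M.S n ω))) ∂(M.P x) :=
        setIntegral_congr_ae (M.F.le n _ hs) (h2.mono fun ω h _ => h)

/-- dyadic lower rounding -/
def Tgrid (m : ℕ) (z : ℝ) : ℝ := min (m : ℝ) ((⌊z * 2^m⌋ : ℝ) / 2^m)

lemma Tgrid_measurable (m : ℕ) : Measurable (Tgrid m) := by
  refine Measurable.min measurable_const ?_
  exact ((measurable_of_countable (fun i : ℤ => (i:ℝ))).comp
    (Int.measurable_floor.comp (measurable_id.mul_const _))).div_const _

lemma Tgrid_le (m : ℕ) (z : ℝ) : Tgrid m z ≤ z := by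
  refine le_trans (min_le_right _ _) ?_
  rw [div_le_iff₀ (by positivity : (0:ℝ) < 2^m)]
  exact Int.floor_le _

lemma Tgrid_le_m (m : ℕ) (z : ℝ) : Tgrid m z ≤ (m:ℝ) := min_le_left _ _

lemma Tgrid_mono (z : ℝ) : Monotone (fun m => Tgrid m z) := by
  refine monotone_nat_of_le_succ fun m => ?_
  refine min_le_min (by exact_mod_cast Nat.le_succ m) ?_
  rw [div_le_div_iff₀ (by positivity : (0:ℝ) < 2^m) (by positivity : (0:ℝ) < 2^(m+1))]
  have h2 : ((2:ℝ)^(m+1)) = 2^m * 2 := by ring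
  have key : (2 * ⌊z * 2^m⌋ : ℤ) ≤ ⌊z * 2^(m+1)⌋ := by
    refine Int.le_floor.2 ?_
    push_cast
    have := Int.floor_le (z * 2^m)
    calc (2:ℝ) * ⌊z * 2^m⌋ ≤ 2 * (z * 2^m) := by linarith
      _ = z * 2^(m+1) := by ring
  calc (⌊z * 2^m⌋ : ℝ) * 2^(m+1) = (2 * ⌊z * 2^m⌋ : ℤ) * 2^m := by push_cast; ring
    _ ≤ (⌊z * 2^(m+1)⌋ : ℝ) * 2^m := by
        have : ((2 * ⌊z * 2^m⌋ : ℤ) : ℝ) ≤ (⌊z * 2^(m+1)⌋ : ℝ) := by exact_mod_cast key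
        nlinarith [pow_pos (by norm_num : (0:ℝ) < 2) m]

lemma Tgrid_tendsto (z : ℝ) : Tendsto (fun m => Tgrid m z) atTop (𝓝 z) := by
  have hlow : ∀ᶠ m in atTop, z - (1/2)^m ≤ Tgrid m z := by
    filter_upwards [eventually_ge_atTop (Nat.ceil |z|)] with m hm
    have hmz : z ≤ (m : ℝ) := by
      calc z ≤ |z| := le_abs_self z
        _ ≤ (Nat.ceil |z| : ℝ) := Nat.le_ceil _
        _ ≤ (m : ℝ) := by exact_mod_cast hm
    have hfl : z - (1/2)^m ≤ (⌊z * 2^m⌋ : ℝ) / 2^m := by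
      rw [le_div_iff₀ (by positivity : (0:ℝ) < 2^m)]
      have := Int.sub_one_lt_floor (z * 2^m)
      have hpow : ((1:ℝ)/2)^m * 2^m = 1 := by
        rw [← mul_pow]; norm_num
      nlinarith [Int.sub_one_lt_floor (z * 2^m)]
    rw [Tgrid, le_min_iff]
    constructor
    · have : (0:ℝ) < (1/2)^m := by positivity
      linarith
    · exact hfl
  have hhigh : ∀ᶠ m in atTop, Tgrid m z ≤ z := Eventually.of_forall (Tgrid_le · z)
  have h0 : Tendsto (fun m : ℕ => z - (1/2:ℝ)^m) atTop (𝓝 z) := by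
    have := tendsto_pow_atTop_nhds_zero_of_lt_one (by norm_num : (0:ℝ) ≤ 1/2)
      (by norm_num : (1/2:ℝ) < 1)
    simpa using tendsto_const_nhds.sub this
  exact tendsto_of_tendsto_of_tendsto_of_le_of_le' h0 tendsto_const_nhds hlow hhigh

/-- the finite grid of values of `Tgrid m` on nonnegative reals -/
def TgridSet (m : ℕ) : Finset ℝ :=
  insert ((m:ℝ)) ((Finset.range (m * 2^m + 1)).image fun i : ℕ => (i:ℝ)/2^m)

lemma Tgrid_mem (m : ℕ) {z : ℝ} (hz : 0 ≤ z) : Tgrid m z ∈ TgridSet m := by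
  rcases le_or_gt ((⌊z * 2^m⌋ : ℝ) / 2^m) (m : ℝ) with h | h
  · have heq : Tgrid m z = (⌊z * 2^m⌋ : ℝ) / 2^m := min_eq_right h
    have hj0 : 0 ≤ ⌊z * 2^m⌋ := Int.floor_nonneg.2 (by positivity)
    have hjm : ⌊z * 2^m⌋ ≤ (m * 2^m : ℕ) := by
      have : (⌊z * 2^m⌋ : ℝ) ≤ (m : ℝ) * 2^m := by
        rw [div_le_iff₀ (by positivity : (0:ℝ) < 2^m)] at h
        exact h
      exact_mod_cast this
    refine Finset.mem_insert_of_mem ?_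
    refine Finset.mem_image.2 ⟨⌊z * 2^m⌋.toNat, ?_, ?_⟩
    · rw [Finset.mem_range]
      omega
    · rw [heq]
      congr 1
      exact_mod_cast Int.toNat_of_nonneg hj0
  · have heq : Tgrid m z = (m : ℝ) := min_eq_left h.le
    rw [heq]
    exact Finset.mem_insert_self _ _

end KernelStep

section KeyEstimate

variable {M : MarkovMartingale Ω} {x : ℝ}

/-- the event `{τ_k ≤ n < τ_{k+1}} ∩ {S_n ≥ R}` -/
def Bev (M : MarkovMartingale Ω) (R : ℝ) (k n : ℕ) : Set Ω :=
  (ddLE M k n ∩ ddGT M (k+1) n) ∩ {ω | R ≤ M.S n ω}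

lemma measF_Bev (R : ℝ) (k n : ℕ) : MeasurableSet[M.F n] (Bev M R k n) :=
  ((measF_ddLE M k n).inter (measF_ddGT M (k+1) n)).inter
    (measurableSet_le measurable_const (adaptedS M n).measurable)

lemma meas_Bev (R : ℝ) (k n : ℕ) : MeasurableSet (Bev M R k n) :=
  M.F.le n _ (measF_Bev R k n)

lemma phi_meas (n m : ℕ) : Measurable (fun ω => Gker M (Tgrid m (M.S n ω)) (M.S n ω)) := by
  haveI := M.markov
  have h1 : Measurable (fun p : ℝ × ℝ => gcut (Tgrid m p.1) p.2) := by
    have : (fun p : ℝ × ℝ => gcut (Tgrid m p.1) p.2)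
        = fun p : ℝ × ℝ => if 0 ≤ p.2 ∧ p.2 < Tgrid m p.1 then p.2 else 0 := by
      funext p; rw [gcut]
    rw [this]
    refine Measurable.ite ?_ measurable_snd measurable_const
    exact (measurableSet_le measurable_const measurable_snd).inter
      (measurableSet_lt measurable_snd ((Tgrid_measurable m).comp measurable_fst))
  have h2 : StronglyMeasurable (fun z => ∫ y, gcut (Tgrid m z) y ∂(M.K z)) :=
    (h1.stronglyMeasurable).integral_kernel_prod_right' (κ := M.K)
  exact (h2.measurable).comp (measS M n)

lemma beta_meas (n : ℕ) : Measurable (fun ω => betaK M (M.S n ω)) := by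
  haveI := M.markov
  have h1 : Measurable (fun p : ℝ × ℝ => gcut p.1 p.2) := by
    have : (fun p : ℝ × ℝ => gcut p.1 p.2)
        = fun p : ℝ × ℝ => if 0 ≤ p.2 ∧ p.2 < p.1 then p.2 else 0 := by
      funext p; rw [gcut]
    rw [this]
    refine Measurable.ite ?_ measurable_snd measurable_const
    exact (measurableSet_le measurable_const measurable_snd).inter
      (measurableSet_lt measurable_snd measurable_fst)
  have h2 : StronglyMeasurable (fun z => ∫ y, gcut z y ∂(M.K z)) :=
    (h1.stronglyMeasurable).integral_kernel_prod_right' (κ := M.K)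
  exact (h2.measurable).comp (measS M n)

lemma phi_integrable (hx : 0 < x) (n m : ℕ) :
    Integrable (fun ω => Gker M (Tgrid m (M.S n ω)) (M.S n ω)) (M.P x) := by
  haveI := M.prob x hx
  refine Integrable.mono' (integrable_const (max (m : ℝ) 0))
    (phi_meas (M := M) n m).aestronglyMeasurable ?_
  refine Eventually.of_forall fun ω => ?_
  rw [Real.norm_eq_abs]
  refine le_trans (Gker_abs_le _ _) ?_
  exact max_le_max (Tgrid_le_m m _) (le_refl 0)

lemma key_estimate (hx : 0 < x) {R c : ℝ} (hR : 0 < R)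
    (hbR : ∀ z', R ≤ z' → c ≤ M.b z') (k n : ℕ) :
    c * ∫ ω in Bev M R k n, M.S n ω ∂(M.P x) ≤ dInt M x (k+1) (n+1) := by
  haveI := M.prob x hx
  haveI := M.markov
  set P := M.P x with hP
  set B := Bev M R k n with hBdef
  have hB : MeasurableSet B := meas_Bev R k n
  -- pieces of B according to the (finitely many) values of `Tgrid m (S n ω)`
  set s : ℕ → ℝ → Set Ω := fun m t => B ∩ {ω | Tgrid m (M.S n ω) = t} with hsdef
  have hPieceF : ∀ m t, MeasurableSet[M.F n] (s m t) := fun m t =>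
    (measF_Bev R k n).inter
      (((Tgrid_measurable m).comp (adaptedS M n).measurable) (measurableSet_singleton t))
  have hPiece : ∀ m t, MeasurableSet (s m t) := fun m t => M.F.le n _ (hPieceF m t)
  have hcover : ∀ m, B = ⋃ t ∈ TgridSet m, s m t := by
    intro m
    ext ω
    simp only [Set.mem_iUnion, hsdef, Set.mem_inter_iff, Set.mem_setOf_eq]
    constructor
    · intro hω
      have hz : (0:ℝ) ≤ M.S n ω := le_trans hR.le hω.2
      exact ⟨Tgrid m (M.S n ω), Tgrid_mem m hz, ⟨hω, rfl⟩⟩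
    · rintro ⟨t, -, hω, -⟩
      exact hω
  have hdisj : ∀ m, (↑(TgridSet m) : Set ℝ).Pairwise (Function.onFun Disjoint (s m)) := by
    intro m t1 _ t2 _ hne
    rw [Function.onFun, Set.disjoint_left]
    rintro ω ⟨-, h1⟩ ⟨-, h2⟩
    exact hne (h1.symm.trans h2)
  -- the indicator of the drawdown event
  set D : Ω → ℝ := (ddEQ M (k+1) (n+1)).indicator (M.S (n+1)) with hDdef
  have hDint : Integrable D P :=
    (integrable_indicator_iff (meas_ddEQ_succ M (k+1) n)).2 (intS hx (n+1)).integrableOn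
  have hDnonneg : 0 ≤ᵐ[P] D := by
    filter_upwards [M.pos x hx] with ω hpos
    exact Set.indicator_nonneg (fun ω' _ => (hpos (n+1)).le) ω
  -- Step A: for every m, the integral of φ_m over B is at most dInt
  have hm1 : ∀ m : ℕ, ∫ ω in B, Gker M (Tgrid m (M.S n ω)) (M.S n ω) ∂P
      ≤ dInt M x (k+1) (n+1) := by
    intro m
    have hsplit : ∫ ω in B, Gker M (Tgrid m (M.S n ω)) (M.S n ω) ∂P
        = ∑ t ∈ TgridSet m, ∫ ω in s m t, Gker M (Tgrid m (M.S n ω)) (M.S n ω) ∂P := by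
      rw [hcover m]
      exact integral_biUnion_finset _ (fun t _ => hPiece m t)
        ((hdisj m).mono (by simp)) (fun t _ => (phi_integrable hx n m).integrableOn)
    have hstepD : ∀ t ∈ TgridSet m, ∫ ω in s m t, Gker M (Tgrid m (M.S n ω)) (M.S n ω) ∂P
        ≤ ∫ ω in s m t, D ω ∂P := by
      intro t _
      have he1 : ∫ ω in s m t, Gker M (Tgrid m (M.S n ω)) (M.S n ω) ∂P
          = ∫ ω in s m t, (∫ y, gcut t y ∂(M.K (M.S n ω))) ∂P := by
        refine setIntegral_congr_fun (hPiece m t) fun ω hω => ?_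
        rw [Gker, hω.2]
      have he2 : ∫ ω in s m t, (∫ y, gcut t y ∂(M.K (M.S n ω))) ∂P
          = ∫ ω in s m t, gcut t (M.S (n+1) ω) ∂P :=
        (step_setIntegral hx n (gcut t) (gcut_measurable t) (max t 0) (gcut_abs_le t)
          (s m t) (hPieceF m t)).symm
      rw [he1, he2]
      refine setIntegral_mono_on_ae ?_ ?_ (hPiece m t) ?_
      · refine Integrable.integrableOn ?_
        refine Integrable.mono' (integrable_const (max t 0))
          ((gcut_measurable t).comp (measS M (n+1))).aestronglyMeasurable ?_
        exact Eventually.of_forall fun ω => by rw [Real.norm_eq_abs]; exact gcut_abs_le t _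
      · exact hDint.integrableOn
      · filter_upwards [M.pos x hx] with ω hpos hω
        obtain ⟨⟨⟨hLE, hGT⟩, hRS⟩, hT⟩ := hω
        by_cases hc : 0 ≤ M.S (n+1) ω ∧ M.S (n+1) ω < t
        · have hlt : M.S (n+1) ω < M.S n ω :=
            lt_of_lt_of_le hc.2 (hT ▸ Tgrid_le m (M.S n ω))
          have hmem : ω ∈ ddEQ M (k+1) (n+1) :=
            (drawdown_succ_eq_coe_succ_iff M.S k ω n).2 ⟨hLE, hGT, hlt⟩
          rw [hDdef, Set.indicator_of_mem hmem, gcut, if_pos hc]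
        · rw [gcut, if_neg hc, hDdef]
          exact Set.indicator_nonneg (fun ω' _ => (hpos (n+1)).le) ω
    have hsum2 : ∑ t ∈ TgridSet m, ∫ ω in s m t, D ω ∂P = ∫ ω in B, D ω ∂P := by
      rw [hcover m]
      exact (integral_biUnion_finset _ (fun t _ => hPiece m t)
        ((hdisj m).mono (by simp)) (fun t _ => hDint.integrableOn)).symm
    have hlast : ∫ ω in B, D ω ∂P ≤ dInt M x (k+1) (n+1) := by
      have h1 : ∫ ω in B, D ω ∂P ≤ ∫ ω, D ω ∂P := setIntegral_le_integral hDint hDnonneg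
      have h2 : ∫ ω, D ω ∂P = dInt M x (k+1) (n+1) := by
        rw [hDdef]
        exact integral_indicator (meas_ddEQ_succ M (k+1) n)
      exact h2 ▸ h1
    calc ∫ ω in B, Gker M (Tgrid m (M.S n ω)) (M.S n ω) ∂P
        = ∑ t ∈ TgridSet m, ∫ ω in s m t, Gker M (Tgrid m (M.S n ω)) (M.S n ω) ∂P := hsplit
      _ ≤ ∑ t ∈ TgridSet m, ∫ ω in s m t, D ω ∂P := Finset.sum_le_sum hstepD
      _ = ∫ ω in B, D ω ∂P := hsum2
      _ ≤ dInt M x (k+1) (n+1) := hlast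
  -- Step B: monotone convergence in m
  have hbetaInt : Integrable (fun ω => betaK M (M.S n ω)) (P.restrict B) := by
    refine Integrable.mono' ((intS hx n).restrict (s := B))
      ((beta_meas (M := M) n).aestronglyMeasurable.restrict) ?_
    rw [ae_restrict_iff' hB]
    refine Eventually.of_forall fun ω hω => ?_
    have hz : 0 < M.S n ω := lt_of_lt_of_le hR hω.2
    rw [Real.norm_eq_abs, abs_of_nonneg (betaK_nonneg (M := M) _)]
    exact betaK_le _ hz
  have hm2 : Tendsto (fun m => ∫ ω in B, Gker M (Tgrid m (M.S n ω)) (M.S n ω) ∂P) atTop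
      (𝓝 (∫ ω in B, betaK M (M.S n ω) ∂P)) := by
    refine integral_tendsto_of_tendsto_of_monotone
      (fun m => (phi_integrable hx n m).restrict) hbetaInt ?_ ?_
    · rw [ae_restrict_iff' hB]
      refine Eventually.of_forall fun ω hω => ?_
      exact fun m m' hmm' => Gker_mono (M := M) (M.S n ω) (Tgrid_mono (M.S n ω) hmm')
    · rw [ae_restrict_iff' hB]
      refine Eventually.of_forall fun ω hω => ?_
      have hz : 0 < M.S n ω := lt_of_lt_of_le hR hω.2
      refine integral_tendsto_of_tendsto_of_monotone
        (fun m => gcut_integrable (M := M) _ _) (gcut_integrable (M := M) _ _) ?_ ?_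
      · refine Eventually.of_forall fun y => ?_
        exact fun m m' hmm' => gcut_mono y (Tgrid_mono (M.S n ω) hmm')
      · refine Eventually.of_forall fun y => ?_
        by_cases hy : 0 ≤ y ∧ y < M.S n ω
        · have hev : ∀ᶠ m in atTop, gcut (Tgrid m (M.S n ω)) y = y := by
            filter_upwards [(Tgrid_tendsto (M.S n ω)).eventually
              (eventually_gt_nhds hy.2)] with m hm
            rw [gcut, if_pos ⟨hy.1, hm⟩]
          rw [gcut, if_pos hy]
          exact tendsto_const_nhds.congr' (hev.mono fun m hm => hm.symm)
        · have hev : ∀ m, gcut (Tgrid m (M.S n ω)) y = 0 := by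
            intro m
            rw [gcut, if_neg ?_]
            rintro ⟨hy1, hy2⟩
            exact hy ⟨hy1, lt_of_lt_of_le hy2 (Tgrid_le m _)⟩
          rw [gcut, if_neg hy]
          simp only [hev]
          exact tendsto_const_nhds
  -- Step C: lower bound on the β-integral
  have hlow : c * ∫ ω in B, M.S n ω ∂P ≤ ∫ ω in B, betaK M (M.S n ω) ∂P := by
    rw [← integral_const_mul]
    refine setIntegral_mono_on ((intS hx n).restrict.const_mul c) hbetaInt hB ?_
    intro ω hω
    exact betaK_ge (M := M) (M.S n ω) hR hbR hω.2
  exact le_trans hlow (le_of_tendsto hm2 (Eventually.of_forall hm1))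

end KeyEstimate

section Assembly

variable {M : MarkovMartingale Ω} {x : ℝ}

def eset (M : MarkovMartingale Ω) (R : ℝ) (k n : ℕ) : Set Ω :=
  ddGT M k n ∩ {ω | R ≤ M.S n ω}

lemma meas_eset (R : ℝ) (k n : ℕ) : MeasurableSet (eset M R k n) :=
  (meas_ddGT M k n).inter (measurableSet_le measurable_const (measS M n))

lemma Hprime (hx : 0 < x) {R c : ℝ} (hR : 0 < R) (hc : 0 < c)
    (hbR : ∀ z', R ≤ z' → c ≤ M.b z') :
    ∀ k, Tendsto (fun n => ∫ ω in eset M R k n, M.S n ω ∂(M.P x)) atTop (𝓝 0) := by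
  intro k
  induction k with
  | zero =>
    have h0 : ∀ n, ∫ ω in eset M R 0 n, M.S n ω ∂(M.P x) = 0 := by
      intro n
      have hempty : eset M R 0 n = ∅ := by
        ext ω
        simp [eset, ddGT, drawdown]
      rw [hempty]
      simp
    simp only [h0]
    exact tendsto_const_nhds
  | succ k ih =>
    have hsplit : ∀ n, ∫ ω in eset M R (k+1) n, M.S n ω ∂(M.P x)
        = (∫ ω in Bev M R k n, M.S n ω ∂(M.P x)) + ∫ ω in eset M R k n, M.S n ω ∂(M.P x) := by
      intro n
      have hset : eset M R (k+1) n = Bev M R k n ∪ eset M R k n := by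
        ext ω
        rw [Set.mem_union]
        constructor
        · rintro ⟨hgt, hRS⟩
          rcases le_or_gt (drawdown M.S k ω) (n : ℕ∞) with h | h
          · exact Or.inl ⟨⟨h, hgt⟩, hRS⟩
          · exact Or.inr ⟨h, hRS⟩
        · rintro (⟨⟨-, hgt⟩, hRS⟩ | ⟨hgt, hRS⟩)
          · exact ⟨hgt, hRS⟩
          · refine ⟨?_, hRS⟩
            have hgt' : (n : ℕ∞) < drawdown M.S k ω := hgt
            exact lt_of_lt_of_le hgt' (drawdown_le_succ M.S k ω)
      have hdisjBE : Disjoint (Bev M R k n) (eset M R k n) := by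
        rw [Set.disjoint_left]
        rintro ω ⟨⟨hle, -⟩, -⟩ ⟨hgt, -⟩
        have hle' : drawdown M.S k ω ≤ (n : ℕ∞) := hle
        have hgt' : (n : ℕ∞) < drawdown M.S k ω := hgt
        exact absurd hle' (not_le.2 hgt')
      rw [hset, setIntegral_union hdisjBE (meas_eset R k n)
        (intS hx n).integrableOn (intS hx n).integrableOn]
    have hBev0 : Tendsto (fun n => ∫ ω in Bev M R k n, M.S n ω ∂(M.P x)) atTop (𝓝 0) := by
      have hub : ∀ n, ∫ ω in Bev M R k n, M.S n ω ∂(M.P x) ≤ dInt M x (k+1) (n+1) / c := by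
        intro n
        rw [le_div_iff₀ hc, mul_comm]
        exact key_estimate hx hR hbR k n
      have hlb : ∀ n, 0 ≤ ∫ ω in Bev M R k n, M.S n ω ∂(M.P x) := fun n =>
        setIntegral_nonneg_ae (meas_Bev R k n) ((M.pos x hx).mono fun ω h _ => (h n).le)
      have hdc : Tendsto (fun n => dInt M x (k+1) (n+1) / c) atTop (𝓝 0) := by
        simpa using (d_tendsto hx k).div_const c
      exact squeeze_zero hlb hub hdc
    have hfin := hBev0.add ih
    rw [add_zero] at hfin
    exact hfin.congr fun n => (hsplit n).symm

lemma main_bound (hx : 0 < x) (hbhyp : ∃ c > (0 : ℝ), ∀ᶠ z in atTop, c ≤ M.b z) (k : ℕ) :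
    x ≤ ∫ ω, evalAt M.S M.Sinf (drawdown M.S (k+1)) ω ∂(M.P x) := by
  haveI := M.prob x hx
  obtain ⟨c, hc, hcb⟩ := hbhyp
  obtain ⟨R₀, hR₀⟩ := eventually_atTop.1 hcb
  set R := max R₀ 1 with hRdef
  have hR : 0 < R := lt_of_lt_of_le one_pos (le_max_right _ _)
  have hbR : ∀ z', R ≤ z' → c ≤ M.b z' := fun z' hz' =>
    hR₀ z' (le_trans (le_max_left _ _) hz')
  set W := ∫ ω in (ddTop M (k+1))ᶜ, evalAt M.S M.Sinf (drawdown M.S (k+1)) ω ∂(M.P x) with hWdef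
  set Z := ∫ ω in ddTop M (k+1), evalAt M.S M.Sinf (drawdown M.S (k+1)) ω ∂(M.P x) with hZdef
  set A : ℕ → Set Ω := fun n => ddGT M (k+1) n ∩ {ω | M.S n ω < R} with hAdef
  have hA : ∀ n, MeasurableSet (A n) := fun n =>
    (meas_ddGT M (k+1) n).inter (measurableSet_lt (measS M n) measurable_const)
  set v : ℕ → ℝ := fun n => ∫ ω in A n, M.S n ω ∂(M.P x) with hvdef
  have hu_split : ∀ n, uInt M x (k+1) n
      = (∫ ω in eset M R (k+1) n, M.S n ω ∂(M.P x)) + v n := by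
    intro n
    have hset : ddGT M (k+1) n = eset M R (k+1) n ∪ A n := by
      ext ω
      simp only [eset, hAdef, Set.mem_inter_iff, Set.mem_union, Set.mem_setOf_eq]
      constructor
      · intro hgt
        rcases le_or_gt R (M.S n ω) with h | h
        · exact Or.inl ⟨hgt, h⟩
        · exact Or.inr ⟨hgt, h⟩
      · rintro (⟨hgt, -⟩ | ⟨hgt, -⟩) <;> exact hgt
    have hdisj : Disjoint (eset M R (k+1) n) (A n) := by
      rw [Set.disjoint_left]
      rintro ω ⟨-, hge⟩ ⟨-, hlt⟩
      have hge' : R ≤ M.S n ω := hge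
      have hlt' : M.S n ω < R := hlt
      exact absurd hge' (not_le.2 hlt')
    rw [uInt, hset, setIntegral_union hdisj (hA n)
      (intS hx n).integrableOn (intS hx n).integrableOn]
  have he0 := Hprime (M := M) hx hR hc hbR (k+1)
  have hv_tendsto : Tendsto v atTop (𝓝 (x - W)) := by
    have h1 : ∀ n, v n = x - wInt M x (k+1) n
        - ∫ ω in eset M R (k+1) n, M.S n ω ∂(M.P x) := by
      intro n
      have h2 := w_add_u (M := M) hx k n
      have h3 := hu_split n
      linarith
    have h4 : Tendsto (fun n => x - wInt M x (k+1) n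
        - ∫ ω in eset M R (k+1) n, M.S n ω ∂(M.P x)) atTop (𝓝 (x - W - 0)) :=
      (tendsto_const_nhds.sub (w_tendsto hx k)).sub he0
    rw [sub_zero] at h4
    exact h4.congr fun n => (h1 n).symm
  -- reverse Fatou argument
  have hvnn : ∀ n, Integrable ((A n).indicator (M.S n)) (M.P x) := fun n =>
    (integrable_indicator_iff (hA n)).2 (intS hx n).integrableOn
  have hnnA : ∀ n, 0 ≤ᵐ[M.P x] (A n).indicator (M.S n) := by
    intro n
    filter_upwards [M.pos x hx] with ω hpos
    exact Set.indicator_nonneg (fun ω' _ => (hpos n).le) ω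
  have hfatou : x - W ≤ Z := by
    have hfmeas : ∀ n, Measurable (fun ω => ENNReal.ofReal ((A n).indicator (M.S n) ω)) :=
      fun n => ((measS M n).indicator (hA n)).ennreal_ofReal
    have hbound : ∀ n, (fun ω => ENNReal.ofReal ((A n).indicator (M.S n) ω))
        ≤ᵐ[M.P x] fun _ => ENNReal.ofReal R := by
      intro n
      refine Eventually.of_forall fun ω => ?_
      show ENNReal.ofReal ((A n).indicator (M.S n) ω) ≤ ENNReal.ofReal R
      by_cases hω : ω ∈ A n
      · rw [Set.indicator_of_mem hω]
        have hlt' : M.S n ω < R := hω.2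
        exact ENNReal.ofReal_le_ofReal hlt'.le
      · rw [Set.indicator_of_notMem hω]
        simp
    have hfin : ∫⁻ _ω, ENNReal.ofReal R ∂(M.P x) ≠ ⊤ := by
      rw [lintegral_const, measure_univ, mul_one]
      exact ENNReal.ofReal_ne_top
    have hrev := limsup_lintegral_le (fun _ => ENNReal.ofReal R) hfmeas hbound hfin
    have hlhs : ∀ n, ∫⁻ ω, ENNReal.ofReal ((A n).indicator (M.S n) ω) ∂(M.P x)
        = ENNReal.ofReal (v n) := by
      intro n
      rw [← ofReal_integral_eq_lintegral_ofReal (hvnn n) (hnnA n), hvdef]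
      congr 1
      exact integral_indicator (hA n)
    have hlimsup1 : limsup (fun n => ∫⁻ ω, ENNReal.ofReal ((A n).indicator (M.S n) ω) ∂(M.P x))
        atTop = ENNReal.ofReal (x - W) := by
      have : Tendsto (fun n => ∫⁻ ω, ENNReal.ofReal ((A n).indicator (M.S n) ω) ∂(M.P x))
          atTop (𝓝 (ENNReal.ofReal (x - W))) := by
        simp only [hlhs]
        exact (ENNReal.continuous_ofReal.tendsto _).comp hv_tendsto
      exact this.limsup_eq
    have hrhs : ∫⁻ ω, limsup (fun n => ENNReal.ofReal ((A n).indicator (M.S n) ω)) atTop ∂(M.P x)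
        ≤ ∫⁻ ω, ENNReal.ofReal ((ddTop M (k+1)).indicator
            (evalAt M.S M.Sinf (drawdown M.S (k+1))) ω) ∂(M.P x) := by
      refine lintegral_mono_ae ?_
      filter_upwards [M.pos x hx, M.conv x hx] with ω hpos hconv
      cases hdd : drawdown M.S (k+1) ω with
      | coe m =>
        have hev0 : ∀ᶠ n in atTop,
            ENNReal.ofReal ((A n).indicator (M.S n) ω) = 0 := by
          filter_upwards [eventually_ge_atTop m] with n hn
          have hnot : ω ∉ A n := by
            rintro ⟨hgt, -⟩
            simp only [ddGT, Set.mem_setOf_eq, hdd] at hgt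
            exact absurd hgt (by exact_mod_cast not_lt.2 hn)
          rw [Set.indicator_of_notMem hnot]
          simp
        have hls : limsup (fun n => ENNReal.ofReal ((A n).indicator (M.S n) ω)) atTop = 0 :=
          (tendsto_const_nhds.congr' (hev0.mono fun n h => h.symm)).limsup_eq
        rw [hls]
        exact zero_le
      | top =>
        have hle : ∀ n, ENNReal.ofReal ((A n).indicator (M.S n) ω)
            ≤ ENNReal.ofReal (M.S n ω) := by
          intro n
          by_cases hω : ω ∈ A n
          · rw [Set.indicator_of_mem hω]
          · rw [Set.indicator_of_notMem hω]
            simp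
        have h2 : Tendsto (fun n => ENNReal.ofReal (M.S n ω)) atTop
            (𝓝 (ENNReal.ofReal (M.Sinf ω))) :=
          (ENNReal.continuous_ofReal.tendsto _).comp hconv
        have h1 : limsup (fun n => ENNReal.ofReal ((A n).indicator (M.S n) ω)) atTop
            ≤ ENNReal.ofReal (M.Sinf ω) := by
          calc limsup (fun n => ENNReal.ofReal ((A n).indicator (M.S n) ω)) atTop
              ≤ limsup (fun n => ENNReal.ofReal (M.S n ω)) atTop :=
                limsup_le_limsup (Eventually.of_forall hle)
            _ = ENNReal.ofReal (M.Sinf ω) := h2.limsup_eq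
        refine le_trans h1 ?_
        have hmem : ω ∈ ddTop M (k+1) := hdd
        rw [Set.indicator_of_mem hmem, evalAt, if_pos hdd]
    have hZeq : ∫⁻ ω, ENNReal.ofReal ((ddTop M (k+1)).indicator
        (evalAt M.S M.Sinf (drawdown M.S (k+1))) ω) ∂(M.P x) = ENNReal.ofReal Z := by
      have hint2 : Integrable ((ddTop M (k+1)).indicator
          (evalAt M.S M.Sinf (drawdown M.S (k+1)))) (M.P x) :=
        (integrable_indicator_iff (meas_ddTop M (k+1))).2 (evalAt_integrable hx k).integrableOn
      have hnn2 : 0 ≤ᵐ[M.P x] (ddTop M (k+1)).indicator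
          (evalAt M.S M.Sinf (drawdown M.S (k+1))) := by
        filter_upwards [evalAt_nonneg hx k] with ω h
        by_cases hω : ω ∈ ddTop M (k+1)
        · rw [Pi.zero_apply, Set.indicator_of_mem hω]
          exact h
        · rw [Pi.zero_apply, Set.indicator_of_notMem hω]
      rw [← ofReal_integral_eq_lintegral_ofReal hint2 hnn2, hZdef]
      congr 1
      exact integral_indicator (meas_ddTop M (k+1))
    have hfinal : ENNReal.ofReal (x - W) ≤ ENNReal.ofReal Z := by
      rw [← hlimsup1, ← hZeq]
      exact le_trans hrev hrhs
    have hZ0 : 0 ≤ Z := by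
      rw [hZdef]
      exact setIntegral_nonneg_ae (meas_ddTop M (k+1))
        ((evalAt_nonneg hx k).mono fun ω h _ => h)
    exact (ENNReal.ofReal_le_ofReal_iff hZ0).1 hfinal
  have hWZ : Z + W = ∫ ω, evalAt M.S M.Sinf (drawdown M.S (k+1)) ω ∂(M.P x) :=
    integral_add_compl (meas_ddTop M (k+1)) (evalAt_integrable hx k)
  linarith

end Assembly

end NotBubble

end Main

/-- If `liminf_{x→∞} b(x) > 0`, then `S` is not a bubble under `P_x` for any
starting point `x > 0`. -/
theorem MarkovMartingale.not_bubble_of_liminf_b_pos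
    {Ω : Type*} [MeasurableSpace Ω] (M : MarkovMartingale Ω)
    (hb : ∃ c > (0 : ℝ), ∀ᶠ x in atTop, c ≤ M.b x) :
    ∀ x : ℝ, 0 < x → ¬ M.Bubble x := by
  intro x hx hbub
  haveI := M.prob x hx
  obtain ⟨k, hk⟩ := hbub
  have h0 : ∫ ω, M.S 0 ω ∂(M.P x) = x := by
    calc ∫ ω, M.S 0 ω ∂(M.P x) = ∫ _ω, x ∂(M.P x) :=
          MeasureTheory.integral_congr_ae ((M.start x hx).mono fun ω h => h)
      _ = x := by simp
  have hmain := NotBubble.main_bound (M := M) hx hb k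
  rw [h0] at hk
  linarith
end

section
/- Let S be a positive Markov martingale with kernel K, and define the default function M_S(x) := lim_{n→∞} E_x[(S_n − S_∞) 1_{{S_n ≥ S_{n-1} ≥ ⋯ ≥ S_1 ≥ x}}]. Then M_S solves the homogeneous Volterra integral equation M_S(x) = ∫_{[x,∞)} M_S(y) K(x,dy) for all x > 0. -/
open MeasureTheory Filter Set

noncomputable section
namespace MarkovMartingale

open scoped ENNReal Classical

variable {Ω : Type*} [m0 : MeasurableSpace Ω] (M : MarkovMartingale Ω)

/-- The first drawdown time. -/
def tau1 : Ω → ℕ∞ := drawdown M.S 1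

/-- The value at the first drawdown. -/
def Xlim : Ω → ℝ := evalAt M.S M.Sinf M.tau1

/-- The event of no drawdown up to time `n`. -/
def monoE (n : ℕ) : Set Ω := monoEvent M.S 0 n

/-- The stopped process. -/
def stp (n : ℕ) : Ω → ℝ := stoppedAt M.S M.tau1 n

lemma measurable_S (n : ℕ) : Measurable (M.S n) :=
  (((M.mart 1 one_pos).stronglyAdapted n).mono (M.F.le n)).measurable

lemma tau1_apply (ω : Ω) : M.tau1 ω
    = sInf {j : ℕ∞ | 0 < j ∧ ∃ n : ℕ, j = (n : ℕ∞) ∧ M.S n ω < M.S (n - 1) ω} := by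
  simp [tau1, drawdown]

lemma monoE_zero : M.monoE 0 = Set.univ := by
  ext ω; simp [monoE, monoEvent]

lemma monoE_succ (n : ℕ) :
    M.monoE (n + 1) = M.monoE n ∩ {ω | M.S n ω ≤ M.S (n + 1) ω} := by
  ext ω
  simp only [monoE, monoEvent, Set.mem_setOf_eq, Set.mem_inter_iff]
  constructor
  · intro h
    exact ⟨fun j _ hj => h j (Nat.zero_le _) (hj.trans (Nat.lt_succ_self n)),
      h n (Nat.zero_le _) (Nat.lt_succ_self n)⟩
  · rintro ⟨h1, h2⟩ j _ hj
    rcases Nat.lt_succ_iff_lt_or_eq.mp hj with h | rfl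
    · exact h1 j (Nat.zero_le _) h
    · exact h2

lemma measurableSet_monoE_F (n : ℕ) : MeasurableSet[M.F n] (M.monoE n) := by
  have : M.monoE n = ⋂ (j : ℕ) (_ : j < n), {ω | M.S j ω ≤ M.S (j + 1) ω} := by
    ext ω; simp [monoE, monoEvent]
  rw [this]
  refine MeasurableSet.iInter fun j => MeasurableSet.iInter fun hj => ?_
  have h1 : StronglyMeasurable[M.F n] (M.S j) :=
    ((M.mart 1 one_pos).stronglyAdapted j).mono (M.F.mono hj.le)
  have h2 : StronglyMeasurable[M.F n] (M.S (j + 1)) :=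
    ((M.mart 1 one_pos).stronglyAdapted (j + 1)).mono (M.F.mono hj)
  exact measurableSet_le h1.measurable h2.measurable

lemma measurableSet_monoE (n : ℕ) : MeasurableSet (M.monoE n) :=
  M.F.le n _ (M.measurableSet_monoE_F n)

lemma lt_tau1_iff (n : ℕ) (ω : Ω) : (n : ℕ∞) < M.tau1 ω ↔ ω ∈ M.monoE n := by
  rw [tau1_apply]
  constructor
  · intro h j _ hj
    by_contra hlt
    push_neg at hlt
    have hmem : ((j + 1 : ℕ) : ℕ∞) ∈
        {i : ℕ∞ | 0 < i ∧ ∃ m : ℕ, i = (m : ℕ∞) ∧ M.S m ω < M.S (m - 1) ω} :=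
      ⟨by exact_mod_cast Nat.succ_pos j, ⟨j + 1, rfl, by simpa using hlt⟩⟩
    have h2 : (n : ℕ∞) < ((j + 1 : ℕ) : ℕ∞) := lt_of_lt_of_le h (sInf_le hmem)
    have h3 : n < j + 1 := by exact_mod_cast h2
    omega
  · intro hmono
    refine lt_of_lt_of_le
      (show (n : ℕ∞) < ((n + 1 : ℕ) : ℕ∞) by exact_mod_cast Nat.lt_succ_self n)
      (le_sInf ?_)
    rintro b ⟨hb0, k, rfl, hk⟩
    have hk0 : 0 < k := by exact_mod_cast hb0
    have : n + 1 ≤ k := by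
      by_contra hc
      push_neg at hc
      have h1 : k - 1 < n := by omega
      have := hmono (k - 1) (Nat.zero_le _) h1
      rw [Nat.sub_add_cancel hk0] at this
      exact absurd hk (not_lt.mpr this)
    exact_mod_cast this

lemma stp_of_le {n : ℕ} {ω : Ω} (h : (n : ℕ∞) ≤ M.tau1 ω) : M.stp n ω = M.S n ω := by
  unfold stp stoppedAt
  rw [min_eq_left h]
  simp

lemma stp_zero (ω : Ω) : M.stp 0 ω = M.S 0 ω :=
  M.stp_of_le (by simp)

lemma stp_succ (n : ℕ) (ω : Ω) :
    M.stp (n + 1) ω = if ω ∈ M.monoE n then M.S (n + 1) ω else M.stp n ω := by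
  by_cases h : ω ∈ M.monoE n
  · rw [if_pos h]
    have hlt : (n : ℕ∞) < M.tau1 ω := (M.lt_tau1_iff n ω).mpr h
    have : ((n + 1 : ℕ) : ℕ∞) ≤ M.tau1 ω := by
      have := ENat.add_one_le_iff (show (n : ℕ∞) ≠ ⊤ by simp) |>.mpr hlt
      simpa using this
    exact M.stp_of_le this
  · rw [if_neg h]
    have hle : M.tau1 ω ≤ (n : ℕ∞) := not_lt.mp (fun hc => h ((M.lt_tau1_iff n ω).mp hc))
    unfold stp stoppedAt
    rw [min_eq_right hle, min_eq_right (hle.trans (by exact_mod_cast Nat.le_succ n))]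

lemma stp_of_mem {n : ℕ} {ω : Ω} (h : ω ∈ M.monoE n) : M.stp n ω = M.S n ω :=
  M.stp_of_le (le_of_lt ((M.lt_tau1_iff n ω).mpr h))

lemma measurable_stp (n : ℕ) : Measurable (M.stp n) := by
  induction n with
  | zero => simpa [funext (M.stp_zero)] using M.measurable_S 0
  | succ n ih =>
      have : M.stp (n + 1) = fun ω =>
          if ω ∈ M.monoE n then M.S (n + 1) ω else M.stp n ω := funext (M.stp_succ n)
      rw [this]
      exact Measurable.ite (M.measurableSet_monoE n) (M.measurable_S (n + 1)) ih

lemma tendsto_stp {ω : Ω} (hconv : Tendsto (fun n => M.S n ω) atTop (nhds (M.Sinf ω))) :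
    Tendsto (fun n => M.stp n ω) atTop (nhds (M.Xlim ω)) := by
  by_cases htop : M.tau1 ω = ⊤
  · have hX : M.Xlim ω = M.Sinf ω := by rw [Xlim, evalAt, if_pos htop]
    have hs : ∀ n, M.stp n ω = M.S n ω := fun n => M.stp_of_le (htop ▸ le_top)
    rw [hX]
    simpa [funext hs] using hconv
  · set k := (M.tau1 ω).toNat with hkdef
    have hk : M.tau1 ω = (k : ℕ∞) := (ENat.coe_toNat htop).symm
    have hX : M.Xlim ω = M.S k ω := by rw [Xlim, evalAt, if_neg htop]
    rw [hX]
    apply tendsto_atTop_of_eventually_const (i₀ := k)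
    intro n hn
    unfold stp stoppedAt
    rw [hk, min_eq_right (by exact_mod_cast hn)]
    simp


lemma integrable_bdd {y : ℝ} (hy : 0 < y) {f : Ω → ℝ}
    (hf : AEStronglyMeasurable f (M.P y)) {C : ℝ}
    (hC : ∀ᵐ ω ∂M.P y, |f ω| ≤ C) : Integrable f (M.P y) := by
  haveI := M.prob y hy
  exact ⟨hf, HasFiniteIntegral.of_bounded (by simpa [Real.norm_eq_abs] using hC)⟩

lemma integrable_stp {y : ℝ} (hy : 0 < y) (n : ℕ) : Integrable (M.stp n) (M.P y) := by
  induction n with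
  | zero => simpa [funext M.stp_zero] using (M.mart y hy).integrable 0
  | succ n ih =>
      have h1 : M.stp (n + 1) = fun ω =>
          if ω ∈ M.monoE n then M.S (n + 1) ω else M.stp n ω := funext (M.stp_succ n)
      have h2 : (fun ω => if ω ∈ M.monoE n then M.S (n + 1) ω else M.stp n ω)
          = (M.monoE n).indicator (M.S (n + 1)) + (M.monoE n)ᶜ.indicator (M.stp n) := by
        ext ω; by_cases h : ω ∈ M.monoE n <;> simp [Set.indicator_apply, h]
      rw [h1, h2]
      exact (((M.mart y hy).integrable (n + 1)).indicator (M.measurableSet_monoE n)).add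
        (ih.indicator (M.measurableSet_monoE n).compl)

lemma setIntegral_martingale_step {y : ℝ} (hy : 0 < y) (n : ℕ) :
    ∫ ω in M.monoE n, M.S (n + 1) ω ∂M.P y = ∫ ω in M.monoE n, M.S n ω ∂M.P y := by
  haveI := M.prob y hy
  have hmg := (M.mart y hy).condExp_ae_eq (Nat.le_succ n)
  have h := setIntegral_condExp (M.F.le n) ((M.mart y hy).integrable (n + 1))
    (M.measurableSet_monoE_F n)
  calc ∫ ω in M.monoE n, M.S (n + 1) ω ∂M.P y
      = ∫ ω in M.monoE n, ((M.P y)[M.S (n + 1)|M.F n]) ω ∂M.P y := h.symm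
    _ = ∫ ω in M.monoE n, M.S n ω ∂M.P y :=
        setIntegral_congr_ae (M.measurableSet_monoE n) (hmg.mono fun ω h _ => h)

lemma integral_stp {y : ℝ} (hy : 0 < y) (n : ℕ) : ∫ ω, M.stp n ω ∂M.P y = y := by
  haveI := M.prob y hy
  induction n with
  | zero =>
      calc ∫ ω, M.stp 0 ω ∂M.P y = ∫ ω, M.S 0 ω ∂M.P y := by
            simp [funext M.stp_zero]
        _ = ∫ _ω, y ∂M.P y := integral_congr_ae ((M.start y hy).mono fun ω h => h)
        _ = y := by simp
  | succ n ih =>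
      have hdec : ∀ ω, M.stp (n + 1) ω
          = M.stp n ω + (M.monoE n).indicator (fun ω => M.S (n + 1) ω - M.S n ω) ω := by
        intro ω
        rw [M.stp_succ n ω]
        by_cases h : ω ∈ M.monoE n
        · simp [h, Set.indicator_apply, M.stp_of_mem h]
        · simp [h, Set.indicator_apply]
      have hint : Integrable ((M.monoE n).indicator (fun ω => M.S (n + 1) ω - M.S n ω)) (M.P y) :=
        (((M.mart y hy).integrable (n + 1)).sub ((M.mart y hy).integrable n)).indicator
          (M.measurableSet_monoE n)
      rw [integral_congr_ae (Eventually.of_forall hdec),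
        integral_add (M.integrable_stp hy n) hint, ih,
        integral_indicator (M.measurableSet_monoE n),
        integral_sub (((M.mart y hy).integrable (n + 1)).integrableOn)
          (((M.mart y hy).integrable n).integrableOn),
        M.setIntegral_martingale_step hy n]
      ring

lemma ae_tendsto_stp {y : ℝ} (hy : 0 < y) :
    ∀ᵐ ω ∂M.P y, Tendsto (fun n => M.stp n ω) atTop (nhds (M.Xlim ω)) := by
  filter_upwards [M.conv y hy] with ω h
  exact M.tendsto_stp h

lemma ae_stp_pos {y : ℝ} (hy : 0 < y) : ∀ᵐ ω ∂M.P y, ∀ n, 0 < M.stp n ω := by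
  filter_upwards [M.pos y hy] with ω h n
  exact h _

lemma ae_Xlim_nonneg {y : ℝ} (hy : 0 < y) : ∀ᵐ ω ∂M.P y, 0 ≤ M.Xlim ω := by
  filter_upwards [M.ae_tendsto_stp hy, M.ae_stp_pos hy] with ω h hpos
  exact le_of_tendsto_of_tendsto tendsto_const_nhds h
    (Eventually.of_forall fun n => (hpos n).le)

lemma aestronglyMeasurable_Xlim {y : ℝ} (hy : 0 < y) :
    AEStronglyMeasurable M.Xlim (M.P y) :=
  aestronglyMeasurable_of_tendsto_ae atTop
    (fun n => (M.measurable_stp n).aestronglyMeasurable) (M.ae_tendsto_stp hy)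

lemma lintegral_Xlim_le {y : ℝ} (hy : 0 < y) :
    ∫⁻ ω, ENNReal.ofReal (M.Xlim ω) ∂M.P y ≤ ENNReal.ofReal y := by
  haveI := M.prob y hy
  have hcong : ∫⁻ ω, ENNReal.ofReal (M.Xlim ω) ∂M.P y
      = ∫⁻ ω, Filter.liminf (fun n => ENNReal.ofReal (M.stp n ω)) atTop ∂M.P y := by
    refine lintegral_congr_ae ?_
    filter_upwards [M.ae_tendsto_stp hy] with ω h
    exact (((ENNReal.continuous_ofReal.tendsto _).comp h).liminf_eq).symm
  rw [hcong]
  refine le_trans (lintegral_liminf_le fun n =>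
    (M.measurable_stp n).ennreal_ofReal) ?_
  have heq : ∀ n, ∫⁻ ω, ENNReal.ofReal (M.stp n ω) ∂M.P y = ENNReal.ofReal y := by
    intro n
    rw [← ofReal_integral_eq_lintegral_ofReal (M.integrable_stp hy n)
      ((M.ae_stp_pos hy).mono fun ω h => (h n).le), M.integral_stp hy n]
  simp only [heq]
  simp

lemma integrable_Xlim {y : ℝ} (hy : 0 < y) : Integrable M.Xlim (M.P y) := by
  refine ⟨M.aestronglyMeasurable_Xlim hy, ?_⟩
  rw [hasFiniteIntegral_iff_norm]
  have : ∫⁻ ω, ENNReal.ofReal ‖M.Xlim ω‖ ∂M.P y = ∫⁻ ω, ENNReal.ofReal (M.Xlim ω) ∂M.P y := by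
    refine lintegral_congr_ae ?_
    filter_upwards [M.ae_Xlim_nonneg hy] with ω h
    rw [Real.norm_eq_abs, abs_of_nonneg h]
  rw [this]
  exact lt_of_le_of_lt (M.lintegral_Xlim_le hy) ENNReal.ofReal_lt_top

/-- The expected value at the first drawdown, as a function of the starting point. -/
def Ffn (y : ℝ) : ℝ := ∫ ω, M.Xlim ω ∂M.P y

lemma Ffn_nonneg {y : ℝ} (hy : 0 < y) : 0 ≤ M.Ffn y :=
  integral_nonneg_of_ae (M.ae_Xlim_nonneg hy)

lemma Ffn_le {y : ℝ} (hy : 0 < y) : M.Ffn y ≤ y := by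
  haveI := M.prob y hy
  have h1 : M.Ffn y = (∫⁻ ω, ENNReal.ofReal (M.Xlim ω) ∂M.P y).toReal := by
    rw [Ffn, integral_eq_lintegral_of_nonneg_ae (M.ae_Xlim_nonneg hy)
      (M.aestronglyMeasurable_Xlim hy)]
  rw [h1]
  calc (∫⁻ ω, ENNReal.ofReal (M.Xlim ω) ∂M.P y).toReal
      ≤ (ENNReal.ofReal y).toReal :=
        ENNReal.toReal_mono ENNReal.ofReal_ne_top (M.lintegral_Xlim_le hy)
    _ = y := ENNReal.toReal_ofReal hy.le

section KernelHelpers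

lemma integrable_bdd_kernel {g : ℝ → ℝ} (hg : Measurable g) {C : ℝ}
    (hC : ∀ z, |g z| ≤ C) (u : ℝ) : Integrable g (M.K u) := by
  haveI := M.markov
  exact ⟨hg.aestronglyMeasurable, HasFiniteIntegral.of_bounded
    (Eventually.of_forall (by simpa [Real.norm_eq_abs] using hC))⟩

lemma kernel_integral_nonneg {g : ℝ → ℝ} (h0 : ∀ z, 0 ≤ g z) (u : ℝ) :
    0 ≤ ∫ z, g z ∂M.K u :=
  integral_nonneg h0

lemma kernel_integral_le {g : ℝ → ℝ} (hg : Measurable g) {C : ℝ}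
    (h0 : ∀ z, 0 ≤ g z) (hC : ∀ z, g z ≤ C) (u : ℝ) : ∫ z, g z ∂M.K u ≤ C := by
  haveI := M.markov
  calc ∫ z, g z ∂M.K u ≤ ∫ _z, C ∂M.K u :=
        integral_mono (M.integrable_bdd_kernel hg (fun z => abs_le.mpr
          ⟨le_trans (neg_nonpos.mpr (le_trans (h0 0) (hC 0))) (h0 z), hC z⟩) u)
          (integrable_const C) hC
    _ = C := by simp

lemma ae_kernel_pos {u : ℝ} (hu : 0 < u) : ∀ᵐ z ∂M.K u, 0 < z := by
  have h := M.kernel_pos u hu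
  rw [ae_iff]
  convert h using 2
  ext z
  simp [not_lt]

lemma setIntegral_step {y : ℝ} (hy : 0 < y) (j : ℕ) {g : ℝ → ℝ} (hg : Measurable g)
    {C : ℝ} (hC : ∀ z, |g z| ≤ C) {A : Set Ω} (hA : MeasurableSet[M.F j] A) :
    ∫ ω in A, g (M.S (j + 1) ω) ∂M.P y
      = ∫ ω in A, (∫ z, g z ∂M.K (M.S j ω)) ∂M.P y := by
  haveI := M.prob y hy
  have hstep := M.step y hy j g hg ⟨C, hC⟩
  have hint : Integrable (fun ω => g (M.S (j + 1) ω)) (M.P y) :=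
    M.integrable_bdd hy ((hg.comp (M.measurable_S (j + 1))).aestronglyMeasurable)
      (Eventually.of_forall fun ω => hC _)
  calc ∫ ω in A, g (M.S (j + 1) ω) ∂M.P y
      = ∫ ω in A, ((M.P y)[fun ω => g (M.S (j + 1) ω)|M.F j]) ω ∂M.P y :=
        (setIntegral_condExp (M.F.le j) hint hA).symm
    _ = _ := setIntegral_congr_ae (M.F.le j _ hA) (hstep.mono fun ω h _ => h)

end KernelHelpers

section MarkovPair

lemma markov_pair {y : ℝ} (hy : 0 < y) (j : ℕ) {g : ℝ → ℝ} (hg : Measurable g) {C : ℝ}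
    (h0 : ∀ z, 0 ≤ g z) (hC : ∀ z, g z ≤ C) {A : Set Ω} (hA : MeasurableSet[M.F j] A)
    {B : Set (ℝ × ℝ)} (hB : MeasurableSet B) :
    ∫ ω in A, (if (M.S j ω, M.S (j + 1) ω) ∈ B then g (M.S (j + 1) ω) else 0) ∂M.P y
      = ∫ ω in A, (∫ z, (if ((M.S j ω, z) : ℝ × ℝ) ∈ B then g z else 0) ∂M.K (M.S j ω)) ∂M.P y := by
  haveI := M.prob y hy
  haveI := M.markov
  have hCnn : 0 ≤ C := le_trans (h0 0) (hC 0)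
  have hgabs : ∀ z, |g z| ≤ C := fun z => abs_le.mpr
    ⟨le_trans (neg_nonpos.mpr hCnn) (h0 z), hC z⟩
  set F : Set (ℝ × ℝ) → ℝ × ℝ → ℝ := fun B p => if p ∈ B then g p.2 else 0 with hF
  have hSj := M.measurable_S j
  have hSj1 := M.measurable_S (j + 1)
  have hpair : Measurable (fun ω => ((M.S j ω, M.S (j + 1) ω) : ℝ × ℝ)) := hSj.prodMk hSj1
  have hAm : MeasurableSet A := M.F.le j _ hA
  have hFm : ∀ {B : Set (ℝ × ℝ)}, MeasurableSet B → Measurable (F B) := fun hB =>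
    Measurable.ite hB (hg.comp measurable_snd) measurable_const
  have hF0 : ∀ B p, 0 ≤ F B p := by
    intro B p; by_cases h : p ∈ B <;> simp [hF, h, h0]
  have hFC : ∀ B p, F B p ≤ C := by
    intro B p; by_cases h : p ∈ B <;> simp [hF, h, hC, hCnn]
  have hFabs : ∀ B p, |F B p| ≤ C := fun B p => abs_le.mpr
    ⟨le_trans (neg_nonpos.mpr hCnn) (hF0 B p), hFC B p⟩
  set KF : Set (ℝ × ℝ) → ℝ → ℝ := fun B u => ∫ z, F B (u, z) ∂M.K u with hKF
  have hKFm : ∀ {B : Set (ℝ × ℝ)}, MeasurableSet B → StronglyMeasurable (KF B) := fun hB =>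
    (hFm hB).stronglyMeasurable.integral_kernel_prod_right'
  have hKF0 : ∀ B u, 0 ≤ KF B u := fun B u => integral_nonneg fun z => hF0 B (u, z)
  have hKFC : ∀ {B : Set (ℝ × ℝ)}, MeasurableSet B → ∀ u, KF B u ≤ C := by
    intro B hB u
    exact M.kernel_integral_le ((hFm hB).comp measurable_prodMk_left)
      (fun z => hF0 B (u, z)) (fun z => hFC B (u, z)) u
  have hKFabs : ∀ {B : Set (ℝ × ℝ)}, MeasurableSet B → ∀ u, |KF B u| ≤ C := by
    intro B hB u
    exact abs_le.mpr ⟨le_trans (neg_nonpos.mpr hCnn) (hKF0 B u), hKFC hB u⟩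
  have hint1 : ∀ {B : Set (ℝ × ℝ)}, MeasurableSet B →
      Integrable (fun ω => F B (M.S j ω, M.S (j + 1) ω)) (M.P y) := fun hB =>
    M.integrable_bdd hy (((hFm hB).comp hpair).aestronglyMeasurable)
      (Eventually.of_forall fun ω => hFabs _ _)
  have hint2 : ∀ {B : Set (ℝ × ℝ)}, MeasurableSet B →
      Integrable (fun ω => KF B (M.S j ω)) (M.P y) := fun hB =>
    M.integrable_bdd hy (((hKFm hB).measurable.comp hSj).aestronglyMeasurable)
      (Eventually.of_forall fun ω => hKFabs hB _)
  -- the predicate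
  suffices H : ∀ ⦃B : Set (ℝ × ℝ)⦄, MeasurableSet B →
      ∫ ω in A, F B (M.S j ω, M.S (j + 1) ω) ∂M.P y
        = ∫ ω in A, KF B (M.S j ω) ∂M.P y by
    exact H hB
  have hunivcase : ∫ ω in A, g (M.S (j + 1) ω) ∂M.P y
      = ∫ ω in A, (∫ z, g z ∂M.K (M.S j ω)) ∂M.P y :=
    M.setIntegral_step hy j hg hgabs hA
  refine MeasurableSpace.induction_on_inter generateFrom_prod.symm isPiSystem_prod ?_ ?_ ?_ ?_
  · -- empty
    have hKF0' : ∀ u, KF ∅ u = 0 := by intro u; simp [hKF, hF]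
    simp [hF, hKF0']
  · -- rectangles
    rintro B ⟨U, hU, V, hV, rfl⟩
    have hUj : MeasurableSet[M.F j] (M.S j ⁻¹' U) :=
      (((M.mart 1 one_pos).stronglyAdapted j).measurable) hU
    have hUm : MeasurableSet (M.S j ⁻¹' U) := M.F.le j _ hUj
    have gV : ℝ → ℝ := fun z => if z ∈ V then g z else 0
    have e1 : ∀ ω, F (U ×ˢ V) (M.S j ω, M.S (j + 1) ω)
        = (M.S j ⁻¹' U).indicator (fun ω => if M.S (j + 1) ω ∈ V then g (M.S (j + 1) ω) else 0) ω := by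
      intro ω
      by_cases h1 : M.S j ω ∈ U <;> by_cases h2 : M.S (j + 1) ω ∈ V <;>
        simp [hF, Set.indicator_apply, Set.mem_prod, h1, h2]
    have e2 : ∀ ω, KF (U ×ˢ V) (M.S j ω)
        = (M.S j ⁻¹' U).indicator (fun ω => ∫ z, (if z ∈ V then g z else 0) ∂M.K (M.S j ω)) ω := by
      intro ω
      by_cases h1 : M.S j ω ∈ U
      · rw [Set.indicator_of_mem (Set.mem_preimage.mpr h1)]
        refine integral_congr_ae (Eventually.of_forall fun z => ?_)
        by_cases h2 : z ∈ V <;> simp [hF, Set.mem_prod, h1, h2]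
      · rw [Set.indicator_of_notMem (fun hc => h1 (Set.mem_preimage.mp hc))]
        have : ∀ z, F (U ×ˢ V) (M.S j ω, z) = 0 := by
          intro z; simp [hF, Set.mem_prod, h1]
        simp only [hKF, this, integral_zero]
    rw [integral_congr_ae (ae_restrict_of_ae (Eventually.of_forall e1)),
      integral_congr_ae (ae_restrict_of_ae (Eventually.of_forall e2)),
      setIntegral_indicator hUm, setIntegral_indicator hUm]
    refine M.setIntegral_step hy j (g := fun z => if z ∈ V then g z else 0) (C := C)
      (Measurable.ite hV hg measurable_const) ?_ (hA.inter hUj)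
    intro z
    by_cases h : z ∈ V
    · simpa [h] using hgabs z
    · simp [h, hCnn]
  · -- complement
    intro B hBm hB
    have e1 : ∀ p, F Bᶜ p = g p.2 - F B p := by
      intro p; by_cases h : p ∈ B <;> simp [hF, h]
    have e2 : ∀ u, KF Bᶜ u = (∫ z, g z ∂M.K u) - KF B u := by
      intro u
      simp only [hKF]
      rw [← integral_sub (M.integrable_bdd_kernel hg hgabs u)
        (M.integrable_bdd_kernel (g := fun z => F B (u, z))
          ((hFm hBm).comp measurable_prodMk_left) (fun z => hFabs B (u, z)) u)]
      exact integral_congr_ae (Eventually.of_forall fun z => e1 (u, z))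
    have hgint : Integrable (fun ω => g (M.S (j + 1) ω)) (M.P y) :=
      M.integrable_bdd hy ((hg.comp hSj1).aestronglyMeasurable)
        (Eventually.of_forall fun ω => hgabs _)
    have hKgint : Integrable (fun ω => ∫ z, g z ∂M.K (M.S j ω)) (M.P y) := by
      have : StronglyMeasurable (fun u => ∫ z, g z ∂M.K u) :=
        (hg.comp measurable_snd).stronglyMeasurable.integral_kernel_prod_right'
      exact M.integrable_bdd hy ((this.measurable.comp hSj).aestronglyMeasurable)
        (Eventually.of_forall fun ω => abs_le.mpr
          ⟨le_trans (neg_nonpos.mpr hCnn) (M.kernel_integral_nonneg h0 _),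
            M.kernel_integral_le hg h0 hC _⟩)
    calc ∫ ω in A, F Bᶜ (M.S j ω, M.S (j + 1) ω) ∂M.P y
        = ∫ ω in A, (g (M.S (j + 1) ω) - F B (M.S j ω, M.S (j + 1) ω)) ∂M.P y := by
          exact integral_congr_ae (ae_restrict_of_ae (Eventually.of_forall fun ω => e1 _))
      _ = (∫ ω in A, g (M.S (j + 1) ω) ∂M.P y)
            - ∫ ω in A, F B (M.S j ω, M.S (j + 1) ω) ∂M.P y :=
          integral_sub hgint.integrableOn ((hint1 hBm).integrableOn)
      _ = (∫ ω in A, (∫ z, g z ∂M.K (M.S j ω)) ∂M.P y)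
            - ∫ ω in A, KF B (M.S j ω) ∂M.P y := by rw [hunivcase, hB]
      _ = ∫ ω in A, ((∫ z, g z ∂M.K (M.S j ω)) - KF B (M.S j ω)) ∂M.P y :=
          (integral_sub hKgint.integrableOn ((hint2 hBm).integrableOn)).symm
      _ = ∫ ω in A, KF Bᶜ (M.S j ω) ∂M.P y :=
          integral_congr_ae (ae_restrict_of_ae (Eventually.of_forall fun ω => (e2 _).symm))
  · -- disjoint unions
    intro f hdisj hfm hf
    set U : ℕ → Set (ℝ × ℝ) := fun N => ⋃ (i : ℕ) (_ : i < N), f i with hU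
    have hUm : ∀ N, MeasurableSet (U N) := fun N =>
      MeasurableSet.iUnion fun i => MeasurableSet.iUnion fun _ => hfm i
    have hFadd : ∀ N p, F (U (N + 1)) p = F (U N) p + F (f N) p := by
      intro N p
      by_cases h2 : p ∈ f N
      · have h1 : p ∉ U N := by
          intro hc
          rw [hU, Set.mem_iUnion] at hc
          obtain ⟨i, hi⟩ := hc
          rw [Set.mem_iUnion] at hi
          obtain ⟨hiN, hpi⟩ := hi
          exact Set.disjoint_left.mp (hdisj (Nat.ne_of_lt hiN)) hpi h2
        have h3 : p ∈ U (N + 1) := by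
          rw [hU, Set.mem_iUnion]
          exact ⟨N, by rw [Set.mem_iUnion]; exact ⟨Nat.lt_succ_self N, h2⟩⟩
        simp [hF, h1, h2, h3]
      · by_cases h1 : p ∈ U N
        · have h3 : p ∈ U (N + 1) := by
            rw [hU, Set.mem_iUnion] at h1 ⊢
            obtain ⟨i, hi⟩ := h1
            rw [Set.mem_iUnion] at hi
            exact ⟨i, by rw [Set.mem_iUnion]; exact ⟨hi.1.trans (Nat.lt_succ_self N), hi.2⟩⟩
          simp [hF, h1, h2, h3]
        · have h3 : p ∉ U (N + 1) := by
            intro hc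
            rw [hU, Set.mem_iUnion] at hc
            obtain ⟨i, hi⟩ := hc
            rw [Set.mem_iUnion] at hi
            obtain ⟨hiN, hpi⟩ := hi
            rcases Nat.lt_succ_iff_lt_or_eq.mp hiN with h | rfl
            · exact h1 (by rw [hU, Set.mem_iUnion]; exact ⟨i, by rw [Set.mem_iUnion]; exact ⟨h, hpi⟩⟩)
            · exact h2 hpi
          simp [hF, h1, h2, h3]
    have hCU : ∀ N, ∫ ω in A, F (U N) (M.S j ω, M.S (j + 1) ω) ∂M.P y
        = ∫ ω in A, KF (U N) (M.S j ω) ∂M.P y := by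
      intro N
      induction N with
      | zero => simp [hF, hU, hKF]
      | succ N ih =>
          have e2 : ∀ u, KF (U (N + 1)) u = KF (U N) u + KF (f N) u := by
            intro u
            simp only [hKF]
            rw [← integral_add (M.integrable_bdd_kernel (g := fun z => F (U N) (u, z))
                ((hFm (hUm N)).comp measurable_prodMk_left) (fun z => hFabs _ (u, z)) u)
              (M.integrable_bdd_kernel (g := fun z => F (f N) (u, z))
                ((hFm (hfm N)).comp measurable_prodMk_left) (fun z => hFabs _ (u, z)) u)]
            exact integral_congr_ae (Eventually.of_forall fun z => hFadd N (u, z))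
          calc ∫ ω in A, F (U (N + 1)) (M.S j ω, M.S (j + 1) ω) ∂M.P y
              = ∫ ω in A, (F (U N) (M.S j ω, M.S (j + 1) ω)
                  + F (f N) (M.S j ω, M.S (j + 1) ω)) ∂M.P y :=
                integral_congr_ae (ae_restrict_of_ae (Eventually.of_forall fun ω => hFadd N _))
            _ = (∫ ω in A, F (U N) (M.S j ω, M.S (j + 1) ω) ∂M.P y)
                  + ∫ ω in A, F (f N) (M.S j ω, M.S (j + 1) ω) ∂M.P y :=
                integral_add ((hint1 (hUm N)).integrableOn) ((hint1 (hfm N)).integrableOn)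
            _ = (∫ ω in A, KF (U N) (M.S j ω) ∂M.P y)
                  + ∫ ω in A, KF (f N) (M.S j ω) ∂M.P y := by rw [ih, hf N]
            _ = ∫ ω in A, (KF (U N) (M.S j ω) + KF (f N) (M.S j ω)) ∂M.P y :=
                (integral_add ((hint2 (hUm N)).integrableOn) ((hint2 (hfm N)).integrableOn)).symm
            _ = ∫ ω in A, KF (U (N + 1)) (M.S j ω) ∂M.P y :=
                integral_congr_ae (ae_restrict_of_ae (Eventually.of_forall fun ω => (e2 _).symm))
    -- pointwise convergence
    have htendF : ∀ p, Tendsto (fun N => F (U N) p) atTop (nhds (F (⋃ i, f i) p)) := by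
      intro p
      by_cases h : p ∈ ⋃ i, f i
      · obtain ⟨i₀, hi₀⟩ := Set.mem_iUnion.mp h
        apply tendsto_atTop_of_eventually_const (i₀ := i₀ + 1)
        intro N hN
        have h1 : p ∈ U N := by
          rw [hU, Set.mem_iUnion]
          exact ⟨i₀, by rw [Set.mem_iUnion]; exact ⟨lt_of_lt_of_le (Nat.lt_succ_self i₀) hN, hi₀⟩⟩
        simp [hF, h1, h]
      · have h1 : ∀ N, p ∉ U N := by
          intro N hc
          rw [hU, Set.mem_iUnion] at hc
          obtain ⟨i, hi⟩ := hc
          rw [Set.mem_iUnion] at hi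
          exact h (Set.mem_iUnion.mpr ⟨i, hi.2⟩)
        simp only [hF, if_neg h, if_neg (h1 _)]
        exact tendsto_const_nhds
    have hUtot : MeasurableSet (⋃ i, f i) := MeasurableSet.iUnion hfm
    have htendKF : ∀ u, Tendsto (fun N => KF (U N) u) atTop (nhds (KF (⋃ i, f i) u)) := by
      intro u
      refine tendsto_integral_of_dominated_convergence (fun _ => C)
        (fun N => ((hFm (hUm N)).comp measurable_prodMk_left).aestronglyMeasurable)
        (integrable_const C) (fun N => Eventually.of_forall fun z => by
          simpa [Real.norm_eq_abs] using hFabs (U N) (u, z))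
        (Eventually.of_forall fun z => htendF (u, z))
    have hlim1 : Tendsto (fun N => ∫ ω in A, F (U N) (M.S j ω, M.S (j + 1) ω) ∂M.P y) atTop
        (nhds (∫ ω in A, F (⋃ i, f i) (M.S j ω, M.S (j + 1) ω) ∂M.P y)) := by
      refine tendsto_integral_of_dominated_convergence (fun _ => C)
        (fun N => ((hFm (hUm N)).comp hpair).aestronglyMeasurable.restrict)
        ((integrable_const C).restrict)
        (fun N => Eventually.of_forall fun ω => by
          simpa [Real.norm_eq_abs] using hFabs (U N) _)
        (Eventually.of_forall fun ω => htendF _)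
    have hlim2 : Tendsto (fun N => ∫ ω in A, KF (U N) (M.S j ω) ∂M.P y) atTop
        (nhds (∫ ω in A, KF (⋃ i, f i) (M.S j ω) ∂M.P y)) := by
      refine tendsto_integral_of_dominated_convergence (fun _ => C)
        (fun N => (((hKFm (hUm N)).measurable.comp hSj).aestronglyMeasurable).restrict)
        ((integrable_const C).restrict)
        (fun N => Eventually.of_forall fun ω => by
          simpa [Real.norm_eq_abs] using hKFabs (hUm N) _)
        (Eventually.of_forall fun ω => htendKF _)
    have := hlim1
    rw [funext hCU] at this
    exact tendsto_nhds_unique this hlim2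

end MarkovPair

section QOperator0

/-- The sub-probability operator `Q g (u) = ∫_{[u,∞)} g dK(u)`. -/
def Qop (g : ℝ → ℝ) : ℝ → ℝ := fun u => ∫ z, (if u ≤ z then g z else 0) ∂M.K u

end QOperator0

/-- Iterates of an operator. -/
def qitAux (Q : (ℝ → ℝ) → ℝ → ℝ) : ℕ → (ℝ → ℝ) → ℝ → ℝ
  | 0, g => g
  | (j + 1), g => qitAux Q j (Q g)

section QOperator1

/-- Iterates of `Q`. -/
def Qit (j : ℕ) (g : ℝ → ℝ) : ℝ → ℝ := qitAux M.Qop j g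

lemma Qit_zero (g : ℝ → ℝ) : M.Qit 0 g = g := rfl

lemma Qit_succ (j : ℕ) (g : ℝ → ℝ) : M.Qit (j + 1) g = M.Qit j (M.Qop g) := rfl

lemma measurable_Qop {g : ℝ → ℝ} (hg : Measurable g) : Measurable (M.Qop g) := by
  haveI := M.markov
  have h : Measurable (fun p : ℝ × ℝ => if p.1 ≤ p.2 then g p.2 else 0) :=
    Measurable.ite (measurableSet_le measurable_fst measurable_snd)
      (hg.comp measurable_snd) measurable_const
  exact h.stronglyMeasurable.integral_kernel_prod_right'.measurable

lemma Qop_nonneg {g : ℝ → ℝ} (h0 : ∀ z, 0 ≤ g z) (u : ℝ) : 0 ≤ M.Qop g u :=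
  integral_nonneg fun z => by by_cases h : u ≤ z <;> simp [Qop, h, h0]

lemma Qop_le {g : ℝ → ℝ} (hg : Measurable g) {C : ℝ} (h0 : ∀ z, 0 ≤ g z)
    (hC : ∀ z, g z ≤ C) (u : ℝ) : M.Qop g u ≤ C := by
  have hCnn : 0 ≤ C := le_trans (h0 0) (hC 0)
  exact M.kernel_integral_le
    (Measurable.ite (measurableSet_le measurable_const measurable_id) hg measurable_const)
    (fun z => by by_cases h : u ≤ z <;> simp [h, h0])
    (fun z => by by_cases h : u ≤ z <;> simp [h, hC, hCnn]) u

lemma measurable_Qit (j : ℕ) : ∀ {g : ℝ → ℝ}, Measurable g → Measurable (M.Qit j g) := by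
  induction j with
  | zero => intro g hg; exact hg
  | succ j ih => intro g hg; exact ih (M.measurable_Qop hg)

lemma Qit_nonneg (j : ℕ) : ∀ {g : ℝ → ℝ}, Measurable g → (∀ z, 0 ≤ g z) →
    ∀ u, 0 ≤ M.Qit j g u := by
  induction j with
  | zero => intro g _ h0 u; exact h0 u
  | succ j ih => intro g hg h0 u; exact ih (M.measurable_Qop hg) (M.Qop_nonneg h0) u

lemma Qit_le (j : ℕ) : ∀ {g : ℝ → ℝ}, Measurable g → ∀ {C : ℝ}, (∀ z, 0 ≤ g z) →
    (∀ z, g z ≤ C) → ∀ u, M.Qit j g u ≤ C := by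
  induction j with
  | zero => intro g _ C _ hC u; exact hC u
  | succ j ih =>
      intro g hg C h0 hC u
      exact ih (M.measurable_Qop hg) (M.Qop_nonneg h0) (M.Qop_le hg h0 hC) u

lemma Qit_succ_comm (j : ℕ) : ∀ g : ℝ → ℝ, M.Qit (j + 1) g = M.Qop (M.Qit j g) := by
  induction j with
  | zero => intro g; rfl
  | succ j ih =>
      intro g
      rw [Qit_succ, ih (M.Qop g), Qit_succ]

/-- The key identity: the restricted law of `S_j` on the no-drawdown event is the
`j`-th iterate of the kernel restricted to upward moves. -/
lemma setIntegral_monoE (j : ℕ) : ∀ {g : ℝ → ℝ}, Measurable g → ∀ {C : ℝ}, (∀ z, 0 ≤ g z) →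
    (∀ z, g z ≤ C) → ∀ {y : ℝ}, 0 < y →
    ∫ ω in M.monoE j, g (M.S j ω) ∂M.P y = M.Qit j g y := by
  induction j with
  | zero =>
      intro g hg C h0 hC y hy
      haveI := M.prob y hy
      rw [monoE_zero, Measure.restrict_univ]
      calc ∫ ω, g (M.S 0 ω) ∂M.P y
          = ∫ _ω, g y ∂M.P y :=
            integral_congr_ae ((M.start y hy).mono fun ω h => by simp [h])
        _ = g y := by simp
  | succ j ih =>
      intro g hg C h0 hC y hy
      haveI := M.prob y hy
      have hE : MeasurableSet {ω | M.S j ω ≤ M.S (j + 1) ω} :=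
        measurableSet_le (M.measurable_S j) (M.measurable_S (j + 1))
      have step1 : ∫ ω in M.monoE (j + 1), g (M.S (j + 1) ω) ∂M.P y
          = ∫ ω in M.monoE j,
              (if (M.S j ω, M.S (j + 1) ω) ∈ {p : ℝ × ℝ | p.1 ≤ p.2}
                then g (M.S (j + 1) ω) else 0) ∂M.P y := by
        rw [M.monoE_succ j]
        have : ∀ ω, (if ((M.S j ω, M.S (j + 1) ω) : ℝ × ℝ) ∈ {p : ℝ × ℝ | p.1 ≤ p.2}
              then g (M.S (j + 1) ω) else 0)
            = {ω | M.S j ω ≤ M.S (j + 1) ω}.indicator (fun ω => g (M.S (j + 1) ω)) ω := by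
          intro ω
          by_cases h : M.S j ω ≤ M.S (j + 1) ω <;>
            simp [Set.indicator_apply, Set.mem_setOf_eq, h]
        rw [integral_congr_ae (ae_restrict_of_ae (Eventually.of_forall this)),
          setIntegral_indicator hE]
      have hBm : MeasurableSet {p : ℝ × ℝ | p.1 ≤ p.2} :=
        measurableSet_le measurable_fst measurable_snd
      have step2 := M.markov_pair hy j hg h0 hC (M.measurableSet_monoE_F j) hBm
      have step3 : ∫ ω in M.monoE j,
          (∫ z, (if ((M.S j ω, z) : ℝ × ℝ) ∈ {p : ℝ × ℝ | p.1 ≤ p.2}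
            then g z else 0) ∂M.K (M.S j ω)) ∂M.P y
          = ∫ ω in M.monoE j, M.Qop g (M.S j ω) ∂M.P y := by
        refine integral_congr_ae (ae_restrict_of_ae (Eventually.of_forall fun ω => ?_))
        refine integral_congr_ae (Eventually.of_forall fun z => ?_)
        by_cases h : M.S j ω ≤ z <;> simp [Set.mem_setOf_eq, h]
      rw [step1, step2, step3,
        ih (M.measurable_Qop hg) (M.Qop_nonneg h0) (M.Qop_le hg h0 hC) hy]
      rfl

end QOperator1

/-- Truncation at level `m`. -/
def trunc (m : ℕ) (z : ℝ) : ℝ := max 0 (min z m)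

lemma continuous_trunc (m : ℕ) : Continuous (trunc m) :=
  continuous_const.max (continuous_id.min continuous_const)

lemma trunc_nonneg (m : ℕ) (z : ℝ) : 0 ≤ trunc m z := le_max_left _ _

lemma trunc_le (m : ℕ) (z : ℝ) : trunc m z ≤ m :=
  max_le (Nat.cast_nonneg m) (min_le_right _ _)

lemma trunc_abs_le (m : ℕ) (z : ℝ) : |trunc m z| ≤ m :=
  abs_le.mpr ⟨le_trans (by simp) (trunc_nonneg m z), trunc_le m z⟩

lemma trunc_le_max (m : ℕ) (z : ℝ) : trunc m z ≤ max 0 z :=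
  max_le (le_max_left _ _) (le_max_of_le_right (min_le_left _ _))

lemma trunc_mono_m {m m' : ℕ} (h : m ≤ m') (z : ℝ) : trunc m z ≤ trunc m' z :=
  max_le_max le_rfl (min_le_min le_rfl (by exact_mod_cast h))

lemma trunc_of_pos {u : ℝ} (hu : 0 < u) (m : ℕ) : trunc m u = min u m :=
  max_eq_right (le_min hu.le (Nat.cast_nonneg m))

lemma tendsto_trunc {z : ℝ} (hz : 0 ≤ z) :
    Tendsto (fun m : ℕ => trunc m z) atTop (nhds z) := by
  apply tendsto_atTop_of_eventually_const (i₀ := ⌈z⌉₊)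
  intro m hm
  have h1 : z ≤ (m : ℝ) := le_trans (Nat.le_ceil z) (by exact_mod_cast hm)
  rw [trunc, min_eq_left h1, max_eq_right hz]

section Truncation1

/-- The kernel average of the truncation. -/
def psiK (m : ℕ) : ℝ → ℝ := fun u => ∫ z, trunc m z ∂M.K u

lemma measurable_psiK (m : ℕ) : Measurable (M.psiK m) := by
  haveI := M.markov
  exact ((continuous_trunc m).measurable.comp
    measurable_snd).stronglyMeasurable.integral_kernel_prod_right'.measurable

lemma psiK_nonneg (m : ℕ) (u : ℝ) : 0 ≤ M.psiK m u :=
  integral_nonneg fun z => trunc_nonneg m z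

lemma psiK_le_m (m : ℕ) (u : ℝ) : M.psiK m u ≤ m :=
  M.kernel_integral_le (continuous_trunc m).measurable (trunc_nonneg m) (trunc_le m) u

lemma psiK_le_self (m : ℕ) {u : ℝ} (hu : 0 < u) : M.psiK m u ≤ u := by
  have h1 : M.psiK m u ≤ ∫ z, z ∂M.K u := by
    refine integral_mono_ae
      (M.integrable_bdd_kernel (continuous_trunc m).measurable (trunc_abs_le m) u)
      (M.kernel_int u hu) ?_
    filter_upwards [M.ae_kernel_pos hu] with z hz
    exact le_trans (trunc_le_max m z) (by rw [max_eq_right hz.le])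
  calc M.psiK m u ≤ ∫ z, z ∂M.K u := h1
    _ = u := M.kernel_mart u hu

/-- The one-step expected loss of the truncated process. -/
def ddK (m : ℕ) : ℝ → ℝ := fun u => if 0 < u then trunc m u - M.psiK m u else 0

lemma measurable_ddK (m : ℕ) : Measurable (M.ddK m) :=
  Measurable.ite measurableSet_Ioi
    ((continuous_trunc m).measurable.sub (M.measurable_psiK m)) measurable_const

lemma ddK_nonneg (m : ℕ) (u : ℝ) : 0 ≤ M.ddK m u := by
  rw [ddK]
  by_cases hu : 0 < u
  · rw [if_pos hu, sub_nonneg, trunc_of_pos hu]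
    exact le_min (M.psiK_le_self m hu) (M.psiK_le_m m u)
  · rw [if_neg hu]

lemma ddK_le_m (m : ℕ) (u : ℝ) : M.ddK m u ≤ m := by
  rw [ddK]
  by_cases hu : 0 < u
  · rw [if_pos hu]
    have := M.psiK_nonneg m u
    have := trunc_le m u
    linarith
  · rw [if_neg hu]; exact Nat.cast_nonneg m

/-- The kernel-side approximation of the truncated expected loss. -/
def PhiF (m n : ℕ) : ℝ → ℝ :=
  fun y => trunc m y - ∑ j ∈ Finset.range n, M.Qit j (M.ddK m) y

lemma measurable_PhiF (m n : ℕ) : Measurable (M.PhiF m n) := by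
  refine Measurable.sub (continuous_trunc m).measurable ?_
  exact Finset.measurable_sum _ fun j _ => M.measurable_Qit j (M.measurable_ddK m)

/-- The finite-dimensional identity: the expected truncated stopped value equals the
kernel-side expression. -/
lemma integral_trunc_stp {y : ℝ} (hy : 0 < y) (m n : ℕ) :
    ∫ ω, trunc m (M.stp n ω) ∂M.P y = M.PhiF m n y := by
  haveI := M.prob y hy
  induction n with
  | zero =>
      calc ∫ ω, trunc m (M.stp 0 ω) ∂M.P y
          = ∫ _ω, trunc m y ∂M.P y := by
            refine integral_congr_ae ((M.start y hy).mono fun ω h => ?_)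
            simp [M.stp_zero ω, h]
        _ = trunc m y := by simp
        _ = M.PhiF m 0 y := by simp [PhiF]
  | succ n ih =>
      have hint_stp : ∀ k, Integrable (fun ω => trunc m (M.stp k ω)) (M.P y) := fun k =>
        M.integrable_bdd hy (((continuous_trunc m).measurable.comp
          (M.measurable_stp k)).aestronglyMeasurable)
          (Eventually.of_forall fun ω => trunc_abs_le m _)
      have hint_S : ∀ k, Integrable (fun ω => trunc m (M.S k ω)) (M.P y) := fun k =>
        M.integrable_bdd hy (((continuous_trunc m).measurable.comp
          (M.measurable_S k)).aestronglyMeasurable)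
          (Eventually.of_forall fun ω => trunc_abs_le m _)
      have hdec : ∀ ω, trunc m (M.stp (n + 1) ω)
          = trunc m (M.stp n ω) + (M.monoE n).indicator
              (fun ω => trunc m (M.S (n + 1) ω) - trunc m (M.S n ω)) ω := by
        intro ω
        rw [M.stp_succ n ω]
        by_cases h : ω ∈ M.monoE n
        · simp [h, Set.indicator_apply, M.stp_of_mem h]
        · simp [h, Set.indicator_apply]
      have hsub : Integrable (fun ω => trunc m (M.S (n + 1) ω) - trunc m (M.S n ω)) (M.P y) :=
        (hint_S (n + 1)).sub (hint_S n)
      have step0 : ∫ ω, trunc m (M.stp (n + 1) ω) ∂M.P y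
          = (∫ ω, trunc m (M.stp n ω) ∂M.P y)
            + ∫ ω in M.monoE n, (trunc m (M.S (n + 1) ω) - trunc m (M.S n ω)) ∂M.P y := by
        rw [integral_congr_ae (Eventually.of_forall hdec),
          integral_add (hint_stp n) (hsub.indicator (M.measurableSet_monoE n)),
          integral_indicator (M.measurableSet_monoE n)]
      have step1 : ∫ ω in M.monoE n, (trunc m (M.S (n + 1) ω) - trunc m (M.S n ω)) ∂M.P y
          = ∫ ω in M.monoE n, (M.psiK m (M.S n ω) - trunc m (M.S n ω)) ∂M.P y := by
        rw [integral_sub ((hint_S (n + 1)).integrableOn) ((hint_S n).integrableOn),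
          M.setIntegral_step hy n (continuous_trunc m).measurable (trunc_abs_le m)
            (M.measurableSet_monoE_F n)]
        have hpsiint : Integrable (fun ω => M.psiK m (M.S n ω)) (M.P y) :=
          M.integrable_bdd hy (((M.measurable_psiK m).comp
            (M.measurable_S n)).aestronglyMeasurable)
            (Eventually.of_forall fun ω => abs_le.mpr
              ⟨le_trans (by simp) (M.psiK_nonneg m _), M.psiK_le_m m _⟩)
        have hform : ∫ ω in M.monoE n, (∫ z, trunc m z ∂M.K (M.S n ω)) ∂M.P y
            = ∫ ω in M.monoE n, M.psiK m (M.S n ω) ∂M.P y := rfl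
        rw [hform, ← integral_sub (hpsiint.integrableOn) ((hint_S n).integrableOn)]
      have step2 : ∫ ω in M.monoE n, (M.psiK m (M.S n ω) - trunc m (M.S n ω)) ∂M.P y
          = - ∫ ω in M.monoE n, M.ddK m (M.S n ω) ∂M.P y := by
        rw [← integral_neg]
        refine integral_congr_ae (ae_restrict_of_ae ((M.pos y hy).mono fun ω h => ?_))
        simp only [ddK]
        rw [if_pos (h n)]
        ring
      have step3 : ∫ ω in M.monoE n, M.ddK m (M.S n ω) ∂M.P y = M.Qit n (M.ddK m) y :=
        M.setIntegral_monoE n (M.measurable_ddK m) (M.ddK_nonneg m) (M.ddK_le_m m) hy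
      rw [step0, step1, step2, step3, ih]
      simp only [PhiF, Finset.sum_range_succ]
      ring

/-- The truncated expected value at the first drawdown. -/
def phiK (m : ℕ) (y : ℝ) : ℝ := ∫ ω, trunc m (M.Xlim ω) ∂M.P y

lemma integrable_trunc_Xlim {y : ℝ} (hy : 0 < y) (m : ℕ) :
    Integrable (fun ω => trunc m (M.Xlim ω)) (M.P y) :=
  M.integrable_bdd hy ((continuous_trunc m).comp_aestronglyMeasurable
    (M.aestronglyMeasurable_Xlim hy)) (Eventually.of_forall fun ω => trunc_abs_le m _)

lemma tendsto_PhiF_n {y : ℝ} (hy : 0 < y) (m : ℕ) :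
    Tendsto (fun n => M.PhiF m n y) atTop (nhds (M.phiK m y)) := by
  haveI := M.prob y hy
  have h : Tendsto (fun n => ∫ ω, trunc m (M.stp n ω) ∂M.P y) atTop
      (nhds (∫ ω, trunc m (M.Xlim ω) ∂M.P y)) := by
    refine tendsto_integral_of_dominated_convergence (fun _ => (m : ℝ))
      (fun n => ((continuous_trunc m).measurable.comp
        (M.measurable_stp n)).aestronglyMeasurable)
      (integrable_const _)
      (fun n => Eventually.of_forall fun ω => by
        simpa [Real.norm_eq_abs] using trunc_abs_le m (M.stp n ω)) ?_
    filter_upwards [M.ae_tendsto_stp hy] with ω hω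
    exact ((continuous_trunc m).tendsto _).comp hω
  rw [show (fun n => M.PhiF m n y) = fun n => ∫ ω, trunc m (M.stp n ω) ∂M.P y from
    funext fun n => (M.integral_trunc_stp hy m n).symm]
  exact h

lemma phiK_mono {y : ℝ} (hy : 0 < y) {m m' : ℕ} (h : m ≤ m') : M.phiK m y ≤ M.phiK m' y :=
  integral_mono (M.integrable_trunc_Xlim hy m) (M.integrable_trunc_Xlim hy m')
    (fun ω => trunc_mono_m h _)

lemma tendsto_phiK_m {y : ℝ} (hy : 0 < y) :
    Tendsto (fun m => M.phiK m y) atTop (nhds (M.Ffn y)) := by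
  refine integral_tendsto_of_tendsto_of_monotone (fun m => M.integrable_trunc_Xlim hy m)
    (M.integrable_Xlim hy) (Eventually.of_forall fun ω => fun a b hab => trunc_mono_m hab _) ?_
  filter_upwards [M.ae_Xlim_nonneg hy] with ω hω
  exact tendsto_trunc hω

end Truncation1

section KernelSide

lemma tendsto_trunc' (z : ℝ) :
    Tendsto (fun m : ℕ => trunc m z) atTop (nhds (max 0 z)) := by
  apply tendsto_atTop_of_eventually_const (i₀ := ⌈z⌉₊)
  intro m hm
  have h1 : z ≤ (m : ℝ) := le_trans (Nat.le_ceil z) (by exact_mod_cast hm)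
  rw [trunc, min_eq_left h1]

lemma integrable_ite_trunc (m : ℕ) (x u : ℝ) :
    Integrable (fun z => if x ≤ z then trunc m z else 0) (M.K u) := by
  refine M.integrable_bdd_kernel
    (Measurable.ite (measurableSet_le measurable_const measurable_id)
      (continuous_trunc m).measurable measurable_const) (C := m) (fun z => ?_) u
  by_cases h : x ≤ z
  · simpa [h] using trunc_abs_le m z
  · simp [h]

lemma integrable_ite_Qit (m j : ℕ) (x u : ℝ) :
    Integrable (fun z => if x ≤ z then M.Qit j (M.ddK m) z else 0) (M.K u) := by
  refine M.integrable_bdd_kernel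
    (Measurable.ite (measurableSet_le measurable_const measurable_id)
      (M.measurable_Qit j (M.measurable_ddK m)) measurable_const) (C := m) (fun z => ?_) u
  by_cases h : x ≤ z
  · rw [if_pos (show x ≤ id z from h)]
    exact abs_le.mpr ⟨le_trans (by simp) (M.Qit_nonneg j (M.measurable_ddK m) (M.ddK_nonneg m) z),
      M.Qit_le j (M.measurable_ddK m) (M.ddK_nonneg m) (M.ddK_le_m m) z⟩
  · simp [h]

lemma psiK_sub_Qop (m : ℕ) (x : ℝ) :
    M.psiK m x - M.Qop (trunc m) x = ∫ z in Set.Iio x, trunc m z ∂M.K x := by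
  have h1 : M.psiK m x - M.Qop (trunc m) x
      = ∫ z, (trunc m z - (if x ≤ z then trunc m z else 0)) ∂M.K x := by
    rw [integral_sub (M.integrable_bdd_kernel (continuous_trunc m).measurable
      (trunc_abs_le m) x) (M.integrable_ite_trunc m x x)]
    rfl
  rw [h1, ← integral_indicator measurableSet_Iio]
  refine integral_congr_ae (Eventually.of_forall fun z => ?_)
  by_cases h : x ≤ z
  · simp [h, Set.indicator_apply, not_lt.mpr h]
  · simp [h, Set.indicator_apply, lt_of_not_ge h]

lemma Qop_PhiF (m n : ℕ) {x : ℝ} (hx : 0 < x) :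
    M.Qop (M.PhiF m n) x
      = M.PhiF m (n + 1) x - ∫ z in Set.Iio x, trunc m z ∂M.K x := by
  have key : M.Qop (M.PhiF m n) x
      = M.Qop (trunc m) x - ∑ j ∈ Finset.range n, M.Qop (M.Qit j (M.ddK m)) x := by
    have e1 : ∀ z, (if x ≤ z then M.PhiF m n z else 0)
        = (if x ≤ z then trunc m z else 0)
          - ∑ j ∈ Finset.range n, (if x ≤ z then M.Qit j (M.ddK m) z else 0) := by
      intro z
      by_cases h : x ≤ z
      · simp [h, PhiF]
      · simp [h]
    calc M.Qop (M.PhiF m n) x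
        = ∫ z, ((if x ≤ z then trunc m z else 0)
            - ∑ j ∈ Finset.range n, (if x ≤ z then M.Qit j (M.ddK m) z else 0)) ∂M.K x :=
          integral_congr_ae (Eventually.of_forall fun z => e1 z)
      _ = (∫ z, (if x ≤ z then trunc m z else 0) ∂M.K x)
            - ∫ z, (∑ j ∈ Finset.range n, (if x ≤ z then M.Qit j (M.ddK m) z else 0)) ∂M.K x :=
          integral_sub (M.integrable_ite_trunc m x x)
            (integrable_finset_sum _ fun j _ => M.integrable_ite_Qit m j x x)
      _ = M.Qop (trunc m) x - ∑ j ∈ Finset.range n, M.Qop (M.Qit j (M.ddK m)) x := by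
          rw [integral_finset_sum _ fun j _ => M.integrable_ite_Qit m j x x]
          rfl
  rw [key, ← M.psiK_sub_Qop m x]
  have hcomm : ∑ j ∈ Finset.range n, M.Qop (M.Qit j (M.ddK m)) x
      = ∑ j ∈ Finset.range n, M.Qit (j + 1) (M.ddK m) x :=
    Finset.sum_congr rfl fun j _ => (congrFun (M.Qit_succ_comm j (M.ddK m)) x).symm
  have hshift : ∑ j ∈ Finset.range (n + 1), M.Qit j (M.ddK m) x
      = (∑ j ∈ Finset.range n, M.Qit (j + 1) (M.ddK m) x) + M.Qit 0 (M.ddK m) x :=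
    Finset.sum_range_succ' (fun j => M.Qit j (M.ddK m) x) n
  have hdd0 : M.Qit 0 (M.ddK m) x = trunc m x - M.psiK m x := by
    show M.ddK m x = _
    rw [ddK]
    simp [hx]
  simp only [PhiF, hshift, hdd0, hcomm]
  ring

lemma PhiF_nonneg {z : ℝ} (hz : 0 < z) (m n : ℕ) : 0 ≤ M.PhiF m n z := by
  rw [← M.integral_trunc_stp hz m n]
  exact integral_nonneg fun ω => trunc_nonneg m _

lemma PhiF_le {z : ℝ} (hz : 0 < z) (m n : ℕ) : M.PhiF m n z ≤ m := by
  haveI := M.prob z hz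
  rw [← M.integral_trunc_stp hz m n]
  calc ∫ ω, trunc m (M.stp n ω) ∂M.P z ≤ ∫ _ω, (m : ℝ) ∂M.P z :=
        integral_mono (M.integrable_bdd hz (((continuous_trunc m).measurable.comp
          (M.measurable_stp n)).aestronglyMeasurable)
          (Eventually.of_forall fun ω => trunc_abs_le m _)) (integrable_const _)
          (fun ω => trunc_le m _)
    _ = m := by simp

lemma phiK_nonneg {z : ℝ} (hz : 0 < z) (m : ℕ) : 0 ≤ M.phiK m z :=
  integral_nonneg fun ω => trunc_nonneg m _

lemma phiK_le {z : ℝ} (hz : 0 < z) (m : ℕ) : M.phiK m z ≤ m := by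
  haveI := M.prob z hz
  calc M.phiK m z ≤ ∫ _ω, (m : ℝ) ∂M.P z :=
        integral_mono (M.integrable_trunc_Xlim hz m) (integrable_const _)
          (fun ω => trunc_le m _)
    _ = m := by simp

/-- Globalized versions, vanishing off `(0,∞)`. -/
def phiKI (m : ℕ) : ℝ → ℝ := fun z => if 0 < z then M.phiK m z else 0

def FfnI : ℝ → ℝ := fun z => if 0 < z then M.Ffn z else 0

lemma aesm_phiKI {x : ℝ} (hx : 0 < x) (m : ℕ) :
    AEStronglyMeasurable (M.phiKI m) ((M.K x).restrict (Set.Ici x)) := by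
  haveI := M.markov
  refine aestronglyMeasurable_of_tendsto_ae atTop
    (fun n => ((M.measurable_PhiF m n).aestronglyMeasurable).restrict) ?_
  filter_upwards [ae_restrict_mem (measurableSet_Ici (a := x))] with z hz
  have hz0 : 0 < z := lt_of_lt_of_le hx hz
  rw [phiKI, if_pos hz0]
  exact M.tendsto_PhiF_n hz0 m

lemma setIntegral_phiKI {x : ℝ} (hx : 0 < x) (m : ℕ) :
    ∫ z in Set.Ici x, M.phiKI m z ∂M.K x
      = M.phiK m x - ∫ z in Set.Iio x, trunc m z ∂M.K x := by
  haveI := M.markov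
  have h1 : Tendsto (fun n => ∫ z in Set.Ici x, M.PhiF m n z ∂M.K x) atTop
      (nhds (∫ z in Set.Ici x, M.phiKI m z ∂M.K x)) := by
    refine tendsto_integral_of_dominated_convergence (fun _ => (m : ℝ))
      (fun n => ((M.measurable_PhiF m n).aestronglyMeasurable).restrict)
      (integrable_const _) (fun n => ?_) ?_
    · filter_upwards [ae_restrict_mem (measurableSet_Ici (a := x))] with z hz
      have hz0 : 0 < z := lt_of_lt_of_le hx hz
      rw [Real.norm_eq_abs, abs_le]
      exact ⟨le_trans (by simp) (M.PhiF_nonneg hz0 m n), M.PhiF_le hz0 m n⟩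
    · filter_upwards [ae_restrict_mem (measurableSet_Ici (a := x))] with z hz
      have hz0 : 0 < z := lt_of_lt_of_le hx hz
      rw [phiKI, if_pos hz0]
      exact M.tendsto_PhiF_n hz0 m
  have h2 : ∀ n, ∫ z in Set.Ici x, M.PhiF m n z ∂M.K x
      = M.PhiF m (n + 1) x - ∫ z in Set.Iio x, trunc m z ∂M.K x := by
    intro n
    rw [← M.Qop_PhiF m n hx, Qop, ← integral_indicator measurableSet_Ici]
    refine integral_congr_ae (Eventually.of_forall fun z => ?_)
    by_cases h : x ≤ z <;> simp [Set.indicator_apply, h]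
  have h3 : Tendsto (fun n => M.PhiF m (n + 1) x - ∫ z in Set.Iio x, trunc m z ∂M.K x) atTop
      (nhds (M.phiK m x - ∫ z in Set.Iio x, trunc m z ∂M.K x)) :=
    Tendsto.sub_const ((M.tendsto_PhiF_n hx m).comp (tendsto_add_atTop_nat 1)) _
  rw [funext h2] at h1
  exact tendsto_nhds_unique h1 h3

lemma tendsto_trunc_Iio {x : ℝ} (hx : 0 < x) :
    Tendsto (fun m : ℕ => ∫ z in Set.Iio x, trunc m z ∂M.K x) atTop
      (nhds (∫ z in Set.Iio x, z ∂M.K x)) := by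
  haveI := M.markov
  have hidint : Integrable (fun z : ℝ => z) ((M.K x).restrict (Set.Iio x)) :=
    (M.kernel_int x hx).restrict
  have hmaxint : Integrable (fun z : ℝ => max 0 z) ((M.K x).restrict (Set.Iio x)) := by
    refine Integrable.mono' hidint.abs
      ((continuous_const.max continuous_id).aestronglyMeasurable) ?_
    exact Eventually.of_forall fun z => by
      rw [Real.norm_eq_abs, abs_of_nonneg (le_max_left 0 z)]
      exact max_le (abs_nonneg z) (le_abs_self z)
  have h1 : Tendsto (fun m : ℕ => ∫ z in Set.Iio x, trunc m z ∂M.K x) atTop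
      (nhds (∫ z in Set.Iio x, max 0 z ∂M.K x)) := by
    refine integral_tendsto_of_tendsto_of_monotone
      (fun m => (M.integrable_bdd_kernel (continuous_trunc m).measurable
        (trunc_abs_le m) x).restrict) hmaxint
      (Eventually.of_forall fun z => fun a b hab => trunc_mono_m hab z)
      (Eventually.of_forall fun z => tendsto_trunc' z)
  have h2 : ∫ z in Set.Iio x, max 0 z ∂M.K x = ∫ z in Set.Iio x, z ∂M.K x := by
    refine integral_congr_ae ?_
    filter_upwards [ae_restrict_of_ae (M.ae_kernel_pos hx)] with z hz
    exact max_eq_right hz.le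
  rw [h2] at h1
  exact h1

lemma integrable_FfnI {x : ℝ} (hx : 0 < x) :
    Integrable M.FfnI ((M.K x).restrict (Set.Ici x)) := by
  haveI := M.markov
  have haesm : AEStronglyMeasurable M.FfnI ((M.K x).restrict (Set.Ici x)) := by
    refine aestronglyMeasurable_of_tendsto_ae atTop (fun m => M.aesm_phiKI hx m) ?_
    filter_upwards [ae_restrict_mem (measurableSet_Ici (a := x))] with z hz
    have hz0 : 0 < z := lt_of_lt_of_le hx hz
    rw [FfnI, if_pos hz0]
    have := M.tendsto_phiK_m hz0
    refine this.congr (fun m => ?_)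
    rw [phiKI, if_pos hz0]
  refine Integrable.mono' ((M.kernel_int x hx).restrict).abs haesm ?_
  filter_upwards [ae_restrict_mem (measurableSet_Ici (a := x))] with z hz
  have hz0 : 0 < z := lt_of_lt_of_le hx hz
  rw [FfnI, if_pos hz0, Real.norm_eq_abs, abs_of_nonneg (M.Ffn_nonneg hz0)]
  exact le_trans (M.Ffn_le hz0) (le_abs_self z)

lemma setIntegral_FfnI {x : ℝ} (hx : 0 < x) :
    ∫ z in Set.Ici x, M.FfnI z ∂M.K x = M.Ffn x - ∫ z in Set.Iio x, z ∂M.K x := by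
  haveI := M.markov
  have h1 : Tendsto (fun m => ∫ z in Set.Ici x, M.phiKI m z ∂M.K x) atTop
      (nhds (∫ z in Set.Ici x, M.FfnI z ∂M.K x)) := by
    refine integral_tendsto_of_tendsto_of_monotone ?_ (M.integrable_FfnI hx) ?_ ?_
    · intro m
      refine ⟨M.aesm_phiKI hx m, ?_⟩
      refine HasFiniteIntegral.of_bounded (C := (m : ℝ)) ?_
      filter_upwards [ae_restrict_mem (measurableSet_Ici (a := x))] with z hz
      have hz0 : 0 < z := lt_of_lt_of_le hx hz
      rw [phiKI, if_pos hz0, Real.norm_eq_abs, abs_le]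
      exact ⟨le_trans (by simp) (M.phiK_nonneg hz0 m), M.phiK_le hz0 m⟩
    · filter_upwards [ae_restrict_mem (measurableSet_Ici (a := x))] with z hz
      intro a b hab
      have hz0 : 0 < z := lt_of_lt_of_le hx hz
      simp only [phiKI, if_pos hz0]
      exact M.phiK_mono hz0 hab
    · filter_upwards [ae_restrict_mem (measurableSet_Ici (a := x))] with z hz
      have hz0 : 0 < z := lt_of_lt_of_le hx hz
      simp only [phiKI, FfnI, if_pos hz0]
      exact M.tendsto_phiK_m hz0
  have h2 : ∀ m, ∫ z in Set.Ici x, M.phiKI m z ∂M.K x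
      = M.phiK m x - ∫ z in Set.Iio x, trunc m z ∂M.K x := fun m => M.setIntegral_phiKI hx m
  have h3 : Tendsto (fun m => M.phiK m x - ∫ z in Set.Iio x, trunc m z ∂M.K x) atTop
      (nhds (M.Ffn x - ∫ z in Set.Iio x, z ∂M.K x)) :=
    Tendsto.sub (M.tendsto_phiK_m hx) (M.tendsto_trunc_Iio hx)
  rw [funext h2] at h1
  exact tendsto_nhds_unique h1 h3

end KernelSide

lemma defaultFn_eq_Ffn (y : ℝ) : M.defaultFn y = y - M.Ffn y := rfl

end MarkovMartingale
end


/-- The default function `M_S` solves the homogeneous Volterra integral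
equation `M_S(x) = ∫_{[x,∞)} M_S(y) K(x,dy)` for all `x > 0`. -/
theorem MarkovMartingale.defaultFn_volterra
    {Ω : Type*} [MeasurableSpace Ω] (M : MarkovMartingale Ω) :
    ∀ x : ℝ, 0 < x → M.defaultFn x = ∫ y in Set.Ici x, M.defaultFn y ∂(M.K x) := by
  intro x hx
  haveI := M.markov
  have hid : Integrable (fun z : ℝ => z) ((M.K x).restrict (Set.Ici x)) :=
    (M.kernel_int x hx).restrict
  have hEq : Set.EqOn M.defaultFn (fun z => z - M.FfnI z) (Set.Ici x) := by
    intro z hz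
    have hz0 : 0 < z := lt_of_lt_of_le hx hz
    simp only [MarkovMartingale.FfnI, if_pos hz0]
    exact M.defaultFn_eq_Ffn z
  rw [setIntegral_congr_fun measurableSet_Ici hEq,
    integral_sub hid (M.integrable_FfnI hx), M.setIntegral_FfnI hx, M.defaultFn_eq_Ffn x]
  have hsplit : (∫ z in Set.Iio x, z ∂M.K x) + (∫ z in Set.Ici x, z ∂M.K x) = x := by
    have h := integral_add_compl (measurableSet_Iio (a := x)) (M.kernel_int x hx)
    rw [compl_Iio] at h
    exact h.trans (M.kernel_mart x hx)
  linarith [hsplit]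
end
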